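/- arXiv:1304.1237 — 5 statements merged into one kernel-verified Lean document; each statement's English description precedes it below -/
import Mathlib

section
/- Let n and r be integers with 2 ≤ r ≤ n and n ≥ 3, and let K be a field. Then the toric ideal I_{A_{n,r}} is not generated by its homogeneous elements of degree at most two; consequently, every set of homogeneous generators of I_{A_{n,r}} contains an element of degree three. -/
/-- The monomial map `π_{n,r}` of the `(n,r)`-Birkhoff model:
`p(σ) ↦ ∏_{j=1}^r ψ_{j,σ(j)}`. -/
noncomputable def birkhoffHom (n r : ℕ) (K : Type) [Field K] :
    MvPolynomial (Fin r ↪ Fin n) K →ₐ[K] MvPolynomial (Fin r × Fin n) K :=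
  MvPolynomial.aeval fun σ => ∏ j : Fin r, MvPolynomial.X (j, σ j)

/-- The toric ideal `I_{A_{n,r}}` of the `(n,r)`-Birkhoff model: the kernel of `π_{n,r}`. -/
noncomputable def toricIdeal (n r : ℕ) (K : Type) [Field K] :
    Ideal (MvPolynomial (Fin r ↪ Fin n) K) :=
  RingHom.ker (birkhoffHom n r K)

namespace BirkhoffProofAux

open MvPolynomial Finsupp

variable {n r : ℕ} {K : Type} [Field K]

/-! ### Generic finsupp lemmas -/

lemma degree_add' {ι : Type*} (m₁ m₂ : ι →₀ ℕ) :
    (m₁ + m₂).degree = m₁.degree + m₂.degree := by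
  simp_rw [Finsupp.degree_eq_weight_one]
  exact map_add _ _ _

lemma degree_single' {ι : Type*} (a : ι) (k : ℕ) :
    (Finsupp.single a k).degree = k := by
  classical
  rw [Finsupp.degree]
  by_cases h : k = 0
  · subst h; simp
  · exact Finsupp.degree_single a k

lemma deg_one {ι : Type*} {m : ι →₀ ℕ} (h : m.degree = 1) :
    ∃ a, m = Finsupp.single a 1 := by
  classical
  have hc : Multiset.card (Finsupp.toMultiset m) = 1 := by
    rw [Finsupp.card_toMultiset]; exact h
  obtain ⟨a, ha⟩ := Multiset.card_eq_one.mp hc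
  refine ⟨a, ?_⟩
  rw [Finsupp.toMultiset_eq_iff.mp ha, Multiset.toFinsupp_singleton]

lemma deg_two {ι : Type*} {m : ι →₀ ℕ} (h : m.degree = 2) :
    ∃ a b, m = Finsupp.single a 1 + Finsupp.single b 1 := by
  classical
  have hc : Multiset.card (Finsupp.toMultiset m) = 2 := by
    rw [Finsupp.card_toMultiset]; exact h
  obtain ⟨a, b, hab⟩ := Multiset.card_eq_two.mp hc
  refine ⟨a, b, ?_⟩
  rw [Finsupp.toMultiset_eq_iff.mp hab]
  have h2 : ({a, b} : Multiset ι) = {a} + {b} := rfl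
  rw [h2, Multiset.toFinsupp_add, Multiset.toFinsupp_singleton, Multiset.toFinsupp_singleton]

lemma pair_of_ite {N : Type*} [DecidableEq N] {a b c d : N}
    (h : ∀ k : N, ((if a = k then 1 else 0) + if b = k then (1:ℕ) else 0)
       = (if c = k then 1 else 0) + if d = k then 1 else 0) :
    (a = c ∧ b = d) ∨ (a = d ∧ b = c) := by
  by_cases e1 : a = c
  · subst e1
    have hb := add_left_cancel (h b)
    have hbd : b = d := by
      by_cases hd : d = b
      · exact hd.symm
      · rw [if_pos rfl, if_neg hd] at hb; omega
    exact Or.inl ⟨rfl, hbd⟩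
  · have ha := h a
    have hc := h c
    rw [if_pos rfl, if_neg (fun h' : c = a => e1 h'.symm)] at ha
    rw [if_neg e1, if_pos rfl] at hc
    have had : a = d := by
      by_cases hd : d = a
      · exact hd.symm
      · rw [if_neg hd] at ha
        by_cases hb : b = a <;> [rw [if_pos hb] at ha; rw [if_neg hb] at ha] <;> omega
    have hbc : b = c := by
      by_cases hb : b = c
      · exact hb
      · rw [if_neg hb] at hc
        by_cases hd : d = c <;> [rw [if_pos hd] at hc; rw [if_neg hd] at hc] <;> omega
    exact Or.inr ⟨had, hbc⟩

/-! ### The special injections -/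

def xv (hn : 3 ≤ n) (i : Fin 3) : Fin n := Fin.castLE hn i

lemma xv_val (hn : 3 ≤ n) (i : Fin 3) : (xv hn i).val = i.val := rfl

lemma xv_inj (hn : 3 ≤ n) {i j : Fin 3} (h : xv hn i = xv hn j) : i = j := by
  apply Fin.ext; have := congrArg Fin.val h; simpa [xv_val] using this

lemma xv_ne (hn : 3 ≤ n) {i j : Fin 3} (h : i ≠ j) : xv hn i ≠ xv hn j :=
  fun hc => h (xv_inj hn hc)

def cyc (hn : 3 ≤ n) : Equiv.Perm (Fin n) :=
  (Equiv.swap (xv hn 0) (xv hn 1)).trans (Equiv.swap (xv hn 0) (xv hn 2))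

lemma cyc_xv (hn : 3 ≤ n) (i : Fin 3) : cyc hn (xv hn i) = xv hn (i + 1) := by
  fin_cases i <;>
    simp [cyc, Equiv.swap_apply_def, xv_ne hn (show (0:Fin 3) ≠ 1 by decide),
      (xv_ne hn (show (0:Fin 3) ≠ 1 by decide)).symm,
      xv_ne hn (show (0:Fin 3) ≠ 2 by decide), (xv_ne hn (show (0:Fin 3) ≠ 2 by decide)).symm,
      xv_ne hn (show (1:Fin 3) ≠ 2 by decide), (xv_ne hn (show (1:Fin 3) ≠ 2 by decide)).symm]

lemma cyc_fix (hn : 3 ≤ n) {z : Fin n} (hz : 3 ≤ z.val) : cyc hn z = z := by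
  have h0 : z ≠ xv hn 0 := by intro h; rw [h] at hz; simp [xv_val] at hz
  have h1 : z ≠ xv hn 1 := by intro h; rw [h] at hz; simp [xv_val] at hz
  have h2 : z ≠ xv hn 2 := by intro h; rw [h] at hz; simp [xv_val] at hz
  simp [cyc, Equiv.swap_apply_of_ne_of_ne, h0, h1, h2]

open Fin.NatCast Fin.CommRing in
lemma cycpow_xv (hn : 3 ≤ n) (k : ℕ) (i : Fin 3) :
    (cyc hn ^ k) (xv hn i) = xv hn (i + k) := by
  induction k with
  | zero => simp
  | succ k ih =>
    rw [pow_succ', Equiv.Perm.mul_apply, ih, cyc_xv]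
    congr 1
    push_cast
    ring

lemma cycpow_fix (hn : 3 ≤ n) (k : ℕ) {z : Fin n} (hz : 3 ≤ z.val) :
    (cyc hn ^ k) z = z := by
  induction k with
  | zero => simp
  | succ k ih => rw [pow_succ', Equiv.Perm.mul_apply, ih, cyc_fix hn hz]

def sig (hn : 3 ≤ n) (hrn : r ≤ n) (i : Fin 3) : Fin r ↪ Fin n :=
  (Fin.castLEEmb hrn).trans ((cyc hn ^ (i : ℕ)).toEmbedding)

def swp (hn : 3 ≤ n) : Equiv.Perm (Fin n) := Equiv.swap (xv hn 0) (xv hn 1)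

def tau (hn : 3 ≤ n) (hrn : r ≤ n) (i : Fin 3) : Fin r ↪ Fin n :=
  (sig hn hrn i).trans (swp hn).toEmbedding

open Fin.NatCast Fin.CommRing in
lemma sig_lt (hn : 3 ≤ n) (hrn : r ≤ n) (i : Fin 3) (j : Fin r) (h : j.val < 3) :
    sig hn hrn i j = xv hn (⟨j.val, h⟩ + i) := by
  have hc : Fin.castLE hrn j = xv hn ⟨j.val, h⟩ := rfl
  show (cyc hn ^ (i : ℕ)) (Fin.castLE hrn j) = _
  rw [hc, cycpow_xv]
  congr 1
  simp [Fin.cast_val_eq_self]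

lemma sig_ge (hn : 3 ≤ n) (hrn : r ≤ n) (i : Fin 3) (j : Fin r) (h : 3 ≤ j.val) :
    sig hn hrn i j = Fin.castLE hrn j := by
  show (cyc hn ^ (i : ℕ)) (Fin.castLE hrn j) = _
  exact cycpow_fix hn _ h

lemma sig_row (hn : 3 ≤ n) (hrn : r ≤ n) (i : Fin 3) (j : Fin r) (k : Fin 3)
    (hj : j.val = k.val) : sig hn hrn i j = xv hn (k + i) := by
  rw [sig_lt hn hrn i j (by omega)]
  congr 1
  apply Fin.ext
  rw [Fin.add_def, Fin.add_def]
  simp [hj]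

lemma tau_apply (hn : 3 ≤ n) (hrn : r ≤ n) (i : Fin 3) (j : Fin r) :
    tau hn hrn i j = swp hn (sig hn hrn i j) := rfl

lemma tau_ge (hn : 3 ≤ n) (hrn : r ≤ n) (i : Fin 3) (j : Fin r) (h : 3 ≤ j.val) :
    tau hn hrn i j = Fin.castLE hrn j := by
  rw [tau_apply, sig_ge hn hrn i j h, swp]
  have h0 : Fin.castLE hrn j ≠ xv hn 0 := by
    intro hx; have := congrArg Fin.val hx; simp [xv] at this; omega
  have h1 : Fin.castLE hrn j ≠ xv hn 1 := by
    intro hx; have := congrArg Fin.val hx; simp [xv] at this; omega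
  exact Equiv.swap_apply_of_ne_of_ne h0 h1

lemma swp_xv (hn : 3 ≤ n) (m : Fin 3) : swp hn (xv hn m) = xv hn (![1, 0, 2] m) := by
  fin_cases m
  · exact Equiv.swap_apply_left _ _
  · exact Equiv.swap_apply_right _ _
  · exact Equiv.swap_apply_of_ne_of_ne
      (xv_ne hn (show (2:Fin 3) ≠ 0 by decide)) (xv_ne hn (show (2:Fin 3) ≠ 1 by decide))

lemma tau_row (hn : 3 ≤ n) (hrn : r ≤ n) (i : Fin 3) (j : Fin r) (k : Fin 3)
    (hj : j.val = k.val) : tau hn hrn i j = xv hn (![1, 0, 2] (k + i)) := by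
  rw [tau_apply, sig_row hn hrn i j k hj, swp_xv]

lemma sig_ne (hn : 3 ≤ n) (hrn : r ≤ n) (hr0 : 0 < r) {i l : Fin 3} (h : i ≠ l) :
    sig hn hrn i ≠ sig hn hrn l := by
  intro hc
  have h0 := congrArg (fun e : Fin r ↪ Fin n => e ⟨0, hr0⟩) hc
  rw [sig_row hn hrn i ⟨0, hr0⟩ 0 rfl, sig_row hn hrn l ⟨0, hr0⟩ 0 rfl,
    zero_add, zero_add] at h0
  exact h (xv_inj hn h0)

/-! ### Exponent bookkeeping -/

noncomputable def dd (σ : Fin r ↪ Fin n) : (Fin r × Fin n) →₀ ℕ :=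
  ∑ j : Fin r, Finsupp.single (j, σ j) 1

lemma dd_apply (σ : Fin r ↪ Fin n) (p : Fin r × Fin n) :
    dd σ p = if σ p.1 = p.2 then 1 else 0 := by
  classical
  rw [dd, Finsupp.finset_sum_apply]
  have h : ∀ j : Fin r, (Finsupp.single (j, σ j) (1:ℕ)) p
      = if j = p.1 then (if σ p.1 = p.2 then 1 else 0) else 0 := by
    intro j
    rw [Finsupp.single_apply]
    by_cases h1 : j = p.1
    · subst h1
      by_cases h2 : σ p.1 = p.2 <;> simp [Prod.ext_iff, h2]
    · simp [Prod.ext_iff, h1]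
  rw [Finset.sum_congr rfl fun j _ => h j, Finset.sum_ite_eq' Finset.univ p.1]
  simp

lemma dd_inj {α β : Fin r ↪ Fin n} (h : dd α = dd β) : α = β := by
  ext j
  have h1 := congrArg (fun f => f (j, α j)) h
  simp only [dd_apply] at h1
  by_cases h2 : β j = α j
  · exact congrArg Fin.val h2.symm
  · simp [h2] at h1

noncomputable def BB (m : (Fin r ↪ Fin n) →₀ ℕ) : (Fin r × Fin n) →₀ ℕ :=
  m.sum fun σ k => k • dd σ

lemma BB_single (σ : Fin r ↪ Fin n) (k : ℕ) : BB (Finsupp.single σ k) = k • dd σ := by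
  rw [BB, Finsupp.sum_single_index]; rw [zero_smul]

lemma BB_add (m₁ m₂ : (Fin r ↪ Fin n) →₀ ℕ) : BB (m₁ + m₂) = BB m₁ + BB m₂ := by
  classical
  rw [BB, BB, BB, Finsupp.sum_add_index]
  · intro σ _; rw [zero_smul]
  · intro σ _ k k'; rw [add_smul]

lemma BB_zero : BB (0 : (Fin r ↪ Fin n) →₀ ℕ) = 0 := by
  rw [BB, Finsupp.sum_zero_index]

lemma sum_dd_row (hr0 : 0 < r) (σ : Fin r ↪ Fin n) :
    (∑ k : Fin n, dd σ (⟨0, hr0⟩, k)) = 1 := by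
  simp only [dd_apply]
  rw [Finset.sum_ite_eq Finset.univ]
  simp

lemma deg_BB (hr0 : 0 < r) (m : (Fin r ↪ Fin n) →₀ ℕ) :
    (∑ k : Fin n, BB m (⟨0, hr0⟩, k)) = m.degree := by
  have hBB : ∀ p, BB m p = ∑ σ ∈ m.support, m σ * dd σ p := by
    intro p
    rw [BB, Finsupp.sum, Finsupp.finset_sum_apply]
    exact Finset.sum_congr rfl fun σ _ => by rw [Finsupp.smul_apply, smul_eq_mul]
  calc (∑ k : Fin n, BB m (⟨0, hr0⟩, k))
      = ∑ k : Fin n, ∑ σ ∈ m.support, m σ * dd σ (⟨0, hr0⟩, k) :=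
        Finset.sum_congr rfl fun k _ => hBB _
    _ = ∑ σ ∈ m.support, ∑ k : Fin n, m σ * dd σ (⟨0, hr0⟩, k) := Finset.sum_comm
    _ = ∑ σ ∈ m.support, m σ := by
        refine Finset.sum_congr rfl fun σ _ => ?_
        rw [← Finset.mul_sum, sum_dd_row hr0, mul_one]
    _ = m.degree := rfl

lemma degree_eq_of_BB_eq (hr0 : 0 < r) {m b : (Fin r ↪ Fin n) →₀ ℕ} (h : BB m = BB b) :
    m.degree = b.degree := by
  rw [← deg_BB hr0 m, ← deg_BB hr0 b, h]

/-! ### The morphism on monomials -/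

lemma monProd {ι τ : Type*} (s : Finset ι) (g : ι → (τ →₀ ℕ)) :
    (∏ x ∈ s, monomial (g x) (1 : K)) = monomial (∑ x ∈ s, g x) 1 := by
  classical
  induction s using Finset.induction_on with
  | empty => simp [monomial_zero']
  | insert _ _ hx ih =>
    rw [Finset.prod_insert hx, Finset.sum_insert hx, ih, monomial_mul, one_mul]

lemma psi_eq (σ : Fin r ↪ Fin n) :
    (∏ j : Fin r, (X (j, σ j) : MvPolynomial (Fin r × Fin n) K)) = monomial (dd σ) 1 := by
  rw [dd, ← monProd]
  rfl

lemma pi_monomial (m : (Fin r ↪ Fin n) →₀ ℕ) (a : K) :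
    birkhoffHom n r K (monomial m a) = monomial (BB m) a := by
  rw [birkhoffHom, aeval_monomial]
  have h1 : (m.prod fun σ k => (∏ j : Fin r, (X (j, σ j) : MvPolynomial (Fin r × Fin n) K)) ^ k)
      = monomial (BB m) 1 := by
    rw [Finsupp.prod]
    have h2 : ∀ σ ∈ m.support,
        (∏ j : Fin r, (X (j, σ j) : MvPolynomial (Fin r × Fin n) K)) ^ (m σ)
        = monomial (m σ • dd σ) 1 := by
      intro σ _
      rw [psi_eq, monomial_pow, one_pow]
    rw [Finset.prod_congr rfl h2, monProd]
    rfl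
  rw [h1, algebraMap_eq, C_mul_monomial, mul_one]

lemma coeff_ker {g : MvPolynomial (Fin r ↪ Fin n) K} (hg : birkhoffHom n r K g = 0)
    {b : (Fin r ↪ Fin n) →₀ ℕ} (hb : ∀ m, BB m = BB b → m = b) :
    coeff b g = 0 := by
  classical
  have hrep : birkhoffHom n r K g
      = ∑ m ∈ g.support, monomial (BB m) (coeff m g) := by
    conv_lhs => rw [← support_sum_monomial_coeff g]
    rw [map_sum]
    exact Finset.sum_congr rfl fun m _ => pi_monomial m _
  have hco : coeff (BB b) (birkhoffHom n r K g) = 0 := by rw [hg]; simp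
  rw [hrep, coeff_sum] at hco
  have hterm : ∀ m ∈ g.support,
      coeff (BB b) (monomial (BB m) (coeff m g)) = if m = b then coeff m g else 0 := by
    intro m _
    rw [coeff_monomial]
    by_cases h : m = b
    · subst h; simp
    · rw [if_neg (fun he => h (hb m he)), if_neg h]
  rw [Finset.sum_congr rfl hterm, Finset.sum_ite_eq' g.support b] at hco
  by_cases hbs : b ∈ g.support
  · rwa [if_pos hbs] at hco
  · exact MvPolynomial.notMem_support_iff.mp hbs

/-! ### Uniqueness of small fibers -/

lemma f3comm (a : Fin 3) : a + 1 = 1 + a := add_comm _ _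
lemma f3rot (a : Fin 3) : 2 + (a + 1) = a := by revert a; decide
lemma f3ne (a : Fin 3) : a ≠ a + 1 := by revert a; decide
lemma f3succ {i l : Fin 3} (h : i ≠ l) : l = i + 1 ∨ i = l + 1 := by
  revert h; revert i l; decide

lemma pairUnique (hn : 3 ≤ n) (hrn : r ≤ n) (hr : 2 ≤ r) (a : Fin 3)
    (α β : Fin r ↪ Fin n)
    (hrow : ∀ j, (α j = sig hn hrn a j ∧ β j = sig hn hrn (a + 1) j)
      ∨ (α j = sig hn hrn (a + 1) j ∧ β j = sig hn hrn a j)) :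
    (α = sig hn hrn a ∧ β = sig hn hrn (a + 1))
      ∨ (α = sig hn hrn (a + 1) ∧ β = sig hn hrn a) := by
  have hr0 : 0 < r := by omega
  have hj0v : ((⟨0, hr0⟩ : Fin r)).val = ((0 : Fin 3)).val := rfl
  have hu0 : sig hn hrn a ⟨0, hr0⟩ = xv hn a := by
    rw [sig_row hn hrn a _ 0 hj0v, zero_add]
  have hv0 : sig hn hrn (a + 1) ⟨0, hr0⟩ = xv hn (a + 1) := by
    rw [sig_row hn hrn (a + 1) _ 0 hj0v, zero_add]
  have hv2 : ∀ j : Fin r, j.val = 2 → sig hn hrn (a + 1) j = xv hn a := by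
    intro j hj
    rw [sig_row hn hrn (a + 1) j 2 hj, f3rot]
  have hne : xv hn a ≠ xv hn (a + 1) := fun hx => f3ne a (xv_inj hn hx)
  have hfix : ∀ j : Fin r, 3 ≤ j.val → sig hn hrn a j = sig hn hrn (a + 1) j := by
    intro j hj
    rw [sig_ge hn hrn _ _ hj, sig_ge hn hrn _ _ hj]
  rcases hrow ⟨0, hr0⟩ with ⟨h1, h2⟩ | ⟨h1, h2⟩
  · left
    have key : ∀ j : Fin r, α j = sig hn hrn a j ∧ β j = sig hn hrn (a + 1) j := by
      intro j
      rcases hrow j with h | ⟨ha, hb⟩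
      · exact h
      · by_cases h3 : 3 ≤ j.val
        · rw [ha, hb, hfix j h3]; exact ⟨rfl, rfl⟩
        · have hc : j.val = 0 ∨ j.val = 1 ∨ j.val = 2 := by omega
          rcases hc with hc | hc | hc
          · have hj : j = ⟨0, hr0⟩ := Fin.ext (by rw [hc])
            subst hj
            rw [hu0] at h1; rw [hv0] at ha
            exact absurd (h1 ▸ ha) hne
          · exfalso
            have hbu : β j = xv hn (1 + a) := by
              rw [hb, sig_row hn hrn a j 1 hc]
            have hbv : β ⟨0, hr0⟩ = xv hn (1 + a) := by rw [h2, hv0, f3comm]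
            have hje := β.injective (hbu.trans hbv.symm)
            rw [hje] at hc
            simp at hc
          · exfalso
            have hav : α j = xv hn a := by rw [ha, hv2 j hc]
            have hau : α ⟨0, hr0⟩ = xv hn a := by rw [h1, hu0]
            have hje := α.injective (hav.trans hau.symm)
            rw [hje] at hc
            simp at hc
    exact ⟨DFunLike.ext _ _ fun j => (key j).1, DFunLike.ext _ _ fun j => (key j).2⟩
  · right
    have key : ∀ j : Fin r, α j = sig hn hrn (a + 1) j ∧ β j = sig hn hrn a j := by
      intro j
      rcases hrow j with ⟨ha, hb⟩ | h
      · by_cases h3 : 3 ≤ j.val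
        · rw [ha, hb, hfix j h3]; exact ⟨rfl, rfl⟩
        · have hc : j.val = 0 ∨ j.val = 1 ∨ j.val = 2 := by omega
          rcases hc with hc | hc | hc
          · have hj : j = ⟨0, hr0⟩ := Fin.ext (by rw [hc])
            subst hj
            rw [hv0] at h1; rw [hu0] at ha
            exact absurd (ha ▸ h1) hne
          · exfalso
            have hau : α j = xv hn (1 + a) := by
              rw [ha, sig_row hn hrn a j 1 hc]
            have hav : α ⟨0, hr0⟩ = xv hn (1 + a) := by rw [h1, hv0, f3comm]
            have hje := α.injective (hau.trans hav.symm)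
            rw [hje] at hc
            simp at hc
          · exfalso
            have hbv : β j = xv hn a := by rw [hb, hv2 j hc]
            have hbu : β ⟨0, hr0⟩ = xv hn a := by rw [h2, hu0]
            have hje := β.injective (hbv.trans hbu.symm)
            rw [hje] at hc
            simp at hc
      · exact h
    exact ⟨DFunLike.ext _ _ fun j => (key j).1, DFunLike.ext _ _ fun j => (key j).2⟩

lemma fiber_pair (hn : 3 ≤ n) (hrn : r ≤ n) (hr : 2 ≤ r) (a : Fin 3)
    (m : (Fin r ↪ Fin n) →₀ ℕ)
    (hm : BB m = BB (Finsupp.single (sig hn hrn a) 1 + Finsupp.single (sig hn hrn (a + 1)) 1)) :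
    m = Finsupp.single (sig hn hrn a) 1 + Finsupp.single (sig hn hrn (a + 1)) 1 := by
  classical
  have hr0 : 0 < r := by omega
  have hdeg : m.degree = 2 := by
    rw [degree_eq_of_BB_eq hr0 hm, degree_add', degree_single', degree_single']
  obtain ⟨ε, ζ, hεζ⟩ := deg_two hdeg
  subst hεζ
  rw [BB_add, BB_add, BB_single, BB_single, BB_single, BB_single, one_smul, one_smul,
    one_smul, one_smul] at hm
  have hrow : ∀ j, (ε j = sig hn hrn a j ∧ ζ j = sig hn hrn (a + 1) j)
      ∨ (ε j = sig hn hrn (a + 1) j ∧ ζ j = sig hn hrn a j) := by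
    intro j
    apply pair_of_ite
    intro k
    have h1 := congrArg (fun f => f (j, k)) hm
    simpa [Finsupp.add_apply, dd_apply] using h1
  rcases pairUnique hn hrn hr a ε ζ hrow with ⟨he, hz⟩ | ⟨he, hz⟩
  · rw [he, hz]
  · rw [he, hz, add_comm]

/-! ### The two cubic monomial exponents -/

noncomputable def ee1 (hn : 3 ≤ n) (hrn : r ≤ n) : (Fin r ↪ Fin n) →₀ ℕ :=
  Finsupp.single (sig hn hrn 0) 1 + Finsupp.single (sig hn hrn 1) 1
    + Finsupp.single (sig hn hrn 2) 1

noncomputable def ee2 (hn : 3 ≤ n) (hrn : r ≤ n) : (Fin r ↪ Fin n) →₀ ℕ :=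
  Finsupp.single (tau hn hrn 0) 1 + Finsupp.single (tau hn hrn 1) 1
    + Finsupp.single (tau hn hrn 2) 1

lemma deg_ee1 (hn : 3 ≤ n) (hrn : r ≤ n) : (ee1 hn hrn).degree = 3 := by
  rw [ee1, degree_add', degree_add', degree_single', degree_single', degree_single']

lemma BB_ee_eq (hn : 3 ≤ n) (hrn : r ≤ n) : BB (ee1 hn hrn) = BB (ee2 hn hrn) := by
  classical
  rw [ee1, ee2, BB_add, BB_add, BB_add, BB_add]
  simp only [BB_single, one_smul]
  ext p
  obtain ⟨j, kk⟩ := p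
  simp only [Finsupp.add_apply, dd_apply]
  by_cases h3 : 3 ≤ j.val
  · rw [sig_ge hn hrn 0 j h3, sig_ge hn hrn 1 j h3, sig_ge hn hrn 2 j h3,
      tau_ge hn hrn 0 j h3, tau_ge hn hrn 1 j h3, tau_ge hn hrn 2 j h3]
  · have hc : j.val = 0 ∨ j.val = 1 ∨ j.val = 2 := by omega
    rcases hc with hc | hc | hc
    · rw [sig_row hn hrn 0 j 0 hc, sig_row hn hrn 1 j 0 hc, sig_row hn hrn 2 j 0 hc,
        tau_row hn hrn 0 j 0 hc, tau_row hn hrn 1 j 0 hc, tau_row hn hrn 2 j 0 hc]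
      simp only [show (0:Fin 3) + 0 = 0 from rfl, show (0:Fin 3) + 1 = 1 from rfl,
        show (0:Fin 3) + 2 = 2 from rfl,
        show (![1,0,2] : Fin 3 → Fin 3) 0 = 1 from rfl,
        show (![1,0,2] : Fin 3 → Fin 3) 1 = 0 from rfl,
        show (![1,0,2] : Fin 3 → Fin 3) 2 = 2 from rfl]
      omega
    · rw [sig_row hn hrn 0 j 1 hc, sig_row hn hrn 1 j 1 hc, sig_row hn hrn 2 j 1 hc,
        tau_row hn hrn 0 j 1 hc, tau_row hn hrn 1 j 1 hc, tau_row hn hrn 2 j 1 hc]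
      simp only [show (1:Fin 3) + 0 = 1 from rfl, show (1:Fin 3) + 1 = 2 from rfl,
        show (1:Fin 3) + 2 = 0 from rfl,
        show (![1,0,2] : Fin 3 → Fin 3) 0 = 1 from rfl,
        show (![1,0,2] : Fin 3 → Fin 3) 1 = 0 from rfl,
        show (![1,0,2] : Fin 3 → Fin 3) 2 = 2 from rfl]
      omega
    · rw [sig_row hn hrn 0 j 2 hc, sig_row hn hrn 1 j 2 hc, sig_row hn hrn 2 j 2 hc,
        tau_row hn hrn 0 j 2 hc, tau_row hn hrn 1 j 2 hc, tau_row hn hrn 2 j 2 hc]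
      simp only [show (2:Fin 3) + 0 = 2 from rfl, show (2:Fin 3) + 1 = 0 from rfl,
        show (2:Fin 3) + 2 = 1 from rfl,
        show (![1,0,2] : Fin 3 → Fin 3) 0 = 1 from rfl,
        show (![1,0,2] : Fin 3 → Fin 3) 1 = 0 from rfl,
        show (![1,0,2] : Fin 3 → Fin 3) 2 = 2 from rfl]
      omega

lemma ee1_le_one (hn : 3 ≤ n) (hrn : r ≤ n) (hr0 : 0 < r) (γ : Fin r ↪ Fin n) :
    ee1 hn hrn γ ≤ 1 := by
  classical
  have d01 := sig_ne hn hrn hr0 (show (0:Fin 3) ≠ 1 by decide)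
  have d02 := sig_ne hn hrn hr0 (show (0:Fin 3) ≠ 2 by decide)
  have d12 := sig_ne hn hrn hr0 (show (1:Fin 3) ≠ 2 by decide)
  simp only [ee1, Finsupp.add_apply, Finsupp.single_apply]
  by_cases h0 : sig hn hrn 0 = γ
  · have h1 : ¬ sig hn hrn 1 = γ := fun h => d01 (h0.trans h.symm)
    have h2 : ¬ sig hn hrn 2 = γ := fun h => d02 (h0.trans h.symm)
    simp [h0, h1, h2]
  · by_cases h1 : sig hn hrn 1 = γ
    · have h2 : ¬ sig hn hrn 2 = γ := fun h => d12 (h1.trans h.symm)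
      simp [h0, h1, h2]
    · by_cases h2 : sig hn hrn 2 = γ <;> simp [h0, h1, h2]

lemma ee1_mem (hn : 3 ≤ n) (hrn : r ≤ n) {γ : Fin r ↪ Fin n} (h : ee1 hn hrn γ ≠ 0) :
    ∃ i : Fin 3, γ = sig hn hrn i := by
  classical
  by_contra hno
  push_neg at hno
  have h0 : ¬ sig hn hrn 0 = γ := fun h' => hno 0 h'.symm
  have h1 : ¬ sig hn hrn 1 = γ := fun h' => hno 1 h'.symm
  have h2 : ¬ sig hn hrn 2 = γ := fun h' => hno 2 h'.symm
  apply h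
  simp [ee1, Finsupp.add_apply, Finsupp.single_apply, h0, h1, h2]

lemma ee2_ne_ee1 (hn : 3 ≤ n) (hrn : r ≤ n) (hr : 2 ≤ r) : ee2 hn hrn ≠ ee1 hn hrn := by
  classical
  have hr0 : 0 < r := by omega
  intro hc
  have hval := congrArg (fun f => f (sig hn hrn 0)) hc
  simp only [ee1, ee2, Finsupp.add_apply, Finsupp.single_apply] at hval
  have d01 := sig_ne hn hrn hr0 (show (1:Fin 3) ≠ 0 by decide)
  have d02 := sig_ne hn hrn hr0 (show (2:Fin 3) ≠ 0 by decide)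
  have ht0 : ¬ tau hn hrn 0 = sig hn hrn 0 := by
    intro h
    have := congrArg (fun e : Fin r ↪ Fin n => e ⟨0, hr0⟩) h
    rw [tau_row hn hrn 0 ⟨0, hr0⟩ 0 rfl, sig_row hn hrn 0 ⟨0, hr0⟩ 0 rfl] at this
    exact xv_ne hn (show (![1,0,2] : Fin 3 → Fin 3) (0 + 0) ≠ 0 + 0 by decide) this
  have ht1 : ¬ tau hn hrn 1 = sig hn hrn 0 := by
    intro h
    have := congrArg (fun e : Fin r ↪ Fin n => e ⟨1, by omega⟩) h
    rw [tau_row hn hrn 1 ⟨1, by omega⟩ 1 rfl, sig_row hn hrn 0 ⟨1, by omega⟩ 1 rfl] at this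
    exact xv_ne hn (show (![1,0,2] : Fin 3 → Fin 3) (1 + 1) ≠ 1 + 0 by decide) this
  have ht2 : ¬ tau hn hrn 2 = sig hn hrn 0 := by
    intro h
    have := congrArg (fun e : Fin r ↪ Fin n => e ⟨0, hr0⟩) h
    rw [tau_row hn hrn 2 ⟨0, hr0⟩ 0 rfl, sig_row hn hrn 0 ⟨0, hr0⟩ 0 rfl] at this
    exact xv_ne hn (show (![1,0,2] : Fin 3 → Fin 3) (0 + 2) ≠ 0 + 0 by decide) this
  simp [ht0, ht1, ht2, d01, d02] at hval

/-! ### Coefficient vanishing for homogeneous kernel elements of degree ≠ 3 -/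

lemma key_coeff (hn : 3 ≤ n) (hrn : r ≤ n) (hr : 2 ≤ r)
    {g : MvPolynomial (Fin r ↪ Fin n) K} (hg : birkhoffHom n r K g = 0)
    {d : ℕ} (hd : g.IsHomogeneous d) (hd3 : d ≠ 3)
    (a b : (Fin r ↪ Fin n) →₀ ℕ) (hab : a + b = ee1 hn hrn) :
    MvPolynomial.coeff b g = 0 := by
  classical
  have hr0 : 0 < r := by omega
  by_contra hc
  have hdb : b.degree = d := by
    by_contra h
    exact hc (hd.coeff_eq_zero h)
  have hdeg3 : a.degree + b.degree = 3 := by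
    rw [← degree_add', hab, deg_ee1]
  have hble : b.degree = 0 ∨ b.degree = 1 ∨ b.degree = 2 := by omega
  rcases hble with hb0 | hb1 | hb2
  · apply hc
    have hbz : b = 0 := (Finsupp.degree_eq_zero_iff b).mp hb0
    subst hbz
    apply coeff_ker hg
    intro m hm
    have hm0 : m.degree = 0 := by
      rw [degree_eq_of_BB_eq hr0 hm]; exact map_zero _
    exact (Finsupp.degree_eq_zero_iff m).mp hm0
  · obtain ⟨γ, hbγ⟩ := deg_one hb1
    subst hbγ
    apply hc
    apply coeff_ker hg
    intro m hm
    have hdm : m.degree = 1 := by rw [degree_eq_of_BB_eq hr0 hm, degree_single']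
    obtain ⟨ε, hme⟩ := deg_one hdm
    subst hme
    rw [BB_single, BB_single, one_smul, one_smul] at hm
    rw [dd_inj hm]
  · obtain ⟨γ, δ, hbγδ⟩ := deg_two hb2
    subst hbγδ
    by_cases hgd : γ = δ
    · subst hgd
      have hv := congrArg (fun f => f γ) hab
      simp only [Finsupp.add_apply, Finsupp.single_eq_same] at hv
      have hle := ee1_le_one hn hrn hr0 γ
      omega
    · have hvγ := congrArg (fun f => f γ) hab
      have hvδ := congrArg (fun f => f δ) hab
      simp only [Finsupp.add_apply, Finsupp.single_eq_same,
        Finsupp.single_apply, if_neg hgd, if_neg (fun h : δ = γ => hgd h.symm)] at hvγ hvδ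
      obtain ⟨i, hγ⟩ := ee1_mem hn hrn (show ee1 hn hrn γ ≠ 0 by omega)
      obtain ⟨l, hδ⟩ := ee1_mem hn hrn (show ee1 hn hrn δ ≠ 0 by omega)
      have hil : i ≠ l := by
        intro h
        exact hgd (hγ.trans (by rw [h, ← hδ]))
      subst hγ; subst hδ
      rcases f3succ hil with h | h
      · subst h
        apply hc
        apply coeff_ker hg
        intro m hm
        exact fiber_pair hn hrn hr i m hm
      · subst h
        apply hc
        apply coeff_ker hg
        intro m hm
        rw [add_comm (Finsupp.single (sig hn hrn (l + 1)) 1)] at hm ⊢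
        exact fiber_pair hn hrn hr l m hm

lemma span_coeff_zero (hn : 3 ≤ n) (hrn : r ≤ n)
    {S : Set (MvPolynomial (Fin r ↪ Fin n) K)}
    (hS : ∀ g ∈ S, ∀ a b : (Fin r ↪ Fin n) →₀ ℕ, a + b = ee1 hn hrn →
      MvPolynomial.coeff b g = 0)
    {p : MvPolynomial (Fin r ↪ Fin n) K} (hp : p ∈ Ideal.span S)
    (h : MvPolynomial (Fin r ↪ Fin n) K) :
    MvPolynomial.coeff (ee1 hn hrn) (h * p) = 0 := by
  classical
  refine Submodule.span_induction
    (p := fun x _ => ∀ h : MvPolynomial (Fin r ↪ Fin n) K,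
      MvPolynomial.coeff (ee1 hn hrn) (h * x) = 0) ?_ ?_ ?_ ?_ hp h
  · intro x hx h
    rw [coeff_mul]
    apply Finset.sum_eq_zero
    intro q hq
    rw [hS x hx q.1 q.2 (Finset.HasAntidiagonal.mem_antidiagonal.mp hq), mul_zero]
  · intro h
    rw [mul_zero]
    exact coeff_zero _
  · intro x y _ _ ihx ihy h
    rw [mul_add, coeff_add, ihx h, ihy h, add_zero]
  · intro c x _ ih h
    rw [smul_eq_mul, ← mul_assoc]
    exact ih (h * c)

end BirkhoffProofAux

open BirkhoffProofAux MvPolynomial in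
/-- For `2 ≤ r ≤ n` and `n ≥ 3`, the toric ideal `I_{A_{n,r}}` is not
generated by its homogeneous elements of degree at most two; consequently, every set of
homogeneous generators of `I_{A_{n,r}}` contains a (nonzero) element of degree three. -/
theorem toricIdeal_not_generated_in_degree_le_two
    (n r : ℕ) (hr : 2 ≤ r) (hrn : r ≤ n) (hn : 3 ≤ n) (K : Type) [Field K] :
    (toricIdeal n r K ≠
      Ideal.span {f : MvPolynomial (Fin r ↪ Fin n) K |
        f ∈ toricIdeal n r K ∧ ∃ d ≤ 2, f.IsHomogeneous d}) ∧
    (∀ G : Set (MvPolynomial (Fin r ↪ Fin n) K),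
      (∀ g ∈ G, ∃ d, g.IsHomogeneous d) →
      Ideal.span G = toricIdeal n r K →
      ∃ g ∈ G, g ≠ 0 ∧ g.IsHomogeneous 3) := by
  classical
  set ff : MvPolynomial (Fin r ↪ Fin n) K :=
    monomial (ee1 hn hrn) (1:K) - monomial (ee2 hn hrn) 1 with hff
  have hker : birkhoffHom n r K ff = 0 := by
    rw [hff, map_sub, pi_monomial, pi_monomial, BB_ee_eq hn hrn, sub_self]
  have hmem : ff ∈ toricIdeal n r K := by
    rw [toricIdeal]
    exact RingHom.mem_ker.mpr hker
  have hcoe : coeff (ee1 hn hrn) ff = 1 := by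
    rw [hff, coeff_sub, coeff_monomial, coeff_monomial, if_pos rfl,
      if_neg (ee2_ne_ee1 hn hrn hr), sub_zero]
  constructor
  · intro hEq
    have hffS : ff ∈ Ideal.span {f : MvPolynomial (Fin r ↪ Fin n) K |
        f ∈ toricIdeal n r K ∧ ∃ d ≤ 2, f.IsHomogeneous d} := by
      rw [← hEq]; exact hmem
    have h0 : coeff (ee1 hn hrn) ((1 : MvPolynomial (Fin r ↪ Fin n) K) * ff) = 0 := by
      refine span_coeff_zero hn hrn ?_ hffS 1
      rintro g ⟨hgI, d, hd2, hdh⟩ a b hab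
      have hgk : birkhoffHom n r K g = 0 := by
        rw [toricIdeal] at hgI
        exact RingHom.mem_ker.mp hgI
      exact key_coeff hn hrn hr hgk hdh (by omega) a b hab
    rw [one_mul, hcoe] at h0
    exact one_ne_zero h0
  · intro G hGhom hGspan
    by_contra hno
    have hS : ∀ g ∈ G, ∀ a b : (Fin r ↪ Fin n) →₀ ℕ, a + b = ee1 hn hrn →
        coeff b g = 0 := by
      intro g hg a b hab
      obtain ⟨d, hd⟩ := hGhom g hg
      by_cases hd3 : d = 3
      · subst hd3
        have hg0 : g = 0 := by
          by_contra hgz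
          exact hno ⟨g, hg, hgz, hd⟩
        rw [hg0]
        exact coeff_zero _
      · have hgI : g ∈ toricIdeal n r K := hGspan ▸ Ideal.subset_span hg
        have hgk : birkhoffHom n r K g = 0 := by
          rw [toricIdeal] at hgI
          exact RingHom.mem_ker.mp hgI
        exact key_coeff hn hrn hr hgk hd hd3 a b hab
    have hffG : ff ∈ Ideal.span G := by rw [hGspan]; exact hmem
    have h0 := span_coeff_zero hn hrn hS hffG 1
    rw [one_mul, hcoe] at h0
    exact one_ne_zero h0
end

section
/- Let 1 ≤ r ≤ n and let T be an r×n matrix with nonnegative integer entries such that every row sum of T equals 2 and every column sum of T is at most 2. Then there exist proper votes W₁ and W₂ with T = W₁ + W₂. -/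
/-- A proper vote: an `r × n` integer matrix with all entries in `{0,1}`, every row sum
equal to `1`, and every column sum equal to `0` or `1`. -/
def IsProperVote (r n : ℕ) (V : Matrix (Fin r) (Fin n) ℤ) : Prop :=
  (∀ j k, V j k = 0 ∨ V j k = 1) ∧
  (∀ j, ∑ k, V j k = 1) ∧
  (∀ k, ∑ j, V j k = 0 ∨ ∑ j, V j k = 1)

/-- An improper vote: an `r × n` integer matrix with every row sum equal to `1`, every
column sum equal to `0` or `1`, exactly one entry equal to `-1`, and all other entries
in `{0,1}`. -/
def IsImproperVote (r n : ℕ) (V : Matrix (Fin r) (Fin n) ℤ) : Prop :=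
  (∀ j, ∑ k, V j k = 1) ∧
  (∀ k, ∑ j, V j k = 0 ∨ ∑ j, V j k = 1) ∧
  (∃ j' k', V j' k' = -1 ∧ ∀ j k, (j, k) ≠ (j', k') → V j k = 0 ∨ V j k = 1)

/-- For `1 ≤ r ≤ n`, every `r × n` matrix with nonnegative integer
entries, all row sums equal to `2` and all column sums at most `2` is the sum of two
proper votes. -/
theorem sum_of_two_proper_votes
    (r n : ℕ) (hr : 1 ≤ r) (hrn : r ≤ n)
    (T : Matrix (Fin r) (Fin n) ℤ)
    (hpos : ∀ j k, 0 ≤ T j k)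
    (hrow : ∀ j, ∑ k, T j k = 2)
    (hcol : ∀ k, ∑ j, T j k ≤ 2) :
    ∃ W₁ W₂ : Matrix (Fin r) (Fin n) ℤ,
      IsProperVote r n W₁ ∧ IsProperVote r n W₂ ∧ T = W₁ + W₂ := by
  classical
  have hcol0 : ∀ k, (0:ℤ) ≤ ∑ j, T j k := fun k => Finset.sum_nonneg fun j _ => hpos j k
  have hTle : ∀ j k, T j k ≤ 2 := by
    intro j k
    calc T j k ≤ ∑ k', T j k' :=
          Finset.single_le_sum (fun k' _ => hpos j k') (Finset.mem_univ k)
      _ = 2 := hrow j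
  set Light : Finset (Fin n) := Finset.univ.filter (fun k => ∑ j, T j k ≤ 1) with hLightdef
  set Heavy : Finset (Fin n) := Finset.univ.filter (fun k => ¬ ∑ j, T j k ≤ 1) with hHeavydef
  have hHeavymem : ∀ k, k ∈ Heavy ↔ ∑ j, T j k = 2 := by
    intro k
    have h1 := hcol k
    have h2 := hcol0 k
    simp only [hHeavydef, Finset.mem_filter, Finset.mem_univ, true_and]
    omega
  have hLH : Light.card + Heavy.card = n := by
    have h := Finset.card_filter_add_card_filter_not
      (s := (Finset.univ : Finset (Fin n))) (p := fun k => ∑ j, T j k ≤ 1)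
    rw [← hLightdef, ← hHeavydef, Finset.card_univ, Fintype.card_fin] at h
    exact h
  have htot : ∑ k, ∑ j, T j k = 2 * r := by
    rw [Finset.sum_comm]
    rw [Finset.sum_congr rfl (fun j _ => hrow j), Finset.sum_const, Finset.card_univ,
      Fintype.card_fin, nsmul_eq_mul, mul_comm]
  have hHsum : ∑ k ∈ Heavy, ∑ j, T j k = 2 * Heavy.card := by
    rw [Finset.sum_congr rfl (fun k hk => (hHeavymem k).mp hk), Finset.sum_const,
      nsmul_eq_mul, mul_comm]
  have hLsum : ∑ k ∈ Light, ∑ j, T j k = 2 * r - 2 * Heavy.card := by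
    have h := Finset.sum_filter_add_sum_filter_not Finset.univ
      (fun k => ∑ j, T j k ≤ 1) (fun k => ∑ j, T j k)
    rw [← hLightdef, ← hHeavydef, hHsum, htot] at h
    linarith
  let tL : Fin r → Finset (Fin n) := fun j => Finset.univ.filter (fun k => 1 ≤ T j k)
  have htL : ∀ j k, k ∈ tL j ↔ 1 ≤ T j k := by intro j k; simp [tL]
  have hzero_out : ∀ (S : Finset (Fin r)), ∀ j ∈ S, ∀ k, k ∉ S.biUnion tL → T j k = 0 := by
    intro S j hj k hk
    have h1 : k ∉ tL j := fun h => hk (Finset.mem_biUnion.mpr ⟨j, hj, h⟩)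
    rw [htL] at h1
    have := hpos j k
    omega
  have hcolS : ∀ (S : Finset (Fin r)) (k : Fin n), ∑ j ∈ S, T j k ≤ ∑ j, T j k :=
    fun S k => Finset.sum_le_sum_of_subset_of_nonneg (Finset.subset_univ S)
      (fun j _ _ => hpos j k)
  have hboundS : ∀ (S : Finset (Fin r)) (C : Finset (Fin n)),
      ∑ k ∈ C, ∑ j ∈ S, T j k ≤ 2 * (C.card : ℤ) := by
    intro S C
    calc ∑ k ∈ C, ∑ j ∈ S, T j k ≤ ∑ _k ∈ C, (2:ℤ) :=
          Finset.sum_le_sum (fun k _ => le_trans (hcolS S k) (hcol k))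
      _ = 2 * (C.card : ℤ) := by rw [Finset.sum_const, nsmul_eq_mul, mul_comm]
  have hSrow : ∀ (S : Finset (Fin r)),
      ∑ k, ∑ j ∈ S, T j k = 2 * (S.card : ℤ) := by
    intro S
    rw [Finset.sum_comm]
    rw [Finset.sum_congr rfl (fun j _ => hrow j), Finset.sum_const, nsmul_eq_mul, mul_comm]
  have hmainS : ∀ (S : Finset (Fin r)),
      ∑ k ∈ S.biUnion tL, ∑ j ∈ S, T j k = 2 * (S.card : ℤ) := by
    intro S
    rw [← hSrow S]
    refine Finset.sum_subset (Finset.subset_univ _) ?_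
    intro k _ hk
    exact Finset.sum_eq_zero fun j hj => hzero_out S j hj k hk
  let t : Fin r ⊕ Fin (n - r) → Finset (Fin n) := Sum.elim tL (fun _ => Light)
  have hall : ∀ s : Finset (Fin r ⊕ Fin (n - r)), s.card ≤ (s.biUnion t).card := by
    intro s
    set S := s.toLeft with hSdef
    have hsub : S.biUnion tL ⊆ s.biUnion t := by
      intro k hk
      obtain ⟨j, hj, hkj⟩ := Finset.mem_biUnion.mp hk
      exact Finset.mem_biUnion.mpr ⟨Sum.inl j, Finset.mem_toLeft.mp hj, hkj⟩
    have hScard : S.card + s.toRight.card = s.card := Finset.card_toLeft_add_card_toRight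
    rcases s.toRight.eq_empty_or_nonempty with he | ⟨i, hi⟩
    · have h1 := hmainS S
      have h2 := hboundS S (S.biUnion tL)
      have h3 : (S.card : ℤ) ≤ ((S.biUnion tL).card : ℤ) := by linarith
      have h4 : S.card ≤ (S.biUnion tL).card := by exact_mod_cast h3
      have h5 := Finset.card_le_card hsub
      have h6 : s.toRight.card = 0 := by rw [he]; rfl
      omega
    · have hLightsub : Light ⊆ s.biUnion t := by
        intro k hk
        exact Finset.mem_biUnion.mpr ⟨Sum.inr i, Finset.mem_toRight.mp hi, hk⟩
      have hHNsub : Heavy ∩ (S.biUnion tL) ⊆ s.biUnion t :=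
        fun k hk => hsub (Finset.mem_inter.mp hk).2
      have hdisj : Disjoint Light (Heavy ∩ S.biUnion tL) := by
        refine Finset.disjoint_left.mpr ?_
        intro k hkL hkH
        have h2 := (hHeavymem k).mp (Finset.mem_inter.mp hkH).1
        simp only [hLightdef, Finset.mem_filter, Finset.mem_univ, true_and] at hkL
        omega
      have hcard1 : Light.card + (Heavy ∩ S.biUnion tL).card ≤ (s.biUnion t).card := by
        rw [← Finset.card_union_of_disjoint hdisj]
        exact Finset.card_le_card (Finset.union_subset hLightsub hHNsub)
      have hsplit : ∑ k ∈ Light, ∑ j ∈ S, T j k + ∑ k ∈ Heavy, ∑ j ∈ S, T j k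
          = 2 * (S.card : ℤ) := by
        have h := Finset.sum_filter_add_sum_filter_not Finset.univ
          (fun k => ∑ j, T j k ≤ 1) (fun k => ∑ j ∈ S, T j k)
        rw [← hLightdef, ← hHeavydef, hSrow S] at h
        exact h
      have hheavyeq : ∑ k ∈ Heavy, ∑ j ∈ S, T j k
          = ∑ k ∈ Heavy ∩ S.biUnion tL, ∑ j ∈ S, T j k := by
        refine (Finset.sum_subset Finset.inter_subset_left ?_).symm
        intro k hk hk2
        refine Finset.sum_eq_zero fun j hj => ?_
        refine hzero_out S j hj k ?_
        intro hmem
        exact hk2 (Finset.mem_inter.mpr ⟨hk, hmem⟩)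
      have hLbound : ∑ k ∈ Light, ∑ j ∈ S, T j k ≤ ∑ k ∈ Light, ∑ j, T j k :=
        Finset.sum_le_sum (fun k _ => hcolS S k)
      have hHbound := hboundS S (Heavy ∩ S.biUnion tL)
      have hd : s.toRight.card ≤ n - r := by
        calc s.toRight.card ≤ (Finset.univ : Finset (Fin (n - r))).card :=
              Finset.card_le_univ _
          _ = n - r := by simp
      have key : (S.card : ℤ) + (Heavy.card : ℤ)
          ≤ ((Heavy ∩ S.biUnion tL).card : ℤ) + (r : ℤ) := by
        rw [hheavyeq] at hsplit
        linarith [hLsum]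
      omega
  obtain ⟨f, hfinj, hft⟩ := (Finset.all_card_le_biUnion_card_iff_exists_injective t).mp hall
  set σ : Fin r → Fin n := fun j => f (Sum.inl j) with hσdef
  have hσinj : Function.Injective σ := by
    intro a b hab
    have := hfinj hab
    exact Sum.inl.inj this
  have hσT : ∀ j, 1 ≤ T j (σ j) := by
    intro j
    have h := hft (Sum.inl j)
    exact (htL j (σ j)).mp h
  have hfsurj : Function.Surjective f := by
    have hcard : Fintype.card (Fin r ⊕ Fin (n - r)) = Fintype.card (Fin n) := by
      simp only [Fintype.card_sum, Fintype.card_fin]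
      omega
    exact ((Fintype.bijective_iff_injective_and_card f).mpr ⟨hfinj, hcard⟩).2
  have hheavyhit : ∀ k, ∑ j, T j k = 2 → ∃ j, σ j = k := by
    intro k hk
    obtain ⟨x, hx⟩ := hfsurj k
    cases x with
    | inl j => exact ⟨j, hx⟩
    | inr i =>
      exfalso
      have h : f (Sum.inr i) ∈ Light := hft (Sum.inr i)
      rw [hx] at h
      simp only [hLightdef, Finset.mem_filter, Finset.mem_univ, true_and] at h
      omega
  set W₁ : Matrix (Fin r) (Fin n) ℤ := fun j k => if σ j = k then 1 else 0 with hW₁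
  set W₂ : Matrix (Fin r) (Fin n) ℤ := fun j k => T j k - W₁ j k with hW₂
  have hW1e : ∀ j k, W₁ j k = if σ j = k then 1 else 0 := fun j k => rfl
  have hW2e : ∀ j k, W₂ j k = T j k - W₁ j k := fun j k => rfl
  have hW1row : ∀ j, ∑ k, W₁ j k = 1 := by
    intro j
    rw [Finset.sum_congr rfl (fun k _ => hW1e j k)]
    simp
  have hW1col : ∀ k, (∑ j, W₁ j k) = if ∃ j, σ j = k then 1 else 0 := by
    intro k
    by_cases h : ∃ j, σ j = k
    · obtain ⟨j₀, hj₀⟩ := h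
      rw [if_pos ⟨j₀, hj₀⟩]
      rw [Finset.sum_eq_single j₀]
      · rw [hW1e, if_pos hj₀]
      · intro j _ hne
        rw [hW1e, if_neg (fun he => hne (hσinj (he.trans hj₀.symm)))]
      · intro h; exact absurd (Finset.mem_univ j₀) h
    · rw [if_neg h]
      exact Finset.sum_eq_zero fun j _ => by
        rw [hW1e, if_neg (fun he => h ⟨j, he⟩)]
  have hpairle : ∀ j k, σ j ≠ k → T j (σ j) + T j k ≤ 2 := by
    intro j k hne
    have hpair : T j (σ j) + T j k = ∑ k' ∈ ({σ j, k} : Finset (Fin n)), T j k' :=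
      (Finset.sum_pair hne).symm
    have hle : ∑ k' ∈ ({σ j, k} : Finset (Fin n)), T j k' ≤ ∑ k', T j k' :=
      Finset.sum_le_sum_of_subset_of_nonneg (Finset.subset_univ _)
        (fun k' _ _ => hpos j k')
    rw [hrow j] at hle
    omega
  refine ⟨W₁, W₂, ⟨?_, hW1row, ?_⟩, ⟨?_, ?_, ?_⟩, ?_⟩
  · intro j k
    rw [hW1e]
    by_cases h : σ j = k <;> simp [h]
  · intro k
    by_cases h : ∃ j, σ j = k
    · right; rw [hW1col, if_pos h]
    · left; rw [hW1col, if_neg h]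
  · intro j k
    rw [hW2e, hW1e]
    by_cases h : σ j = k
    · rw [if_pos h, ← h]
      have h1 := hσT j
      have h2 := hTle j (σ j)
      omega
    · rw [if_neg h]
      have h1 := hpairle j k h
      have h2 := hσT j
      have h3 := hpos j k
      omega
  · intro j
    simp only [hW2e]
    rw [Finset.sum_sub_distrib, hrow, hW1row]
    norm_num
  · intro k
    have hs : ∑ j, W₂ j k = ∑ j, T j k - ∑ j, W₁ j k := by
      simp only [hW2e]
      exact Finset.sum_sub_distrib _ _
    rw [hW1col] at hs
    have h0 := hcol0 k
    have h2 := hcol k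
    by_cases hkh : ∑ j, T j k = 2
    · right
      rw [hs, if_pos (hheavyhit k hkh), hkh]
      norm_num
    · by_cases hk1 : ∑ j, T j k = 1
      · by_cases hex : ∃ j, σ j = k
        · left; rw [hs, if_pos hex, hk1]; ring
        · right; rw [hs, if_neg hex, hk1]; ring
      · have hk0 : ∑ j, T j k = 0 := by omega
        have hex : ¬ ∃ j, σ j = k := by
          rintro ⟨j, hj⟩
          have h1 : T j k ≤ ∑ j', T j' k :=
            Finset.single_le_sum (fun j' _ => hpos j' k) (Finset.mem_univ j)
          have h3 := hσT j
          rw [hj] at h3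
          omega
        left
        rw [hs, if_neg hex, hk0]
        ring
  · ext j k
    rw [Matrix.add_apply, hW2e]
    ring
end

section
/- Let 1 ≤ r ≤ n, let V₁ be an improper vote and V₂ a proper vote such that V₁ + V₂ has all entries nonnegative. Then there exist proper votes W₁ and W₂ with W₁ + W₂ = V₁ + V₂. -/
open Finset



/-- A nonnegative integer vector with sum 1 is a standard basis vector. -/
lemma sum_one_vec {n : ℕ} (v : Fin n → ℤ) (hv : ∀ k, 0 ≤ v k)
    (hsum : ∑ k, v k = 1) : ∃ a, ∀ k, v k = if a = k then 1 else 0 := by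
  have ha : ∃ a, 1 ≤ v a := by
    by_contra h
    push_neg at h
    have : ∑ k, v k ≤ 0 := Finset.sum_nonpos (fun k _ => by have := h k; omega)
    omega
  obtain ⟨a, ha⟩ := ha
  have hsplit : v a + ∑ k ∈ univ.erase a, v k = 1 := by
    rw [Finset.add_sum_erase univ v (mem_univ a)]; exact hsum
  have hrest0 : ∀ k ∈ univ.erase a, v k = 0 := by
    rw [← Finset.sum_eq_zero_iff_of_nonneg (fun k _ => hv k)]
    have : 0 ≤ ∑ k ∈ univ.erase a, v k := Finset.sum_nonneg (fun k _ => hv k)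
    omega
  have hva : v a = 1 := by
    have : ∑ k ∈ univ.erase a, v k = 0 := Finset.sum_eq_zero hrest0
    omega
  refine ⟨a, fun k => ?_⟩
  by_cases hk : a = k
  · subst hk; simp [hva]
  · simp [hk]
    exact hrest0 k (by simp [Ne.symm hk])

/-- A nonnegative integer vector with sum 2 is a sum of two standard basis vectors. -/
lemma sum_two_vec {n : ℕ} (v : Fin n → ℤ) (hv : ∀ k, 0 ≤ v k)
    (hsum : ∑ k, v k = 2) :
    ∃ a b, ∀ k, v k = (if a = k then 1 else 0) + (if b = k then 1 else 0) := by
  have ha : ∃ a, 1 ≤ v a := by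
    by_contra h
    push_neg at h
    have : ∑ k, v k ≤ 0 := Finset.sum_nonpos (fun k _ => by have := h k; omega)
    omega
  obtain ⟨a, ha⟩ := ha
  set w : Fin n → ℤ := fun k => v k - (if a = k then 1 else 0) with hw
  have hwpos : ∀ k, 0 ≤ w k := by
    intro k; by_cases hk : a = k
    · subst hk; simp [hw]; omega
    · simp [hw, hk]; exact hv k
  have hwsum : ∑ k, w k = 1 := by
    simp only [hw]
    rw [Finset.sum_sub_distrib]
    simp [hsum]
  obtain ⟨b, hb⟩ := sum_one_vec w hwpos hwsum
  refine ⟨a, b, fun k => ?_⟩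
  have := hb k
  simp only [hw] at this
  omega



lemma injOn_update_insert {α β : Type*} [DecidableEq α] (F : α → β) (S : Set α) (j₀ : α)
    (x : β) (hj : j₀ ∉ S) (h : Set.InjOn F S) (hx : ∀ j ∈ S, F j ≠ x) :
    Set.InjOn (Function.update F j₀ x) (insert j₀ S) := by
  intro a ha b hb hab
  rcases ha with rfl | ha <;> rcases hb with rfl | hb
  · rfl
  · exfalso
    rw [Function.update_self, Function.update_of_ne (ne_of_mem_of_not_mem hb hj)] at hab
    exact hx b hb hab.symm
  · exfalso
    rw [Function.update_self, Function.update_of_ne (ne_of_mem_of_not_mem ha hj)] at hab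
    exact hx a ha hab
  · rw [Function.update_of_ne (ne_of_mem_of_not_mem ha hj),
      Function.update_of_ne (ne_of_mem_of_not_mem hb hj)] at hab
    exact h ha hb hab

/-- Extend a valid orientation on `E'` by one more edge `j₀`, oriented from `x` to `y`. -/
lemma extend_orient {r n : ℕ} (f g : Fin r → Fin n) (E' : Finset (Fin r)) (j₀ : Fin r)
    (hj₀ : j₀ ∉ E') (s' : Fin r → Bool)
    (h1 : Set.InjOn (fun j => if s' j then g j else f j) E')
    (h2 : Set.InjOn (fun j => if s' j then f j else g j) E')
    (x y : Fin n)
    (hxy : (f j₀ = x ∧ g j₀ = y) ∨ (f j₀ = y ∧ g j₀ = x))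
    (hx : ∀ j ∈ E', (if s' j then g j else f j) ≠ x)
    (hy : ∀ j ∈ E', (if s' j then f j else g j) ≠ y) :
    ∃ s : Fin r → Bool,
      Set.InjOn (fun j => if s j then g j else f j) (insert j₀ (E' : Set (Fin r))) ∧
      Set.InjOn (fun j => if s j then f j else g j) (insert j₀ (E' : Set (Fin r))) := by
  have hj₀' : j₀ ∉ (E' : Set (Fin r)) := fun h => hj₀ (Finset.mem_coe.mp h)
  classical
  set bval : Bool := if f j₀ = x ∧ g j₀ = y then false else true with hbval
  refine ⟨Function.update s' j₀ bval, ?_, ?_⟩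
  · have heq : (fun j => if Function.update s' j₀ bval j then g j else f j)
        = Function.update (fun j => if s' j then g j else f j) j₀ x := by
      funext j
      by_cases hj : j = j₀
      · rw [hj]
        simp only [Function.update_self]
        by_cases hc : f j₀ = x ∧ g j₀ = y
        · rw [hbval, if_pos hc]
          simpa using hc.1
        · rw [hbval, if_neg hc]
          rcases hxy with h' | ⟨hf, hg⟩
          · exact absurd h' hc
          · simpa using hg
      · simp [Function.update_of_ne hj]
    rw [heq]
    exact injOn_update_insert _ _ _ _ hj₀' h1 (fun j hj => hx j (Finset.mem_coe.mp hj))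
  · have heq : (fun j => if Function.update s' j₀ bval j then f j else g j)
        = Function.update (fun j => if s' j then f j else g j) j₀ y := by
      funext j
      by_cases hj : j = j₀
      · rw [hj]
        simp only [Function.update_self]
        by_cases hc : f j₀ = x ∧ g j₀ = y
        · rw [hbval, if_pos hc]
          simpa using hc.2
        · rw [hbval, if_neg hc]
          rcases hxy with h' | ⟨hf, hg⟩
          · exact absurd h' hc
          · simpa using hf
      · simp [Function.update_of_ne hj]
    rw [heq]
    exact injOn_update_insert _ _ _ _ hj₀' h2 (fun j hj => hy j (Finset.mem_coe.mp hj))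



/-- If a column `v` has degree at most 1 among the edges of `E'`, then for any
orientation `s'`, `v` is avoided by all "first" endpoints or by all "second" endpoints. -/
lemma free_dir {r n : ℕ} (f g : Fin r → Fin n) (E' : Finset (Fin r)) (s' : Fin r → Bool)
    (v : Fin n)
    (hdeg : (E'.filter (fun j => f j = v)).card + (E'.filter (fun j => g j = v)).card ≤ 1) :
    (∀ j ∈ E', (if s' j then g j else f j) ≠ v) ∨
    (∀ j ∈ E', (if s' j then f j else g j) ≠ v) := by
  by_contra h
  push_neg at h
  obtain ⟨⟨j₁, hj₁, e₁⟩, ⟨j₂, hj₂, e₂⟩⟩ := h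
  have mem_union : ∀ j ∈ E', ((if s' j then g j else f j) = v ∨ (if s' j then f j else g j) = v) →
      j ∈ (E'.filter (fun j => f j = v)) ∪ (E'.filter (fun j => g j = v)) := by
    intro j hj he
    cases hs : s' j <;> simp [hs] at he <;> rcases he with he | he <;>
      simp [Finset.mem_union, Finset.mem_filter, hj, he]
  by_cases hj : j₁ = j₂
  · subst hj
    have hfg : f j₁ = v ∧ g j₁ = v := by
      cases hs : s' j₁ <;> simp [hs] at e₁ e₂ <;> exact ⟨by assumption, by assumption⟩
    have h1 : j₁ ∈ E'.filter (fun j => f j = v) := Finset.mem_filter.mpr ⟨hj₁, hfg.1⟩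
    have h2 : j₁ ∈ E'.filter (fun j => g j = v) := Finset.mem_filter.mpr ⟨hj₁, hfg.2⟩
    have c1 : 1 ≤ (E'.filter (fun j => f j = v)).card := Finset.card_pos.mpr ⟨j₁, h1⟩
    have c2 : 1 ≤ (E'.filter (fun j => g j = v)).card := Finset.card_pos.mpr ⟨j₁, h2⟩
    omega
  · have m1 := mem_union j₁ hj₁ (Or.inl e₁)
    have m2 := mem_union j₂ hj₂ (Or.inr e₂)
    have hsub : ({j₁, j₂} : Finset (Fin r)) ⊆
        (E'.filter (fun j => f j = v)) ∪ (E'.filter (fun j => g j = v)) := by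
      intro a ha
      rcases Finset.mem_insert.mp ha with rfl | ha
      · exact m1
      · rw [Finset.mem_singleton.mp ha]; exact m2
    have h2le := Finset.card_le_card hsub
    rw [Finset.card_pair hj] at h2le
    have := Finset.card_union_le (E'.filter (fun j => f j = v)) (E'.filter (fun j => g j = v))
    omega

/-- Main orientation lemma. -/
lemma orient_on {r n : ℕ} (f g : Fin r → Fin n) (E : Finset (Fin r))
    (hdeg : ∀ k, (E.filter (fun j => f j = k)).card + (E.filter (fun j => g j = k)).card ≤ 2) :
    ∃ s : Fin r → Bool,
      Set.InjOn (fun j => if s j then g j else f j) E ∧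
      Set.InjOn (fun j => if s j then f j else g j) E := by
  classical
  induction E using Finset.strongInduction with
  | _ E ih =>
  rcases E.eq_empty_or_nonempty with rfl | hne
  · exact ⟨fun _ => true, by simp, by simp⟩
  -- generic helpers
  have one_mem : ∀ (p : Fin r → Prop) [DecidablePred p] (a : Fin r), a ∈ E → p a →
      1 ≤ (E.filter p).card := by
    intro p _ a ha hpa
    exact Finset.card_pos.mpr ⟨a, Finset.mem_filter.mpr ⟨ha, hpa⟩⟩
  have two_mem : ∀ (p : Fin r → Prop) [DecidablePred p] (a b : Fin r), a ∈ E → b ∈ E →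
      a ≠ b → p a → p b → 2 ≤ (E.filter p).card := by
    intro p _ a b ha hb hab hpa hpb
    have hsub : ({a, b} : Finset (Fin r)) ⊆ E.filter p := by
      intro c hc
      rcases Finset.mem_insert.mp hc with rfl | hc
      · exact Finset.mem_filter.mpr ⟨ha, hpa⟩
      · rw [Finset.mem_singleton.mp hc]; exact Finset.mem_filter.mpr ⟨hb, hpb⟩
    have := Finset.card_le_card hsub
    rwa [Finset.card_pair hab] at this
  have filter_erase : ∀ (p : Fin r → Prop) [DecidablePred p] (a : Fin r),
      (E.erase a).filter p = (E.filter p).erase a := by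
    intro p _ a
    ext b
    simp only [Finset.mem_filter, Finset.mem_erase]
    tauto
  have empty_filter : ∀ (p : Fin r → Prop) [DecidablePred p] (E' : Finset (Fin r)),
      (E'.filter p).card = 0 → ∀ j ∈ E', ¬ p j := by
    intro p _ E' h j hj hpj
    have hmem : j ∈ E'.filter p := Finset.mem_filter.mpr ⟨hj, hpj⟩
    rw [Finset.card_eq_zero] at h
    simp [h] at hmem
  -- the closing step, common to all cases
  have finish : ∀ j₀ ∈ E,
      (∀ s' : Fin r → Bool,
        Set.InjOn (fun j => if s' j then g j else f j) ↑(E.erase j₀) →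
        Set.InjOn (fun j => if s' j then f j else g j) ↑(E.erase j₀) →
        ∃ x y, ((f j₀ = x ∧ g j₀ = y) ∨ (f j₀ = y ∧ g j₀ = x)) ∧
          (∀ j ∈ E.erase j₀, (if s' j then g j else f j) ≠ x) ∧
          (∀ j ∈ E.erase j₀, (if s' j then f j else g j) ≠ y)) →
      ∃ s : Fin r → Bool,
        Set.InjOn (fun j => if s j then g j else f j) ↑E ∧
        Set.InjOn (fun j => if s j then f j else g j) ↑E := by
    intro j₀ hj₀E hchoice
    have hj₀E' : j₀ ∉ E.erase j₀ := Finset.notMem_erase _ _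
    have hsub : E.erase j₀ ⊂ E := Finset.erase_ssubset hj₀E
    have hdeg' : ∀ k, ((E.erase j₀).filter (fun j => f j = k)).card
        + ((E.erase j₀).filter (fun j => g j = k)).card ≤ 2 := by
      intro k
      have h1 := Finset.card_le_card
        (Finset.filter_subset_filter (fun j => f j = k) (Finset.erase_subset j₀ E))
      have h2 := Finset.card_le_card
        (Finset.filter_subset_filter (fun j => g j = k) (Finset.erase_subset j₀ E))
      have := hdeg k
      omega
    obtain ⟨s', h1, h2⟩ := ih _ hsub hdeg'
    obtain ⟨x, y, hxy, hx, hy⟩ := hchoice s' h1 h2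
    obtain ⟨s, hs1, hs2⟩ := extend_orient f g _ j₀ hj₀E' s' h1 h2 x y hxy hx hy
    rw [← Finset.insert_erase hj₀E, Finset.coe_insert]
    exact ⟨s, hs1, hs2⟩
  by_cases hloop : ∃ j ∈ E, f j = g j
  · -- Case A: a loop
    obtain ⟨j₀, hj₀E, hl⟩ := hloop
    apply finish j₀ hj₀E
    intro s' h1 h2
    have untouched : ∀ j ∈ E.erase j₀, f j ≠ f j₀ ∧ g j ≠ f j₀ := by
      intro j hj
      have hjE : j ∈ E := Finset.mem_of_mem_erase hj
      have hjne : j ≠ j₀ := Finset.ne_of_mem_erase hj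
      have hd := hdeg (f j₀)
      constructor
      · intro hc
        have := two_mem (fun i => f i = f j₀) j j₀ hjE hj₀E hjne hc rfl
        have := one_mem (fun i => g i = f j₀) j₀ hj₀E hl.symm
        omega
      · intro hc
        have := two_mem (fun i => g i = f j₀) j j₀ hjE hj₀E hjne hc hl.symm
        have := one_mem (fun i => f i = f j₀) j₀ hj₀E rfl
        omega
    refine ⟨f j₀, f j₀, Or.inl ⟨rfl, hl.symm⟩, ?_, ?_⟩
    · intro j hj
      cases hs : s' j <;> simp only [hs, Bool.false_eq_true, if_true, if_false]
      · exact (untouched j hj).1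
      · exact (untouched j hj).2
    · intro j hj
      cases hs : s' j <;> simp only [hs, Bool.false_eq_true, if_true, if_false]
      · exact (untouched j hj).2
      · exact (untouched j hj).1
  · -- no loops
    have hnoloop : ∀ j ∈ E, f j ≠ g j := by
      intro j hj hc; exact hloop ⟨j, hj, hc⟩
    by_cases hd1 : ∃ j ∈ E,
        ((E.filter (fun i => f i = f j)).card + (E.filter (fun i => g i = f j)).card = 1) ∨
        ((E.filter (fun i => f i = g j)).card + (E.filter (fun i => g i = g j)).card = 1)
    · -- Case B: an endpoint of degree 1
      obtain ⟨j₀, hj₀E, hu⟩ := hd1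
      apply finish j₀ hj₀E
      intro s' h1 h2
      rcases hu with hu | hu
      · -- deg (f j₀) = 1
        have untouched : ∀ j ∈ E.erase j₀, f j ≠ f j₀ ∧ g j ≠ f j₀ := by
          intro j hj
          have hjE : j ∈ E := Finset.mem_of_mem_erase hj
          have hjne : j ≠ j₀ := Finset.ne_of_mem_erase hj
          constructor
          · intro hc
            have := two_mem (fun i => f i = f j₀) j j₀ hjE hj₀E hjne hc rfl
            omega
          · intro hc
            have := one_mem (fun i => f i = f j₀) j₀ hj₀E rfl
            have := one_mem (fun i => g i = f j₀) j hjE hc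
            omega
        have hvdeg : ((E.erase j₀).filter (fun i => f i = g j₀)).card
            + ((E.erase j₀).filter (fun i => g i = g j₀)).card ≤ 1 := by
          rw [filter_erase, filter_erase]
          have hm : j₀ ∈ E.filter (fun i => g i = g j₀) := Finset.mem_filter.mpr ⟨hj₀E, rfl⟩
          have h1c := Finset.card_erase_of_mem hm
          have h2c := Finset.card_le_card
            (Finset.erase_subset j₀ (E.filter (fun i => f i = g j₀)))
          have := hdeg (g j₀)
          have := one_mem (fun i => g i = g j₀) j₀ hj₀E rfl
          omega
        rcases free_dir f g (E.erase j₀) s' (g j₀) hvdeg with hfree | hfree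
        · refine ⟨g j₀, f j₀, Or.inr ⟨rfl, rfl⟩, hfree, ?_⟩
          intro j hj
          cases hs : s' j <;> simp only [hs, Bool.false_eq_true, if_true, if_false]
          · exact (untouched j hj).2
          · exact (untouched j hj).1
        · refine ⟨f j₀, g j₀, Or.inl ⟨rfl, rfl⟩, ?_, hfree⟩
          intro j hj
          cases hs : s' j <;> simp only [hs, Bool.false_eq_true, if_true, if_false]
          · exact (untouched j hj).1
          · exact (untouched j hj).2
      · -- deg (g j₀) = 1
        have untouched : ∀ j ∈ E.erase j₀, f j ≠ g j₀ ∧ g j ≠ g j₀ := by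
          intro j hj
          have hjE : j ∈ E := Finset.mem_of_mem_erase hj
          have hjne : j ≠ j₀ := Finset.ne_of_mem_erase hj
          constructor
          · intro hc
            have := one_mem (fun i => g i = g j₀) j₀ hj₀E rfl
            have := one_mem (fun i => f i = g j₀) j hjE hc
            omega
          · intro hc
            have := two_mem (fun i => g i = g j₀) j j₀ hjE hj₀E hjne hc rfl
            omega
        have hvdeg : ((E.erase j₀).filter (fun i => f i = f j₀)).card
            + ((E.erase j₀).filter (fun i => g i = f j₀)).card ≤ 1 := by
          rw [filter_erase, filter_erase]
          have hm : j₀ ∈ E.filter (fun i => f i = f j₀) := Finset.mem_filter.mpr ⟨hj₀E, rfl⟩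
          have h1c := Finset.card_erase_of_mem hm
          have h2c := Finset.card_le_card
            (Finset.erase_subset j₀ (E.filter (fun i => g i = f j₀)))
          have := hdeg (f j₀)
          have := one_mem (fun i => f i = f j₀) j₀ hj₀E rfl
          omega
        rcases free_dir f g (E.erase j₀) s' (f j₀) hvdeg with hfree | hfree
        · refine ⟨f j₀, g j₀, Or.inl ⟨rfl, rfl⟩, hfree, ?_⟩
          intro j hj
          cases hs : s' j <;> simp only [hs, Bool.false_eq_true, if_true, if_false]
          · exact (untouched j hj).2
          · exact (untouched j hj).1
        · refine ⟨g j₀, f j₀, Or.inr ⟨rfl, rfl⟩, ?_, hfree⟩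
          intro j hj
          cases hs : s' j <;> simp only [hs, Bool.false_eq_true, if_true, if_false]
          · exact (untouched j hj).1
          · exact (untouched j hj).2
    · -- Case C: all degrees 0 or 2
      push_neg at hd1
      have deg02 : ∀ k, ((E.filter (fun i => f i = k)).card + (E.filter (fun i => g i = k)).card = 0)
          ∨ ((E.filter (fun i => f i = k)).card + (E.filter (fun i => g i = k)).card = 2) := by
        intro k
        by_cases h0 : (E.filter (fun i => f i = k)).card + (E.filter (fun i => g i = k)).card = 0
        · exact Or.inl h0
        · right
          have hpos : 0 < (E.filter (fun i => f i = k)).card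
              ∨ 0 < (E.filter (fun i => g i = k)).card := by omega
          have hne1 : (E.filter (fun i => f i = k)).card + (E.filter (fun i => g i = k)).card ≠ 1 := by
            rcases hpos with hp | hp
            · obtain ⟨j, hj⟩ := Finset.card_pos.mp hp
              obtain ⟨hjE, hjk⟩ := Finset.mem_filter.mp hj
              have := (hd1 j hjE).1
              rw [hjk] at this
              exact this
            · obtain ⟨j, hj⟩ := Finset.card_pos.mp hp
              obtain ⟨hjE, hjk⟩ := Finset.mem_filter.mp hj
              have := (hd1 j hjE).2
              rw [hjk] at this
              exact this
          have := hdeg k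
          omega
      obtain ⟨j₀, hj₀E⟩ := hne
      apply finish j₀ hj₀E
      intro s' h1 h2
      have huv : f j₀ ≠ g j₀ := hnoloop j₀ hj₀E
      -- degrees within E' := E.erase j₀
      have hdegu : ((E.erase j₀).filter (fun i => f i = f j₀)).card
          + ((E.erase j₀).filter (fun i => g i = f j₀)).card = 1 := by
        rw [filter_erase, filter_erase]
        have hm : j₀ ∈ E.filter (fun i => f i = f j₀) := Finset.mem_filter.mpr ⟨hj₀E, rfl⟩
        have hnm : j₀ ∉ E.filter (fun i => g i = f j₀) := by
          intro hmem
          exact huv ((Finset.mem_filter.mp hmem).2).symm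
        have h1c := Finset.card_erase_of_mem hm
        have h2c : (E.filter (fun i => g i = f j₀)).erase j₀ = E.filter (fun i => g i = f j₀) :=
          Finset.erase_eq_of_notMem hnm
        have hd := deg02 (f j₀)
        have := one_mem (fun i => f i = f j₀) j₀ hj₀E rfl
        rw [h2c]
        omega
      have hdegv : ((E.erase j₀).filter (fun i => f i = g j₀)).card
          + ((E.erase j₀).filter (fun i => g i = g j₀)).card = 1 := by
        rw [filter_erase, filter_erase]
        have hm : j₀ ∈ E.filter (fun i => g i = g j₀) := Finset.mem_filter.mpr ⟨hj₀E, rfl⟩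
        have hnm : j₀ ∉ E.filter (fun i => f i = g j₀) := by
          intro hmem
          exact huv ((Finset.mem_filter.mp hmem).2)
        have h1c := Finset.card_erase_of_mem hm
        have h2c : (E.filter (fun i => f i = g j₀)).erase j₀ = E.filter (fun i => f i = g j₀) :=
          Finset.erase_eq_of_notMem hnm
        have hd := deg02 (g j₀)
        have := one_mem (fun i => g i = g j₀) j₀ hj₀E rfl
        rw [h2c]
        omega
      have hdegother : ∀ k, k ≠ f j₀ → k ≠ g j₀ →
          ((E.erase j₀).filter (fun i => f i = k)).card
            + ((E.erase j₀).filter (fun i => g i = k)).card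
          = (E.filter (fun i => f i = k)).card + (E.filter (fun i => g i = k)).card := by
        intro k hku hkv
        rw [filter_erase, filter_erase]
        rw [Finset.erase_eq_of_notMem, Finset.erase_eq_of_notMem]
        · intro hmem; exact hkv ((Finset.mem_filter.mp hmem).2).symm
        · intro hmem; exact hku ((Finset.mem_filter.mp hmem).2).symm
      -- out/in counts
      set E' := E.erase j₀ with hE'
      have houtinn : ∀ k,
          (E'.filter (fun j => (if s' j then g j else f j) = k)).card
            + (E'.filter (fun j => (if s' j then f j else g j) = k)).card
          = (E'.filter (fun j => f j = k)).card + (E'.filter (fun j => g j = k)).card := by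
        intro k
        simp only [Finset.card_filter]
        rw [← Finset.sum_add_distrib, ← Finset.sum_add_distrib]
        apply Finset.sum_congr rfl
        intro j _
        cases hs : s' j <;> by_cases hfk : f j = k <;> by_cases hgk : g j = k <;>
          simp [hs, hfk, hgk]
      have houtle : ∀ k, (E'.filter (fun j => (if s' j then g j else f j) = k)).card ≤ 1 := by
        intro k
        rw [Finset.card_le_one]
        intro a ha b hb
        exact h1 (Finset.mem_coe.mpr (Finset.mem_filter.mp ha).1)
          (Finset.mem_coe.mpr (Finset.mem_filter.mp hb).1)
          ((Finset.mem_filter.mp ha).2.trans (Finset.mem_filter.mp hb).2.symm)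
      have hinnle : ∀ k, (E'.filter (fun j => (if s' j then f j else g j) = k)).card ≤ 1 := by
        intro k
        rw [Finset.card_le_one]
        intro a ha b hb
        exact h2 (Finset.mem_coe.mpr (Finset.mem_filter.mp ha).1)
          (Finset.mem_coe.mpr (Finset.mem_filter.mp hb).1)
          ((Finset.mem_filter.mp ha).2.trans (Finset.mem_filter.mp hb).2.symm)
      have hsumout : ∑ k, (E'.filter (fun j => (if s' j then g j else f j) = k)).card = E'.card :=
        (Finset.card_eq_sum_card_fiberwise (fun j _ => Finset.mem_univ _)).symm
      have hsuminn : ∑ k, (E'.filter (fun j => (if s' j then f j else g j) = k)).card = E'.card :=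
        (Finset.card_eq_sum_card_fiberwise (fun j _ => Finset.mem_univ _)).symm
      -- off {u,v}, out = in
      have hoffeq : ∀ k ∈ (Finset.univ : Finset (Fin n)) \ {f j₀, g j₀},
          (E'.filter (fun j => (if s' j then g j else f j) = k)).card
          = (E'.filter (fun j => (if s' j then f j else g j) = k)).card := by
        intro k hk
        simp only [Finset.mem_sdiff, Finset.mem_insert, Finset.mem_singleton] at hk
        push_neg at hk
        obtain ⟨-, hku, hkv⟩ := hk
        have h1 := houtinn k
        have h2 := hdegother k hku hkv
        have h3 := deg02 k
        have h4 := houtle k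
        have h5 := hinnle k
        omega
      have hkey : (E'.filter (fun j => (if s' j then g j else f j) = f j₀)).card
            + (E'.filter (fun j => (if s' j then g j else f j) = g j₀)).card
          = (E'.filter (fun j => (if s' j then f j else g j) = f j₀)).card
            + (E'.filter (fun j => (if s' j then f j else g j) = g j₀)).card := by
        have hsub : ({f j₀, g j₀} : Finset (Fin n)) ⊆ Finset.univ := Finset.subset_univ _
        have hA : ∑ k ∈ (Finset.univ : Finset (Fin n)) \ {f j₀, g j₀},
              (E'.filter (fun j => (if s' j then g j else f j) = k)).card
            + ∑ k ∈ ({f j₀, g j₀} : Finset (Fin n)),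
              (E'.filter (fun j => (if s' j then g j else f j) = k)).card
            = ∑ k, (E'.filter (fun j => (if s' j then g j else f j) = k)).card :=
          Finset.sum_sdiff hsub
        have hB : ∑ k ∈ (Finset.univ : Finset (Fin n)) \ {f j₀, g j₀},
              (E'.filter (fun j => (if s' j then f j else g j) = k)).card
            + ∑ k ∈ ({f j₀, g j₀} : Finset (Fin n)),
              (E'.filter (fun j => (if s' j then f j else g j) = k)).card
            = ∑ k, (E'.filter (fun j => (if s' j then f j else g j) = k)).card :=
          Finset.sum_sdiff hsub
        have hC : ∑ k ∈ (Finset.univ : Finset (Fin n)) \ {f j₀, g j₀},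
              (E'.filter (fun j => (if s' j then g j else f j) = k)).card
            = ∑ k ∈ (Finset.univ : Finset (Fin n)) \ {f j₀, g j₀},
              (E'.filter (fun j => (if s' j then f j else g j) = k)).card :=
          Finset.sum_congr rfl hoffeq
        have hpair1 : ∑ k ∈ ({f j₀, g j₀} : Finset (Fin n)),
              (E'.filter (fun j => (if s' j then g j else f j) = k)).card
            = (E'.filter (fun j => (if s' j then g j else f j) = f j₀)).card
              + (E'.filter (fun j => (if s' j then g j else f j) = g j₀)).card :=
          Finset.sum_pair huv
        have hpair2 : ∑ k ∈ ({f j₀, g j₀} : Finset (Fin n)),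
              (E'.filter (fun j => (if s' j then f j else g j) = k)).card
            = (E'.filter (fun j => (if s' j then f j else g j) = f j₀)).card
              + (E'.filter (fun j => (if s' j then f j else g j) = g j₀)).card :=
          Finset.sum_pair huv
        omega
      -- balance equations at u and v
      have hbalu := houtinn (f j₀)
      have hbalv := houtinn (g j₀)
      by_cases hcase : (E'.filter (fun j => (if s' j then g j else f j) = f j₀)).card = 0
      · -- orient j₀ as f j₀ → g j₀
        have hinnv0 : (E'.filter (fun j => (if s' j then f j else g j) = g j₀)).card = 0 := by
          have := houtle (g j₀); have := hinnle (f j₀); omega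
        refine ⟨f j₀, g j₀, Or.inl ⟨rfl, rfl⟩, ?_, ?_⟩
        · intro j hj heq
          exact empty_filter _ E' hcase j hj heq
        · intro j hj heq
          exact empty_filter _ E' hinnv0 j hj heq
      · -- orient j₀ as g j₀ → f j₀
        have hout1 : (E'.filter (fun j => (if s' j then g j else f j) = f j₀)).card = 1 := by
          have := houtle (f j₀); omega
        have houtv0 : (E'.filter (fun j => (if s' j then g j else f j) = g j₀)).card = 0 := by
          have := hinnle (g j₀); have := hinnle (f j₀); have := houtle (g j₀); omega
        have hinnu0 : (E'.filter (fun j => (if s' j then f j else g j) = f j₀)).card = 0 := by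
          have := hinnle (f j₀); omega
        refine ⟨g j₀, f j₀, Or.inr ⟨rfl, rfl⟩, ?_, ?_⟩
        · intro j hj heq
          exact empty_filter _ E' houtv0 j hj heq
        · intro j hj heq
          exact empty_filter _ E' hinnu0 j hj heq

/-- For `1 ≤ r ≤ n`, if `V₁` is an improper vote and `V₂` is a proper
vote such that `V₁ + V₂` has all entries nonnegative, then `V₁ + V₂` is also the sum of
two proper votes. -/
theorem improper_plus_proper_eq_sum_of_proper
    (r n : ℕ) (hr : 1 ≤ r) (hrn : r ≤ n)
    (V₁ V₂ : Matrix (Fin r) (Fin n) ℤ)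
    (h₁ : IsImproperVote r n V₁) (h₂ : IsProperVote r n V₂)
    (hpos : ∀ j k, 0 ≤ (V₁ + V₂) j k) :
    ∃ W₁ W₂ : Matrix (Fin r) (Fin n) ℤ,
      IsProperVote r n W₁ ∧ IsProperVote r n W₂ ∧ W₁ + W₂ = V₁ + V₂ := by
  classical
  have rowsum : ∀ j, ∑ k, (V₁ + V₂) j k = 2 := by
    intro j
    simp only [Matrix.add_apply, Finset.sum_add_distrib]
    rw [h₁.1 j, h₂.2.1 j]
    norm_num
  have hrow : ∀ j, ∃ a b, ∀ k,
      (V₁ + V₂) j k = (if a = k then 1 else 0) + (if b = k then 1 else 0) :=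
    fun j => sum_two_vec _ (hpos j) (rowsum j)
  choose f g hfg using hrow
  have hdeg : ∀ k, ((Finset.univ : Finset (Fin r)).filter (fun j => f j = k)).card
      + ((Finset.univ : Finset (Fin r)).filter (fun j => g j = k)).card ≤ 2 := by
    intro k
    have hcol : ∑ j, (V₁ + V₂) j k ≤ 2 := by
      simp only [Matrix.add_apply, Finset.sum_add_distrib]
      rcases h₁.2.1 k with h | h <;> rcases h₂.2.2 k with h' | h' <;> rw [h, h'] <;> norm_num
    have hexp : ∑ j, (V₁ + V₂) j k
        = (((Finset.univ : Finset (Fin r)).filter (fun j => f j = k)).card : ℤ)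
          + (((Finset.univ : Finset (Fin r)).filter (fun j => g j = k)).card : ℤ) := by
      rw [← Finset.sum_boole, ← Finset.sum_boole, ← Finset.sum_add_distrib]
      exact Finset.sum_congr rfl (fun j _ => hfg j k)
    rw [hexp] at hcol
    exact_mod_cast hcol
  obtain ⟨s, hI1, hI2⟩ := orient_on f g Finset.univ hdeg
  set fst : Fin r → Fin n := fun j => if s j then g j else f j with hfstdef
  set snd : Fin r → Fin n := fun j => if s j then f j else g j with hsnddef
  have hcard1 : ∀ k, ((Finset.univ : Finset (Fin r)).filter (fun j => fst j = k)).card ≤ 1 := by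
    intro k
    rw [Finset.card_le_one]
    intro a ha b hb
    exact hI1 (by simp) (by simp)
      ((Finset.mem_filter.mp ha).2.trans (Finset.mem_filter.mp hb).2.symm)
  have hcard2 : ∀ k, ((Finset.univ : Finset (Fin r)).filter (fun j => snd j = k)).card ≤ 1 := by
    intro k
    rw [Finset.card_le_one]
    intro a ha b hb
    exact hI2 (by simp) (by simp)
      ((Finset.mem_filter.mp ha).2.trans (Finset.mem_filter.mp hb).2.symm)
  refine ⟨fun j k => if fst j = k then 1 else 0, fun j k => if snd j = k then 1 else 0,
    ⟨?_, ?_, ?_⟩, ⟨?_, ?_, ?_⟩, ?_⟩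
  · intro j k; by_cases h : fst j = k <;> simp [h]
  · intro j; simp
  · intro k
    have hsum : ∑ j, (if fst j = k then (1:ℤ) else 0)
        = (((Finset.univ : Finset (Fin r)).filter (fun j => fst j = k)).card : ℤ) := by
      rw [Finset.sum_boole]
    have := hcard1 k
    rw [hsum]
    omega
  · intro j k; by_cases h : snd j = k <;> simp [h]
  · intro j; simp
  · intro k
    have hsum : ∑ j, (if snd j = k then (1:ℤ) else 0)
        = (((Finset.univ : Finset (Fin r)).filter (fun j => snd j = k)).card : ℤ) := by
      rw [Finset.sum_boole]
    have := hcard2 k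
    rw [hsum]
    omega
  · funext j k
    show (if fst j = k then (1:ℤ) else 0) + (if snd j = k then 1 else 0) = (V₁ + V₂) j k
    rw [hfg j k]
    cases hs : s j <;> simp [hfstdef, hsnddef, hs] <;> ring
end

section
/- Let 1 ≤ r ≤ n. Let V₁ be an improper vote whose row j has entries 1 in columns b and c and entry −1 in column a, where a, b, c are distinct candidates in {1,…,n}, and let V₂ be a proper vote with entry 1 at cell (j', a) for some position j' ≠ j and entry 1 at cell (j, d) for some candidate d ≠ a. Then there exist an improper vote V₁' and a proper vote V₂' with V₁' + V₂' = V₁ + V₂ such that V₁' has entry 1 at cell (j', a), and row j of V₁' has entry −1 in column a and entries 1 in exactly two columns forming one of the sets {b,c}, {b,d}, or {c,d}. -/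
open Relation

lemma detComparable {α : Type*} {R : α → α → Prop}
    (hdet : ∀ {x y z}, R x y → R x z → y = z) :
    ∀ {a b c : α}, ReflTransGen R a b → ReflTransGen R a c →
      ReflTransGen R b c ∨ ReflTransGen R c b := by
  intro a b c hab
  induction hab using ReflTransGen.head_induction_on with
  | refl => intro hac; exact Or.inl hac
  | head hxy hyb ih =>
    intro hac
    rcases hac.cases_head with rfl | ⟨w, hxw, hwc⟩
    · exact Or.inr (ReflTransGen.head hxy hyb)
    · exact ih (by rw [hdet hxy hxw]; exact hwc)

lemma codetComparable {α : Type*} {R : α → α → Prop}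
    (hco : ∀ {x y z}, R x z → R y z → x = y) :
    ∀ {a b c : α}, ReflTransGen R a c → ReflTransGen R b c →
      ReflTransGen R a b ∨ ReflTransGen R b a := by
  intro a b c hac hbc
  have h := detComparable (R := Function.swap R)
    (fun {x y z} h1 h2 => hco h1 h2)
    (Relation.reflTransGen_swap.mpr hac) (Relation.reflTransGen_swap.mpr hbc)
  rcases h with h | h
  · exact Or.inr (Relation.reflTransGen_swap.mp h)
  · exact Or.inl (Relation.reflTransGen_swap.mp h)


lemma unit_of {n : ℕ} (f : Fin n → ℤ) (h01 : ∀ k, f k = 0 ∨ f k = 1)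
    (hsum : ∑ k, f k = 1) : ∃ k₀, f k₀ = 1 ∧ ∀ k, k ≠ k₀ → f k = 0 := by
  have hex : ∃ k₀, f k₀ = 1 := by
    by_contra hcon; push_neg at hcon
    have hz : ∀ k, f k = 0 := fun k => (h01 k).resolve_right (hcon k)
    rw [Finset.sum_congr rfl (fun k _ => hz k), Finset.sum_const_zero] at hsum
    exact one_ne_zero hsum.symm
  obtain ⟨k₀, hk₀⟩ := hex
  refine ⟨k₀, hk₀, ?_⟩
  intro k hk
  by_contra hcon
  have hk1 : f k = 1 := (h01 k).resolve_left hcon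
  have hpair : ∑ x ∈ ({k, k₀} : Finset (Fin n)), f x = 2 := by
    rw [Finset.sum_pair hk, hk1, hk₀]; norm_num
  have hmono := Finset.sum_le_sum_of_subset_of_nonneg (f := f)
    (Finset.subset_univ ({k, k₀} : Finset (Fin n))) (fun i _ _ => by
      rcases h01 i with h | h <;> rw [h] <;> norm_num)
  rw [hpair, hsum] at hmono
  norm_num at hmono

lemma subset_le_sum {r : ℕ} (g : Fin r → ℤ) (s : Finset (Fin r))
    (hnn : ∀ i, i ∉ s → 0 ≤ g i) : ∑ i ∈ s, g i ≤ ∑ i, g i :=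
  Finset.sum_le_sum_of_subset_of_nonneg (f := g) (Finset.subset_univ s)
    (fun i _ hi => hnn i hi)

lemma pair_le_sum {r : ℕ} (g : Fin r → ℤ) (x y : Fin r) (hxy : x ≠ y)
    (hnn : ∀ i, i ≠ x → i ≠ y → 0 ≤ g i) : g x + g y ≤ ∑ i, g i := by
  have h := subset_le_sum g {x, y} (fun i hi => by
    simp only [Finset.mem_insert, Finset.mem_singleton] at hi
    push_neg at hi
    exact hnn i hi.1 hi.2)
  rwa [Finset.sum_pair hxy] at h

lemma colsum_unit {r n : ℕ} (g : Fin r → Fin n) (hg : Function.Injective g)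
    (k : Fin n) :
    ∑ i, (if k = g i then (1:ℤ) else 0) = if ∃ i, g i = k then 1 else 0 := by
  by_cases hex : ∃ i, g i = k
  · obtain ⟨i₀, hi₀⟩ := hex
    rw [if_pos ⟨i₀, hi₀⟩, Finset.sum_eq_single_of_mem i₀ (Finset.mem_univ i₀)]
    · rw [if_pos hi₀.symm]
    · intro i _ hi
      rw [if_neg]
      intro hk
      exact hi (hg (hk.symm.trans hi₀.symm))
  · rw [if_neg hex]
    apply Finset.sum_eq_zero
    intro i _
    rw [if_neg]
    intro hk
    exact hex ⟨i, hk.symm⟩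

lemma core {r n : ℕ} (σ τ : Fin r → Fin n) (j j' : Fin r) (a b c d p : Fin n)
    (F : Fin n → Prop)
    (hτinj : Function.Injective τ)
    (hτj : τ j = d) (hτj' : τ j' = a) (hjj' : j' ≠ j)
    (hσj' : σ j' = p) (hpa : p ≠ a)
    (hab : a ≠ b) (hac : a ≠ c) (hbc : b ≠ c) (hda : d ≠ a)
    (hσb : ∀ x, x ≠ j → σ x ≠ b) (hσc : ∀ x, x ≠ j → σ x ≠ c)
    (hσinj : ∀ x y, x ≠ j → y ≠ j → σ x = σ y → σ x ≠ a → x = y)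
    (hσa2 : ∀ x y z, x ≠ j → y ≠ j → z ≠ j → σ x = a → σ y = a → σ z = a →
      x = y ∨ x = z ∨ y = z)
    (hσa1 : ¬ F a → ∀ x y, x ≠ j → y ≠ j → σ x = a → σ y = a → x = y)
    (hFτ : ∀ k, F k → ∃ y, τ y = k)
    (hFσ : ∀ k, F k → k ≠ a → k ≠ b → k ≠ c → ∃ x, x ≠ j ∧ σ x = k)
    (hFa : F a → ∃ x y, x ≠ j ∧ y ≠ j ∧ x ≠ y ∧ σ x = a ∧ σ y = a) :
    ∃ t : Fin r → Fin n, Function.Injective t ∧ t j' = p ∧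
      (∀ i, i ≠ j → i ≠ j' → t i = σ i ∨ t i = τ i) ∧
      (t j = b ∨ t j = c ∨ t j = d) ∧ ((d = b ∨ d = c) → t j = d) ∧
      (∀ k, F k → ∃ i, t i = k) := by
  classical
  -- basic consequences
  have hτa : ∀ y, τ y = a → y = j' := fun y hy => hτinj (hy.trans hτj'.symm)
  have hτd : ∀ y, τ y = d → y = j := fun y hy => hτinj (hy.trans hτj.symm)
  -- forward and backward step relations
  set FwdR : Fin r → Fin r → Prop :=
    fun x y => τ y = σ x ∧ x ≠ j ∧ y ≠ j ∧ y ≠ j' with hFwdRdef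
  set BwdR : Fin r → Fin r → Prop :=
    fun y x => σ x = τ y ∧ F (τ y) ∧ τ y ≠ b ∧ τ y ≠ c ∧ y ≠ j ∧ y ≠ j' ∧ x ≠ j
    with hBwdRdef
  have fwd_det : ∀ {x y z}, FwdR x y → FwdR x z → y = z := by
    rintro x y z ⟨h1, -, -, -⟩ ⟨h2, -, -, -⟩
    exact hτinj (h1.trans h2.symm)
  have fwd_codet : ∀ {x y z}, FwdR x z → FwdR y z → x = y := by
    rintro x y z ⟨h1, hx, -, hz⟩ ⟨h2, hy, -, -⟩
    have hza : τ z ≠ a := fun h => hz (hτa z h)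
    exact hσinj x y hx hy (h1.symm.trans h2) (by rw [← h1]; exact hza)
  have bwd_det : ∀ {x y z}, BwdR x y → BwdR x z → y = z := by
    rintro x y z ⟨h1, -, -, -, -, hx, hy⟩ ⟨h2, -, -, -, -, -, hz⟩
    have hxa : τ x ≠ a := fun h => hx (hτa x h)
    exact hσinj y z hy hz (h1.trans h2.symm) (by rw [h1]; exact hxa)
  have bwd_codet : ∀ {x y z}, BwdR x z → BwdR y z → x = y := by
    rintro x y z ⟨h1, -, -, -, -, -, -⟩ ⟨h2, -, -, -, -, -, -⟩
    exact hτinj (h1.symm.trans h2)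
  -- orbits
  set FR : Fin r → Fin r → Prop := fun w x => ReflTransGen FwdR w x with hFRdef
  set BR : Fin r → Fin r → Prop := fun w x => ReflTransGen BwdR w x with hBRdef

  -- generic forward-orbit facts
  have fr_ne_j : ∀ {w x : Fin r}, w ≠ j → FR w x → x ≠ j := by
    intro w x hw h
    rcases h.cases_tail with rfl | ⟨u, -, hux⟩
    · exact hw
    · exact hux.2.2.1
  have fr_step : ∀ {w x y : Fin r}, w ≠ j → FR w x → τ y = σ x → y ≠ j → y ≠ j' →
      FR w y := by
    intro w x y hw hx h1 h2 h3
    exact hx.tail ⟨h1, fr_ne_j hw hx, h2, h3⟩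
  have fr_fiber : ∀ {w x y : Fin r}, FR w x → FR w y → x ≠ j → y ≠ j →
      σ x = a → σ y = a → x = y := by
    intro w x y hx hy hxj hyj hxa hya
    by_contra hne
    rcases detComparable (R := FwdR) (fun {x y z} h1 h2 => fwd_det h1 h2) hx hy with h | h
    · rcases h.cases_head with h' | ⟨u, hu, -⟩
      · exact hne h'
      · exact hu.2.2.2 (hτa u (hu.1.trans hxa))
    · rcases h.cases_head with h' | ⟨u, hu, -⟩
      · exact hne h'.symm
      · exact hu.2.2.2 (hτa u (hu.1.trans hya))
  -- generic backward-orbit facts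
  have br_ne_j : ∀ {w x : Fin r}, w ≠ j → BR w x → x ≠ j := by
    intro w x hw h
    rcases h.cases_tail with rfl | ⟨u, -, hux⟩
    · exact hw
    · exact hux.2.2.2.2.2.2
  have br_fiber : ∀ {w x : Fin r}, BR w x → σ x = a → x = w := by
    intro w x h hx
    rcases h.cases_tail with rfl | ⟨u, -, hux⟩
    · rfl
    · exact absurd (hτa u (hux.1.symm.trans hx)) hux.2.2.2.2.2.1
  have br_d : ∀ {w x : Fin r}, BR w x → σ x = d → x = w := by
    intro w x h hx
    rcases h.cases_tail with rfl | ⟨u, -, hux⟩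
    · rfl
    · exact absurd (hτd u (hux.1.symm.trans hx)) hux.2.2.2.2.1
  have br_step : ∀ {w x : Fin r}, BR w x → x ≠ j → x ≠ j' → F (τ x) → τ x ≠ b →
      τ x ≠ c → ∃ x', BR w x' ∧ σ x' = τ x := by
    intro w x hx hxj hxj' hF hb hc
    have hxa : τ x ≠ a := fun h => hxj' (hτa x h)
    obtain ⟨x', hx'j, hx'⟩ := hFσ (τ x) hF hxa hb hc
    exact ⟨x', hx.tail ⟨hx', hF, hb, hc, hxj, hxj', hx'j⟩, hx'⟩
  have br_disj : ∀ {i i' y : Fin r}, i ≠ i' → σ i = a → σ i' = a →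
      BR i y → BR i' y → False := by
    intro i i' y hne hia hi'a h1 h2
    rcases codetComparable (R := BwdR) (fun {x y z} h1 h2 => bwd_codet h1 h2) h1 h2 with h | h
    · rcases h.cases_tail with h' | ⟨u, -, hux⟩
      · exact hne h'.symm
      · exact hux.2.2.2.2.2.1 (hτa u (hux.1.symm.trans hi'a))
    · rcases h.cases_tail with h' | ⟨u, -, hux⟩
      · exact hne h'
      · exact hux.2.2.2.2.2.1 (hτa u (hux.1.symm.trans hia))
  have ebc : ∀ {i y y' : Fin r}, BR i y → BR i y' → τ y = b → τ y' = c → False := by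
    intro i y y' hy hy' hyb hy'c
    have hne : y ≠ y' := fun h' => hbc ((hyb.symm.trans (h' ▸ hy'c)))
    rcases detComparable (R := BwdR) (fun {x y z} h1 h2 => bwd_det h1 h2) hy hy' with h | h
    · rcases h.cases_head with h' | ⟨u, hu, -⟩
      · exact hne h'
      · exact hu.2.2.1 hyb
    · rcases h.cases_head with h' | ⟨u, hu, -⟩
      · exact hne h'.symm
      · exact hu.2.2.2.1 hy'c

  -- the main orbit from j'
  set O1 : Set (Fin r) := {x | FR j' x} with hO1def
  have hj'O1 : j' ∈ O1 := ReflTransGen.refl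
  have o1_ne_j : ∀ x ∈ O1, x ≠ j := fun x hx => fr_ne_j hjj' hx
  have o1_cov : ∀ y ∈ O1, y = j' ∨ ∃ x, x ∈ O1 ∧ σ x = τ y := by
    intro y hy
    rcases (hy : FR j' y).cases_tail with h | ⟨u, hu, hux⟩
    · left; exact h
    · right; exact ⟨u, hu, hux.1.symm⟩
  have o1_hs2 : ∀ x ∈ O1, ∀ y, τ y = σ x → y = j ∨ y = j' ∨ y ∈ O1 := by
    intro x hx y hyx
    by_cases h1 : y = j
    · left; exact h1
    by_cases h2 : y = j'
    · right; left; exact h2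
    right; right; exact fr_step hjj' hx hyx h1 h2
  -- orbits rooted at the τ-row of a column β ∉ {a,d}
  have oB_ne_j : ∀ {β : Fin n} {x : Fin r}, β ≠ d → (∃ u, τ u = β ∧ FR u x) →
      x ≠ j := by
    rintro β x hβ ⟨u, hu, hx⟩
    have huj : u ≠ j := fun h => hβ (by rw [← hu, h, hτj])
    exact fr_ne_j huj hx
  have oB_cov : ∀ {β : Fin n} {y : Fin r}, (∃ u, τ u = β ∧ FR u y) →
      τ y = β ∨ ∃ x, (∃ u, τ u = β ∧ FR u x) ∧ σ x = τ y := by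
    rintro β y ⟨u, hu, hy⟩
    rcases hy.cases_tail with rfl | ⟨w, hw, hwy⟩
    · left; exact hu
    · right; exact ⟨w, ⟨u, hu, hw⟩, hwy.1.symm⟩
  have oB_hs2 : ∀ {β : Fin n} {x : Fin r}, β ≠ d → (∃ u, τ u = β ∧ FR u x) →
      ∀ y, τ y = σ x → y = j ∨ y = j' ∨ (∃ u, τ u = β ∧ FR u y) := by
    rintro β x hβ ⟨u, hu, hx⟩ y hyx
    by_cases h1 : y = j
    · left; exact h1
    by_cases h2 : y = j'
    · right; left; exact h2
    have huj : u ≠ j := fun h => hβ (by rw [← hu, h, hτj])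
    right; right; exact ⟨u, hu, fr_step huj hx hyx h1 h2⟩
  -- backward-orbit coverage classification
  have sb_cov : ∀ {i y : Fin r}, i ≠ j → BR i y → F (τ y) →
      y = j' ∨ τ y = b ∨ τ y = c ∨ ∃ x, BR i x ∧ σ x = τ y := by
    intro i y hi hy hF
    by_cases h2 : y = j'
    · left; exact h2
    by_cases hb' : τ y = b
    · right; left; exact hb'
    by_cases hc' : τ y = c
    · right; right; left; exact hc'
    right; right; right
    exact br_step hy (br_ne_j hi hy) h2 hF hb' hc'
  have sb_hs2 : ∀ {i x : Fin r}, BR i x → ∀ y, τ y = σ x → x = i ∨ BR i y := by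
    intro i x hx y hyx
    rcases hx.cases_tail with rfl | ⟨u, hu, hux⟩
    · left; rfl
    · right
      have : y = u := hτinj (hyx.trans hux.1)
      rw [this]; exact hu
  have hpb : p ≠ b := fun h => hσb j' hjj' (by rw [hσj']; exact h)
  have hpc : p ≠ c := fun h => hσc j' hjj' (by rw [hσj']; exact h)
  -- the generic verification step
  have verif : ∀ (S : Set (Fin r)) (zv : Fin n),
      j' ∈ S → (∀ x ∈ S, x ≠ j) →
      (zv = b ∨ zv = c ∨ zv = d) → ((d = b ∨ d = c) → zv = d) →
      (∀ x ∈ S, σ x ≠ zv) →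
      (∀ y, y ≠ j → τ y = zv → y ∈ S) →
      (∀ x ∈ S, ∀ y ∈ S, σ x = a → σ y = a → x = y) →
      (∀ x ∈ S, ∀ y, τ y = σ x → y = j ∨ y ∈ S) →
      (∀ y ∈ S, F (τ y) → τ y = zv ∨ ∃ x, x ∈ S ∧ σ x = τ y) →
      (F d → zv = d ∨ ∃ x, x ∈ S ∧ σ x = d) →
      (F a → ∃ x, x ∈ S ∧ σ x = a) →
      ∃ t : Fin r → Fin n, Function.Injective t ∧ t j' = p ∧
        (∀ i, i ≠ j → i ≠ j' → t i = σ i ∨ t i = τ i) ∧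
        (t j = b ∨ t j = c ∨ t j = d) ∧ ((d = b ∨ d = c) → t j = d) ∧
        (∀ k, F k → ∃ i, t i = k) := by
    intro S zv hj'S hSnj hzv hpin hzvS hzvT hS1a hS2 hcov hcd hca
    set t : Fin r → Fin n := fun x => if x = j then zv else if x ∈ S then σ x else τ x
      with htdef
    have htj : t j = zv := if_pos rfl
    have htS : ∀ x, x ≠ j → x ∈ S → t x = σ x := by
      intro x h1 h2; simp only [htdef]; rw [if_neg h1, if_pos h2]
    have htT : ∀ x, x ≠ j → x ∉ S → t x = τ x := by
      intro x h1 h2; simp only [htdef]; rw [if_neg h1, if_neg h2]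
    refine ⟨t, ?_, ?_, ?_, ?_, ?_, ?_⟩
    · intro x y hxy
      by_cases hx : x = j <;> by_cases hy : y = j
      · rw [hx, hy]
      · exfalso; rw [hx, htj] at hxy
        by_cases hyS : y ∈ S
        · rw [htS y hy hyS] at hxy; exact hzvS y hyS hxy.symm
        · rw [htT y hy hyS] at hxy; exact hyS (hzvT y hy hxy.symm)
      · exfalso; rw [hy, htj] at hxy
        by_cases hxS : x ∈ S
        · rw [htS x hx hxS] at hxy; exact hzvS x hxS hxy
        · rw [htT x hx hxS] at hxy; exact hxS (hzvT x hx hxy)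
      · by_cases hxS : x ∈ S <;> by_cases hyS : y ∈ S
        · rw [htS x hx hxS, htS y hy hyS] at hxy
          by_cases hxa : σ x = a
          · exact hS1a x hxS y hyS hxa (hxy.symm.trans hxa)
          · exact hσinj x y hx hy hxy hxa
        · rw [htS x hx hxS, htT y hy hyS] at hxy
          rcases hS2 x hxS y hxy.symm with h | h
          · exact absurd h hy
          · exact absurd h hyS
        · rw [htT x hx hxS, htS y hy hyS] at hxy
          rcases hS2 y hyS x hxy with h | h
          · exact absurd h hx
          · exact absurd h hxS
        · rw [htT x hx hxS, htT y hy hyS] at hxy; exact hτinj hxy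
    · rw [htS j' hjj' hj'S, hσj']
    · intro i hij hij'
      by_cases hiS : i ∈ S
      · left; exact htS i hij hiS
      · right; exact htT i hij hiS
    · rcases hzv with h | h | h
      · left; rw [htj, h]
      · right; left; rw [htj, h]
      · right; right; rw [htj, h]
    · intro hp; rw [htj]; exact hpin hp
    · intro k hFk
      obtain ⟨y, hy⟩ := hFτ k hFk
      by_cases hyj : y = j
      · have hkd : d = k := by rw [← hτj, ← hy, hyj]
        rcases hcd (by rw [hkd]; exact hFk) with h | ⟨x, hxS, hxd⟩
        · exact ⟨j, by rw [htj, h, hkd]⟩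
        · exact ⟨x, by rw [htS x (hSnj x hxS) hxS, hxd, hkd]⟩
      · by_cases hyS : y ∈ S
        · rcases hcov y hyS (by rw [hy]; exact hFk) with hzv' | ⟨x, hxS, hx⟩
          · exact ⟨j, by rw [htj, ← hzv', hy]⟩
          · exact ⟨x, by rw [htS x (hSnj x hxS) hxS, hx, hy]⟩
        · exact ⟨y, by rw [htT y hyj hyS, hy]⟩
  -- decision tree
  by_cases hP : d = b ∨ d = c
  · -- pinned case: row j must stay at d
    have hσd : ∀ x, x ≠ j → σ x ≠ d := by
      rcases hP with h | h
      · intro x hx hh; exact hσb x hx (by rw [hh, h])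
      · intro x hx hh; exact hσc x hx (by rw [hh, h])
    have hbccc : ∀ y : Fin r, y ≠ j → (τ y = b ∨ τ y = c) →
        ∃ cc, τ y = cc ∧ (cc = b ∨ cc = c) := by
      intro y hy h; rcases h with h | h
      · exact ⟨b, h, Or.inl rfl⟩
      · exact ⟨c, h, Or.inr rfl⟩
    by_cases hneed : F a ∧ ∀ x ∈ O1, σ x ≠ a
    · obtain ⟨i₀, i₁, h0j, h1j, h01, ha0, ha1⟩ := hFa hneed.1
      have hgood : ∃ i, i ≠ j ∧ σ i = a ∧
          ¬∃ y, BR i y ∧ (τ y = b ∨ τ y = c) := by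
        by_cases hbad0 : ∃ y, BR i₀ y ∧ (τ y = b ∨ τ y = c)
        · refine ⟨i₁, h1j, ha1, ?_⟩
          rintro ⟨y₁, hy₁, hbc₁⟩
          obtain ⟨y₀, hy₀, hbc₀⟩ := hbad0
          have hyy : y₀ = y₁ := by
            have h0 : τ y₀ = b ∨ τ y₀ = c := hbc₀
            have h1 : τ y₁ = b ∨ τ y₁ = c := hbc₁
            rcases h0 with h0 | h0 <;> rcases h1 with h1 | h1
            · exact hτinj (h0.trans h1.symm)
            · exfalso; rcases hP with hd | hd
              · exact (br_ne_j h0j hy₀) (hτd y₀ (h0.trans hd.symm))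
              · exact (br_ne_j h1j hy₁) (hτd y₁ (h1.trans hd.symm))
            · exfalso; rcases hP with hd | hd
              · exact (br_ne_j h1j hy₁) (hτd y₁ (h1.trans hd.symm))
              · exact (br_ne_j h0j hy₀) (hτd y₀ (h0.trans hd.symm))
            · exact hτinj (h0.trans h1.symm)
          rw [hyy] at hy₀
          exact br_disj h01 ha0 ha1 hy₀ hy₁
        · exact ⟨i₀, h0j, ha0, hbad0⟩
      obtain ⟨i, hij, hia, hiE⟩ := hgood
      refine verif (O1 ∪ {x | BR i x}) d (Or.inl hj'O1) ?_ (Or.inr (Or.inr rfl))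
        (fun _ => rfl) ?_ ?_ ?_ ?_ ?_ ?_ ?_
      · rintro x (hx | hx)
        · exact o1_ne_j x hx
        · exact br_ne_j hij hx
      · rintro x (hx | hx)
        · exact hσd x (o1_ne_j x hx)
        · exact hσd x (br_ne_j hij hx)
      · intro y hyj hyd; exact absurd (hτd y hyd) hyj
      · rintro x (hx | hx) y (hy | hy) hxa hya
        · exact absurd hxa (hneed.2 x hx)
        · exact absurd hxa (hneed.2 x hx)
        · exact absurd hya (hneed.2 y hy)
        · rw [br_fiber hx hxa, br_fiber hy hya]
      · rintro x (hx | hx) y hyx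
        · rcases o1_hs2 x hx y hyx with h | h | h
          · exact Or.inl h
          · exact Or.inr (Or.inl (h ▸ hj'O1))
          · exact Or.inr (Or.inl h)
        · rcases sb_hs2 hx y hyx with h | h
          · have hya : τ y = a := by rw [hyx, h, hia]
            exact Or.inr (Or.inl ((hτa y hya) ▸ hj'O1))
          · exact Or.inr (Or.inr h)
      · rintro y (hy | hy) hF
        · rcases o1_cov y hy with rfl | ⟨x, hx, hσx⟩
          · right; exact ⟨i, Or.inr ReflTransGen.refl, by rw [hia, hτj']⟩
          · right; exact ⟨x, Or.inl hx, hσx⟩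
        · rcases sb_cov hij hy hF with rfl | hb' | hc' | ⟨x, hx, hσx⟩
          · right; exact ⟨i, Or.inr ReflTransGen.refl, by rw [hia, hτj']⟩
          · exact absurd ⟨y, hy, Or.inl hb'⟩ hiE
          · exact absurd ⟨y, hy, Or.inr hc'⟩ hiE
          · right; exact ⟨x, Or.inr hx, hσx⟩
      · intro _; exact Or.inl rfl
      · intro _; exact ⟨i, Or.inr ReflTransGen.refl, hia⟩
    · have hcaO : F a → ∃ x, x ∈ O1 ∧ σ x = a := by
        intro hFa'
        by_contra hcon; push_neg at hcon
        exact hneed ⟨hFa', fun x hx => hcon x hx⟩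
      refine verif O1 d hj'O1 o1_ne_j (Or.inr (Or.inr rfl)) (fun _ => rfl)
        ?_ ?_ ?_ ?_ ?_ ?_ ?_
      · intro x hx; exact hσd x (o1_ne_j x hx)
      · intro y hyj hyd; exact absurd (hτd y hyd) hyj
      · intro x hx y hy hxa hya
        exact fr_fiber hx hy (o1_ne_j x hx) (o1_ne_j y hy) hxa hya
      · intro x hx y hyx
        rcases o1_hs2 x hx y hyx with h | h | h
        · exact Or.inl h
        · exact Or.inr (h ▸ hj'O1)
        · exact Or.inr h
      · intro y hy hF
        rcases o1_cov y hy with rfl | ⟨x, hx, hσx⟩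
        · right
          obtain ⟨x, hx, hxa⟩ := hcaO (by rw [← hτj']; exact hF)
          exact ⟨x, hx, by rw [hxa, hτj']⟩
        · right; exact ⟨x, hx, hσx⟩
      · intro _; exact Or.inl rfl
      · exact hcaO
  · push_neg at hP
    obtain ⟨hdb, hdc⟩ := hP
    by_cases hD : ∃ x, x ∈ O1 ∧ σ x = d
    · -- bridge case: some orbit element has σ = d, so row j moves to b or c
      obtain ⟨x₁, hx₁O, hx₁d⟩ := hD
      have hpinno : (d = b ∨ d = c) → False := fun h => h.elim hdb hdc
      have obc_disj : ∀ z : Fin r, (∃ u, τ u = b ∧ FR u z) →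
          (∃ u, τ u = c ∧ FR u z) → False := by
        rintro z ⟨u, hub, huz⟩ ⟨v, hvc, hvz⟩
        have huv : u ≠ v := fun h => hbc (by rw [← hub, h, hvc])
        rcases codetComparable (R := FwdR) (fun {x y z} h1 h2 => fwd_codet h1 h2)
            huz hvz with h | h
        · rcases h.cases_tail with h' | ⟨w, -, hwv⟩
          · exact huv h'.symm
          · exact hσc w hwv.2.1 (by rw [← hwv.1, hvc])
        · rcases h.cases_tail with h' | ⟨w, -, hwu⟩
          · exact huv h'
          · exact hσb w hwu.2.1 (by rw [← hwu.1, hub])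
      have oBfiber : ∀ (β : Fin n), β ≠ d → ∀ x y : Fin r,
          (∃ u, τ u = β ∧ FR u x) → (∃ u, τ u = β ∧ FR u y) →
          σ x = a → σ y = a → x = y := by
        rintro β hβ x y ⟨u, hu, hux⟩ ⟨v, hv, hvy⟩ hxa hya
        have huv : u = v := hτinj (hu.trans hv.symm)
        rw [← huv] at hvy
        have huj : u ≠ j := fun h => hβ (by rw [← hu, h, hτj])
        exact fr_fiber hux hvy (fr_ne_j huj hux) (fr_ne_j huj hvy) hxa hya
      by_cases hneed : F a ∧ ∀ x ∈ O1, σ x ≠ a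
      · by_cases hOb : ∃ z, (∃ u, τ u = b ∧ FR u z) ∧ σ z = a
        · -- cover a via the b-orbit
          obtain ⟨zz, hzzO, hzza⟩ := hOb
          refine verif (O1 ∪ {x | ∃ u, τ u = b ∧ FR u x}) b (Or.inl hj'O1) ?_
            (Or.inl rfl) (fun h => absurd h hpinno) ?_ ?_ ?_ ?_ ?_ ?_ ?_
          · rintro x (hx | hx)
            · exact o1_ne_j x hx
            · exact oB_ne_j (fun h => hdb h.symm) hx
          · rintro x (hx | hx)
            · exact hσb x (o1_ne_j x hx)
            · exact hσb x (oB_ne_j (fun h => hdb h.symm) hx)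
          · intro y hyj hyb; exact Or.inr ⟨y, hyb, ReflTransGen.refl⟩
          · rintro x (hx | hx) y (hy | hy) hxa hya
            · exact absurd hxa (hneed.2 x hx)
            · exact absurd hxa (hneed.2 x hx)
            · exact absurd hya (hneed.2 y hy)
            · exact oBfiber b (fun h => hdb h.symm) x y hx hy hxa hya
          · rintro x (hx | hx) y hyx
            · rcases o1_hs2 x hx y hyx with h | h | h
              · exact Or.inl h
              · exact Or.inr (Or.inl (h ▸ hj'O1))
              · exact Or.inr (Or.inl h)
            · rcases oB_hs2 (fun h => hdb h.symm) hx y hyx with h | h | h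
              · exact Or.inl h
              · exact Or.inr (Or.inl (h ▸ hj'O1))
              · exact Or.inr (Or.inr h)
          · rintro y (hy | hy) hF
            · rcases o1_cov y hy with rfl | ⟨x, hx, hσx⟩
              · right; exact ⟨zz, Or.inr hzzO, by rw [hzza, hτj']⟩
              · right; exact ⟨x, Or.inl hx, hσx⟩
            · rcases oB_cov hy with h | ⟨x, hx, hσx⟩
              · left; exact h
              · right; exact ⟨x, Or.inr hx, hσx⟩
          · intro _; exact Or.inr ⟨x₁, Or.inl hx₁O, hx₁d⟩
          · intro _; exact ⟨zz, Or.inr hzzO, hzza⟩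
        · by_cases hOc : ∃ z, (∃ u, τ u = c ∧ FR u z) ∧ σ z = a
          · -- cover a via the c-orbit
            obtain ⟨zz, hzzO, hzza⟩ := hOc
            refine verif (O1 ∪ {x | ∃ u, τ u = c ∧ FR u x}) c (Or.inl hj'O1) ?_
              (Or.inr (Or.inl rfl)) (fun h => absurd h hpinno) ?_ ?_ ?_ ?_ ?_ ?_ ?_
            · rintro x (hx | hx)
              · exact o1_ne_j x hx
              · exact oB_ne_j (fun h => hdc h.symm) hx
            · rintro x (hx | hx)
              · exact hσc x (o1_ne_j x hx)
              · exact hσc x (oB_ne_j (fun h => hdc h.symm) hx)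
            · intro y hyj hyc; exact Or.inr ⟨y, hyc, ReflTransGen.refl⟩
            · rintro x (hx | hx) y (hy | hy) hxa hya
              · exact absurd hxa (hneed.2 x hx)
              · exact absurd hxa (hneed.2 x hx)
              · exact absurd hya (hneed.2 y hy)
              · exact oBfiber c (fun h => hdc h.symm) x y hx hy hxa hya
            · rintro x (hx | hx) y hyx
              · rcases o1_hs2 x hx y hyx with h | h | h
                · exact Or.inl h
                · exact Or.inr (Or.inl (h ▸ hj'O1))
                · exact Or.inr (Or.inl h)
              · rcases oB_hs2 (fun h => hdc h.symm) hx y hyx with h | h | h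
                · exact Or.inl h
                · exact Or.inr (Or.inl (h ▸ hj'O1))
                · exact Or.inr (Or.inr h)
            · rintro y (hy | hy) hF
              · rcases o1_cov y hy with rfl | ⟨x, hx, hσx⟩
                · right; exact ⟨zz, Or.inr hzzO, by rw [hzza, hτj']⟩
                · right; exact ⟨x, Or.inl hx, hσx⟩
              · rcases oB_cov hy with h | ⟨x, hx, hσx⟩
                · left; exact h
                · right; exact ⟨x, Or.inr hx, hσx⟩
            · intro _; exact Or.inr ⟨x₁, Or.inl hx₁O, hx₁d⟩
            · intro _; exact ⟨zz, Or.inr hzzO, hzza⟩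
          · -- phase 2 needed
            obtain ⟨i₀, i₁, h0j, h1j, h01, ha0, ha1⟩ := hFa hneed.1
            by_cases hEb : ∃ y, BR i₀ y ∧ τ y = b
            · refine verif (O1 ∪ {x | BR i₀ x}) b (Or.inl hj'O1) ?_
                (Or.inl rfl) (fun h => absurd h hpinno) ?_ ?_ ?_ ?_ ?_ ?_ ?_
              · rintro x (hx | hx)
                · exact o1_ne_j x hx
                · exact br_ne_j h0j hx
              · rintro x (hx | hx)
                · exact hσb x (o1_ne_j x hx)
                · exact hσb x (br_ne_j h0j hx)
              · intro y hyj hyb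
                obtain ⟨y', hy', hy'b⟩ := hEb
                have : y = y' := hτinj (hyb.trans hy'b.symm)
                exact Or.inr (this ▸ hy')
              · rintro x (hx | hx) y (hy | hy) hxa hya
                · exact absurd hxa (hneed.2 x hx)
                · exact absurd hxa (hneed.2 x hx)
                · exact absurd hya (hneed.2 y hy)
                · rw [br_fiber hx hxa, br_fiber hy hya]
              · rintro x (hx | hx) y hyx
                · rcases o1_hs2 x hx y hyx with h | h | h
                  · exact Or.inl h
                  · exact Or.inr (Or.inl (h ▸ hj'O1))
                  · exact Or.inr (Or.inl h)
                · rcases sb_hs2 hx y hyx with h | h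
                  · have hya : τ y = a := by rw [hyx, h, ha0]
                    exact Or.inr (Or.inl ((hτa y hya) ▸ hj'O1))
                  · exact Or.inr (Or.inr h)
              · rintro y (hy | hy) hF
                · rcases o1_cov y hy with rfl | ⟨x, hx, hσx⟩
                  · right; exact ⟨i₀, Or.inr ReflTransGen.refl, by rw [ha0, hτj']⟩
                  · right; exact ⟨x, Or.inl hx, hσx⟩
                · rcases sb_cov h0j hy hF with rfl | hb' | hc' | ⟨x, hx, hσx⟩
                  · right; exact ⟨i₀, Or.inr ReflTransGen.refl, by rw [ha0, hτj']⟩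
                  · left; exact hb'
                  · exfalso; obtain ⟨y', hy', hy'b⟩ := hEb
                    exact ebc hy' hy hy'b hc'
                  · right; exact ⟨x, Or.inr hx, hσx⟩
              · intro _; exact Or.inr ⟨x₁, Or.inl hx₁O, hx₁d⟩
              · intro _; exact ⟨i₀, Or.inr ReflTransGen.refl, ha0⟩
            · by_cases hEc : ∃ y, BR i₀ y ∧ τ y = c
              · refine verif (O1 ∪ {x | BR i₀ x}) c (Or.inl hj'O1) ?_
                  (Or.inr (Or.inl rfl)) (fun h => absurd h hpinno) ?_ ?_ ?_ ?_ ?_ ?_ ?_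
                · rintro x (hx | hx)
                  · exact o1_ne_j x hx
                  · exact br_ne_j h0j hx
                · rintro x (hx | hx)
                  · exact hσc x (o1_ne_j x hx)
                  · exact hσc x (br_ne_j h0j hx)
                · intro y hyj hyc
                  obtain ⟨y', hy', hy'c⟩ := hEc
                  have : y = y' := hτinj (hyc.trans hy'c.symm)
                  exact Or.inr (this ▸ hy')
                · rintro x (hx | hx) y (hy | hy) hxa hya
                  · exact absurd hxa (hneed.2 x hx)
                  · exact absurd hxa (hneed.2 x hx)
                  · exact absurd hya (hneed.2 y hy)
                  · rw [br_fiber hx hxa, br_fiber hy hya]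
                · rintro x (hx | hx) y hyx
                  · rcases o1_hs2 x hx y hyx with h | h | h
                    · exact Or.inl h
                    · exact Or.inr (Or.inl (h ▸ hj'O1))
                    · exact Or.inr (Or.inl h)
                  · rcases sb_hs2 hx y hyx with h | h
                    · have hya : τ y = a := by rw [hyx, h, ha0]
                      exact Or.inr (Or.inl ((hτa y hya) ▸ hj'O1))
                    · exact Or.inr (Or.inr h)
                · rintro y (hy | hy) hF
                  · rcases o1_cov y hy with rfl | ⟨x, hx, hσx⟩
                    · right; exact ⟨i₀, Or.inr ReflTransGen.refl, by rw [ha0, hτj']⟩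
                    · right; exact ⟨x, Or.inl hx, hσx⟩
                  · rcases sb_cov h0j hy hF with rfl | hb' | hc' | ⟨x, hx, hσx⟩
                    · right; exact ⟨i₀, Or.inr ReflTransGen.refl, by rw [ha0, hτj']⟩
                    · exfalso; obtain ⟨y', hy', hy'c⟩ := hEc
                      exact ebc hy hy' hb' hy'c
                    · left; exact hc'
                    · right; exact ⟨x, Or.inr hx, hσx⟩
                · intro _; exact Or.inr ⟨x₁, Or.inl hx₁O, hx₁d⟩
                · intro _; exact ⟨i₀, Or.inr ReflTransGen.refl, ha0⟩
              · -- no b/c obstruction from the backward orbit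
                refine verif (O1 ∪ {x | ∃ u, τ u = b ∧ FR u x} ∪ {x | BR i₀ x}) b
                  (Or.inl (Or.inl hj'O1)) ?_
                  (Or.inl rfl) (fun h => absurd h hpinno) ?_ ?_ ?_ ?_ ?_ ?_ ?_
                · rintro x ((hx | hx) | hx)
                  · exact o1_ne_j x hx
                  · exact oB_ne_j (fun h => hdb h.symm) hx
                  · exact br_ne_j h0j hx
                · rintro x ((hx | hx) | hx)
                  · exact hσb x (o1_ne_j x hx)
                  · exact hσb x (oB_ne_j (fun h => hdb h.symm) hx)
                  · exact hσb x (br_ne_j h0j hx)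
                · intro y hyj hyb
                  exact Or.inl (Or.inr ⟨y, hyb, ReflTransGen.refl⟩)
                · rintro x ((hx | hx) | hx) y ((hy | hy) | hy) hxa hya
                  · exact absurd hxa (hneed.2 x hx)
                  · exact absurd hxa (hneed.2 x hx)
                  · exact absurd hxa (hneed.2 x hx)
                  · exact absurd (hOb ⟨x, hx, hxa⟩) not_false
                  · exact absurd (hOb ⟨x, hx, hxa⟩) not_false
                  · exact absurd (hOb ⟨x, hx, hxa⟩) not_false
                  · exact absurd hya (hneed.2 y hy)
                  · exact absurd (hOb ⟨y, hy, hya⟩) not_false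
                  · rw [br_fiber hx hxa, br_fiber hy hya]
                · rintro x ((hx | hx) | hx) y hyx
                  · rcases o1_hs2 x hx y hyx with h | h | h
                    · exact Or.inl h
                    · exact Or.inr (Or.inl (Or.inl (h ▸ hj'O1)))
                    · exact Or.inr (Or.inl (Or.inl h))
                  · rcases oB_hs2 (fun h => hdb h.symm) hx y hyx with h | h | h
                    · exact Or.inl h
                    · exact Or.inr (Or.inl (Or.inl (h ▸ hj'O1)))
                    · exact Or.inr (Or.inl (Or.inr h))
                  · rcases sb_hs2 hx y hyx with h | h
                    · have hya : τ y = a := by rw [hyx, h, ha0]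
                      exact Or.inr (Or.inl (Or.inl ((hτa y hya) ▸ hj'O1)))
                    · exact Or.inr (Or.inr h)
                · rintro y ((hy | hy) | hy) hF
                  · rcases o1_cov y hy with rfl | ⟨x, hx, hσx⟩
                    · right
                      exact ⟨i₀, Or.inr ReflTransGen.refl, by rw [ha0, hτj']⟩
                    · right; exact ⟨x, Or.inl (Or.inl hx), hσx⟩
                  · rcases oB_cov hy with h | ⟨x, hx, hσx⟩
                    · left; exact h
                    · right; exact ⟨x, Or.inl (Or.inr hx), hσx⟩
                  · rcases sb_cov h0j hy hF with rfl | hb' | hc' | ⟨x, hx, hσx⟩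
                    · right
                      exact ⟨i₀, Or.inr ReflTransGen.refl, by rw [ha0, hτj']⟩
                    · left; exact hb'
                    · exact absurd ⟨y, hy, hc'⟩ hEc
                    · right; exact ⟨x, Or.inr hx, hσx⟩
                · intro _; exact Or.inr ⟨x₁, Or.inl (Or.inl hx₁O), hx₁d⟩
                · intro _; exact ⟨i₀, Or.inr ReflTransGen.refl, ha0⟩
      · -- a is already fine
        have hcaO : F a → ∃ x, x ∈ O1 ∧ σ x = a := by
          intro hFa'
          by_contra hcon; push_neg at hcon
          exact hneed ⟨hFa', fun x hx => hcon x hx⟩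
        by_cases hclash : ∃ x y : Fin r, (x ∈ O1 ∨ (∃ u, τ u = b ∧ FR u x)) ∧
            (y ∈ O1 ∨ (∃ u, τ u = b ∧ FR u y)) ∧ σ x = a ∧ σ y = a ∧ x ≠ y
        · -- use the c-orbit instead
          have hfibc : ∀ x y : Fin r, (x ∈ O1 ∨ (∃ u, τ u = c ∧ FR u x)) →
              (y ∈ O1 ∨ (∃ u, τ u = c ∧ FR u y)) → σ x = a → σ y = a → x = y := by
            intro x y hx hy hxa hya
            by_contra hne
            have hxj : x ≠ j := by
              rcases hx with hx | hx
              · exact o1_ne_j x hx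
              · exact oB_ne_j (fun h => hdc h.symm) hx
            have hyj : y ≠ j := by
              rcases hy with hy | hy
              · exact o1_ne_j y hy
              · exact oB_ne_j (fun h => hdc h.symm) hy
            by_cases hFa' : F a
            · obtain ⟨xh, hxhO, hxha⟩ := hcaO hFa'
              obtain ⟨u, v, hu, hv, hua, hva, huv⟩ := hclash
              have hunotj : u ≠ j := by
                rcases hu with hu | hu
                · exact o1_ne_j u hu
                · exact oB_ne_j (fun h => hdb h.symm) hu
              have hvnotj : v ≠ j := by
                rcases hv with hv | hv
                · exact o1_ne_j v hv
                · exact oB_ne_j (fun h => hdb h.symm) hv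
              -- pick δ in the b-orbit, not equal to xh
              have hδ : ∃ δ, (∃ u', τ u' = b ∧ FR u' δ) ∧ σ δ = a ∧ δ ≠ xh := by
                by_cases hux : u = xh
                · refine ⟨v, ?_, hva, fun h => huv (hux.trans h.symm)⟩
                  rcases hv with hv | hv
                  · exact absurd (fr_fiber hv hxhO hvnotj (o1_ne_j xh hxhO) hva hxha)
                      (fun h => huv (hux.trans h.symm))
                  · exact hv
                · refine ⟨u, ?_, hua, hux⟩
                  rcases hu with hu | hu
                  · exact absurd (fr_fiber hu hxhO hunotj (o1_ne_j xh hxhO) hua hxha) hux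
                  · exact hu
              obtain ⟨δ, hδb, hδa, hδxh⟩ := hδ
              -- pick ε in the c-orbit, not equal to xh
              have hε : ∃ ε, (∃ u', τ u' = c ∧ FR u' ε) ∧ σ ε = a ∧ ε ≠ xh := by
                by_cases hxx : x = xh
                · refine ⟨y, ?_, hya, fun h => hne (hxx.trans h.symm)⟩
                  rcases hy with hy | hy
                  · exact absurd (fr_fiber hy hxhO hyj (o1_ne_j xh hxhO) hya hxha)
                      (fun h => hne (hxx.trans h.symm))
                  · exact hy
                · refine ⟨x, ?_, hxa, hxx⟩
                  rcases hx with hx | hx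
                  · exact absurd (fr_fiber hx hxhO hxj (o1_ne_j xh hxhO) hxa hxha) hxx
                  · exact hx
              obtain ⟨ε, hεc, hεa, hεxh⟩ := hε
              have hδε : δ ≠ ε := fun h => obc_disj δ hδb (h ▸ hεc)
              have hδj : δ ≠ j := oB_ne_j (fun h => hdb h.symm) hδb
              have hεj : ε ≠ j := oB_ne_j (fun h => hdc h.symm) hεc
              rcases hσa2 xh δ ε (o1_ne_j xh hxhO) hδj hεj hxha hδa hεa with h | h | h
              · exact hδxh h.symm
              · exact hεxh h.symm
              · exact hδε h
            · exact hne (hσa1 hFa' x y hxj hyj hxa hya)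
          refine verif (O1 ∪ {x | ∃ u, τ u = c ∧ FR u x}) c (Or.inl hj'O1) ?_
            (Or.inr (Or.inl rfl)) (fun h => absurd h hpinno) ?_ ?_ ?_ ?_ ?_ ?_ ?_
          · rintro x (hx | hx)
            · exact o1_ne_j x hx
            · exact oB_ne_j (fun h => hdc h.symm) hx
          · rintro x (hx | hx)
            · exact hσc x (o1_ne_j x hx)
            · exact hσc x (oB_ne_j (fun h => hdc h.symm) hx)
          · intro y hyj hyc; exact Or.inr ⟨y, hyc, ReflTransGen.refl⟩
          · rintro x hx y hy hxa hya
            exact hfibc x y hx hy hxa hya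
          · rintro x (hx | hx) y hyx
            · rcases o1_hs2 x hx y hyx with h | h | h
              · exact Or.inl h
              · exact Or.inr (Or.inl (h ▸ hj'O1))
              · exact Or.inr (Or.inl h)
            · rcases oB_hs2 (fun h => hdc h.symm) hx y hyx with h | h | h
              · exact Or.inl h
              · exact Or.inr (Or.inl (h ▸ hj'O1))
              · exact Or.inr (Or.inr h)
          · rintro y (hy | hy) hF
            · rcases o1_cov y hy with rfl | ⟨x, hx, hσx⟩
              · right
                obtain ⟨x, hx, hxa⟩ := hcaO (by rw [← hτj']; exact hF)
                exact ⟨x, Or.inl hx, by rw [hxa, hτj']⟩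
              · right; exact ⟨x, Or.inl hx, hσx⟩
            · rcases oB_cov hy with h | ⟨x, hx, hσx⟩
              · left; exact h
              · right; exact ⟨x, Or.inr hx, hσx⟩
          · intro _; exact Or.inr ⟨x₁, Or.inl hx₁O, hx₁d⟩
          · intro hFa'
            obtain ⟨x, hx, hxa⟩ := hcaO hFa'
            exact ⟨x, Or.inl hx, hxa⟩
        · -- no clash: use the b-orbit
          refine verif (O1 ∪ {x | ∃ u, τ u = b ∧ FR u x}) b (Or.inl hj'O1) ?_
            (Or.inl rfl) (fun h => absurd h hpinno) ?_ ?_ ?_ ?_ ?_ ?_ ?_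
          · rintro x (hx | hx)
            · exact o1_ne_j x hx
            · exact oB_ne_j (fun h => hdb h.symm) hx
          · rintro x (hx | hx)
            · exact hσb x (o1_ne_j x hx)
            · exact hσb x (oB_ne_j (fun h => hdb h.symm) hx)
          · intro y hyj hyb; exact Or.inr ⟨y, hyb, ReflTransGen.refl⟩
          · rintro x hx y hy hxa hya
            by_contra hne
            exact hclash ⟨x, y, hx, hy, hxa, hya, hne⟩
          · rintro x (hx | hx) y hyx
            · rcases o1_hs2 x hx y hyx with h | h | h
              · exact Or.inl h
              · exact Or.inr (Or.inl (h ▸ hj'O1))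
              · exact Or.inr (Or.inl h)
            · rcases oB_hs2 (fun h => hdb h.symm) hx y hyx with h | h | h
              · exact Or.inl h
              · exact Or.inr (Or.inl (h ▸ hj'O1))
              · exact Or.inr (Or.inr h)
          · rintro y (hy | hy) hF
            · rcases o1_cov y hy with rfl | ⟨x, hx, hσx⟩
              · right
                obtain ⟨x, hx, hxa⟩ := hcaO (by rw [← hτj']; exact hF)
                exact ⟨x, Or.inl hx, by rw [hxa, hτj']⟩
              · right; exact ⟨x, Or.inl hx, hσx⟩
            · rcases oB_cov hy with h | ⟨x, hx, hσx⟩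
              · left; exact h
              · right; exact ⟨x, Or.inr hx, hσx⟩
          · intro _; exact Or.inr ⟨x₁, Or.inl hx₁O, hx₁d⟩
          · intro hFa'
            obtain ⟨x, hx, hxa⟩ := hcaO hFa'
            exact ⟨x, Or.inl hx, hxa⟩
    · -- no bridge: row j can stay at d unless a backward orbit needs it
      have hpinno : (d = b ∨ d = c) → False := fun h => h.elim hdb hdc
      by_cases hneed : F a ∧ ∀ x ∈ O1, σ x ≠ a
      · obtain ⟨i₀, i₁, h0j, h1j, h01, ha0, ha1⟩ := hFa hneed.1
        have leafClean : ∀ i, i ≠ j → σ i = a →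
            (¬∃ y, BR i y ∧ (τ y = b ∨ τ y = c)) →
            ∃ t : Fin r → Fin n, Function.Injective t ∧ t j' = p ∧
              (∀ i, i ≠ j → i ≠ j' → t i = σ i ∨ t i = τ i) ∧
              (t j = b ∨ t j = c ∨ t j = d) ∧ ((d = b ∨ d = c) → t j = d) ∧
              (∀ k, F k → ∃ i, t i = k) := by
          intro i hij hia hiE
          refine verif (O1 ∪ {x | BR i x}) d (Or.inl hj'O1) ?_
            (Or.inr (Or.inr rfl)) (fun _ => rfl) ?_ ?_ ?_ ?_ ?_ ?_ ?_
          · rintro x (hx | hx)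
            · exact o1_ne_j x hx
            · exact br_ne_j hij hx
          · rintro x (hx | hx)
            · exact fun hh => hD ⟨x, hx, hh⟩
            · intro hh
              have hxi := br_d hx hh
              rw [hxi, hia] at hh
              exact hda hh.symm
          · intro y hyj hyd; exact absurd (hτd y hyd) hyj
          · rintro x (hx | hx) y (hy | hy) hxa hya
            · exact absurd hxa (hneed.2 x hx)
            · exact absurd hxa (hneed.2 x hx)
            · exact absurd hya (hneed.2 y hy)
            · rw [br_fiber hx hxa, br_fiber hy hya]
          · rintro x (hx | hx) y hyx
            · rcases o1_hs2 x hx y hyx with h | h | h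
              · exact Or.inl h
              · exact Or.inr (Or.inl (h ▸ hj'O1))
              · exact Or.inr (Or.inl h)
            · rcases sb_hs2 hx y hyx with h | h
              · have hya : τ y = a := by rw [hyx, h, hia]
                exact Or.inr (Or.inl ((hτa y hya) ▸ hj'O1))
              · exact Or.inr (Or.inr h)
          · rintro y (hy | hy) hF
            · rcases o1_cov y hy with rfl | ⟨x, hx, hσx⟩
              · right; exact ⟨i, Or.inr ReflTransGen.refl, by rw [hia, hτj']⟩
              · right; exact ⟨x, Or.inl hx, hσx⟩
            · rcases sb_cov hij hy hF with rfl | hb' | hc' | ⟨x, hx, hσx⟩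
              · right; exact ⟨i, Or.inr ReflTransGen.refl, by rw [hia, hτj']⟩
              · exact absurd ⟨y, hy, Or.inl hb'⟩ hiE
              · exact absurd ⟨y, hy, Or.inr hc'⟩ hiE
              · right; exact ⟨x, Or.inr hx, hσx⟩
          · intro _; exact Or.inl rfl
          · intro _; exact ⟨i, Or.inr ReflTransGen.refl, hia⟩
        by_cases hcl0 : ∃ y, BR i₀ y ∧ (τ y = b ∨ τ y = c)
        · by_cases hcl1 : ∃ y, BR i₁ y ∧ (τ y = b ∨ τ y = c)
          · -- both backward orbits hit {b,c}; they must hit different columns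
            have hnotsame : ∀ y₀ y₁ : Fin r, BR i₀ y₀ → BR i₁ y₁ →
                τ y₀ = τ y₁ → False := by
              intro y₀ y₁ h0 h1 e
              have hy : y₀ = y₁ := hτinj e
              exact br_disj h01 ha0 ha1 (hy ▸ h0) h1
            -- generic leaf with a hit at β and an optional extra component T
            have leafE : ∀ (i : Fin r) (β : Fin n) (T : Set (Fin r)),
                i ≠ j → σ i = a → (β = b ∨ β = c) →
                (∃ y, BR i y ∧ τ y = β) →
                (∀ y, BR i y → (τ y = b ∨ τ y = c) → τ y = β) →
                (∀ x ∈ T, x ≠ j) →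
                (∀ x ∈ T, σ x ≠ a) →
                (∀ x ∈ T, ∀ y, τ y = σ x → y = j ∨ y = j' ∨ y ∈ T) →
                (∀ y ∈ T, F (τ y) → τ y = β ∨ y = j' ∨ ∃ x ∈ T, σ x = τ y) →
                (F d → ∃ x ∈ T, σ x = d) →
                ∃ t : Fin r → Fin n, Function.Injective t ∧ t j' = p ∧
                  (∀ i, i ≠ j → i ≠ j' → t i = σ i ∨ t i = τ i) ∧
                  (t j = b ∨ t j = c ∨ t j = d) ∧ ((d = b ∨ d = c) → t j = d) ∧
                  (∀ k, F k → ∃ i, t i = k) := by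
              intro i β T hij hia hβ hiE hionly hTnj hTa hThs2 hTcov hTcd
              have hσβ : ∀ x : Fin r, x ≠ j → σ x ≠ β := by
                rcases hβ with rfl | rfl
                · exact hσb
                · exact hσc
              refine verif (O1 ∪ {x | BR i x} ∪ T) β (Or.inl (Or.inl hj'O1)) ?_
                (by rcases hβ with rfl | rfl; exact Or.inl rfl;
                    exact Or.inr (Or.inl rfl))
                (fun h => absurd h hpinno) ?_ ?_ ?_ ?_ ?_ ?_ ?_
              · rintro x ((hx | hx) | hx)
                · exact o1_ne_j x hx
                · exact br_ne_j hij hx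
                · exact hTnj x hx
              · rintro x ((hx | hx) | hx)
                · exact hσβ x (o1_ne_j x hx)
                · exact hσβ x (br_ne_j hij hx)
                · exact hσβ x (hTnj x hx)
              · intro y hyj hyβ
                obtain ⟨y', hy', hy'β⟩ := hiE
                have : y = y' := hτinj (hyβ.trans hy'β.symm)
                exact Or.inl (Or.inr (this ▸ hy'))
              · rintro x ((hx | hx) | hx) y ((hy | hy) | hy) hxa hya
                · exact absurd hxa (hneed.2 x hx)
                · exact absurd hxa (hneed.2 x hx)
                · exact absurd hxa (hneed.2 x hx)
                · exact absurd hya (hneed.2 y hy)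
                · rw [br_fiber hx hxa, br_fiber hy hya]
                · exact absurd hya (hTa y hy)
                · exact absurd hxa (hTa x hx)
                · exact absurd hxa (hTa x hx)
                · exact absurd hxa (hTa x hx)
              · rintro x ((hx | hx) | hx) y hyx
                · rcases o1_hs2 x hx y hyx with h | h | h
                  · exact Or.inl h
                  · exact Or.inr (Or.inl (Or.inl (h ▸ hj'O1)))
                  · exact Or.inr (Or.inl (Or.inl h))
                · rcases sb_hs2 hx y hyx with h | h
                  · have hya : τ y = a := by rw [hyx, h, hia]
                    exact Or.inr (Or.inl (Or.inl ((hτa y hya) ▸ hj'O1)))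
                  · exact Or.inr (Or.inl (Or.inr h))
                · rcases hThs2 x hx y hyx with h | h | h
                  · exact Or.inl h
                  · exact Or.inr (Or.inl (Or.inl (h ▸ hj'O1)))
                  · exact Or.inr (Or.inr h)
              · rintro y ((hy | hy) | hy) hF
                · rcases o1_cov y hy with rfl | ⟨x, hx, hσx⟩
                  · right
                    exact ⟨i, Or.inl (Or.inr ReflTransGen.refl), by rw [hia, hτj']⟩
                  · right; exact ⟨x, Or.inl (Or.inl hx), hσx⟩
                · rcases sb_cov hij hy hF with rfl | hb' | hc' | ⟨x, hx, hσx⟩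
                  · right
                    exact ⟨i, Or.inl (Or.inr ReflTransGen.refl), by rw [hia, hτj']⟩
                  · left; exact hionly y hy (Or.inl hb')
                  · left; exact hionly y hy (Or.inr hc')
                  · right; exact ⟨x, Or.inl (Or.inr hx), hσx⟩
                · rcases hTcov y hy hF with h | rfl | ⟨x, hx, hσx⟩
                  · left; exact h
                  · right
                    exact ⟨i, Or.inl (Or.inr ReflTransGen.refl), by rw [hia, hτj']⟩
                  · right; exact ⟨x, Or.inr hx, hσx⟩
              · intro hFd
                obtain ⟨x, hx, hxd⟩ := hTcd hFd
                exact Or.inr ⟨x, Or.inr hx, hxd⟩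
              · intro _; exact ⟨i, Or.inl (Or.inr ReflTransGen.refl), hia⟩
            have mainBE : ∀ ib ic : Fin r, ib ≠ j → ic ≠ j → σ ib = a → σ ic = a →
                (∃ y, BR ib y ∧ τ y = b) → (∃ y, BR ic y ∧ τ y = c) →
                ∃ t : Fin r → Fin n, Function.Injective t ∧ t j' = p ∧
                  (∀ i, i ≠ j → i ≠ j' → t i = σ i ∨ t i = τ i) ∧
                  (t j = b ∨ t j = c ∨ t j = d) ∧ ((d = b ∨ d = c) → t j = d) ∧
                  (∀ k, F k → ∃ i, t i = k) := by
              intro ib ic hibj hicj hiba hica hbB hcC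
              have hionlyb : ∀ y, BR ib y → (τ y = b ∨ τ y = c) → τ y = b := by
                intro y hy h
                rcases h with h | h
                · exact h
                · exfalso; obtain ⟨y', hy', hy'b⟩ := hbB; exact ebc hy' hy hy'b h
              have hionlyc : ∀ y, BR ic y → (τ y = b ∨ τ y = c) → τ y = c := by
                intro y hy h
                rcases h with h | h
                · exfalso; obtain ⟨y', hy', hy'c⟩ := hcC; exact ebc hy hy' h hy'c
                · exact h
              by_cases hFd : F d
              · obtain ⟨xd, hxdj, hxdd⟩ := hFσ d hFd hda hdb hdc
                have hTnj : ∀ x, BR xd x → x ≠ j := fun x hx => br_ne_j hxdj hx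
                have hTa : ∀ x, BR xd x → σ x ≠ a := by
                  intro x hx hxa
                  have hxi := br_fiber hx hxa
                  rw [hxi] at hxa
                  exact hda (hxdd.symm.trans hxa)
                have hThs2 : ∀ x, BR xd x → ∀ y, τ y = σ x →
                    y = j ∨ y = j' ∨ BR xd y := by
                  intro x hx y hyx
                  rcases sb_hs2 hx y hyx with h | h
                  · left
                    have : τ y = d := by rw [hyx, h, hxdd]
                    exact hτd y this
                  · right; right; exact h
                have hTcd : F d → ∃ x, BR xd x ∧ σ x = d :=
                  fun _ => ⟨xd, ReflTransGen.refl, hxdd⟩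
                by_cases h3b : ∃ y, BR xd y ∧ τ y = b
                · refine leafE ib b {x | BR xd x} hibj hiba (Or.inl rfl) hbB hionlyb
                    hTnj hTa hThs2 ?_ hTcd
                  intro y hy hF
                  rcases sb_cov hxdj hy hF with rfl | hb' | hc' | ⟨x, hx, hσx⟩
                  · right; left; rfl
                  · left; exact hb'
                  · exfalso; obtain ⟨y', hy', hy'b⟩ := h3b; exact ebc hy' hy hy'b hc'
                  · right; right; exact ⟨x, hx, hσx⟩
                · by_cases h3c : ∃ y, BR xd y ∧ τ y = c
                  · refine leafE ic c {x | BR xd x} hicj hica (Or.inr rfl) hcC hionlyc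
                      hTnj hTa hThs2 ?_ hTcd
                    intro y hy hF
                    rcases sb_cov hxdj hy hF with rfl | hb' | hc' | ⟨x, hx, hσx⟩
                    · right; left; rfl
                    · exact absurd ⟨y, hy, hb'⟩ h3b
                    · left; exact hc'
                    · right; right; exact ⟨x, hx, hσx⟩
                  · refine leafE ib b {x | BR xd x} hibj hiba (Or.inl rfl) hbB hionlyb
                      hTnj hTa hThs2 ?_ hTcd
                    intro y hy hF
                    rcases sb_cov hxdj hy hF with rfl | hb' | hc' | ⟨x, hx, hσx⟩
                    · right; left; rfl
                    · left; exact hb'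
                    · exact absurd ⟨y, hy, hc'⟩ h3c
                    · right; right; exact ⟨x, hx, hσx⟩
              · refine leafE ib b ∅ hibj hiba (Or.inl rfl) hbB hionlyb ?_ ?_ ?_ ?_
                  (fun h => absurd h hFd)
                · exact fun x hx => absurd hx (Set.notMem_empty x)
                · exact fun x hx => absurd hx (Set.notMem_empty x)
                · exact fun x hx => absurd hx (Set.notMem_empty x)
                · exact fun x hx => absurd hx (Set.notMem_empty x)
            obtain ⟨y₀, hy₀, hy₀bc⟩ := hcl0
            obtain ⟨y₁, hy₁, hy₁bc⟩ := hcl1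
            rcases hy₀bc with h0 | h0 <;> rcases hy₁bc with h1 | h1
            · exact absurd (hnotsame y₀ y₁ hy₀ hy₁ (h0.trans h1.symm)) not_false
            · exact mainBE i₀ i₁ h0j h1j ha0 ha1 ⟨y₀, hy₀, h0⟩ ⟨y₁, hy₁, h1⟩
            · exact mainBE i₁ i₀ h1j h0j ha1 ha0 ⟨y₁, hy₁, h1⟩ ⟨y₀, hy₀, h0⟩
            · exact absurd (hnotsame y₀ y₁ hy₀ hy₁ (h0.trans h1.symm)) not_false
          · exact leafClean i₁ h1j ha1 hcl1
        · exact leafClean i₀ h0j ha0 hcl0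
      · have hcaO : F a → ∃ x, x ∈ O1 ∧ σ x = a := by
          intro hFa'
          by_contra hcon; push_neg at hcon
          exact hneed ⟨hFa', fun x hx => hcon x hx⟩
        refine verif O1 d hj'O1 o1_ne_j (Or.inr (Or.inr rfl)) (fun _ => rfl)
          ?_ ?_ ?_ ?_ ?_ ?_ ?_
        · intro x hx hh; exact hD ⟨x, hx, hh⟩
        · intro y hyj hyd; exact absurd (hτd y hyd) hyj
        · intro x hx y hy hxa hya
          exact fr_fiber hx hy (o1_ne_j x hx) (o1_ne_j y hy) hxa hya
        · intro x hx y hyx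
          rcases o1_hs2 x hx y hyx with h | h | h
          · exact Or.inl h
          · exact Or.inr (h ▸ hj'O1)
          · exact Or.inr h
        · intro y hy hF
          rcases o1_cov y hy with rfl | ⟨x, hx, hσx⟩
          · right
            obtain ⟨x, hx, hxa⟩ := hcaO (by rw [← hτj']; exact hF)
            exact ⟨x, hx, by rw [hxa, hτj']⟩
          · right; exact ⟨x, hx, hσx⟩
        · intro _; exact Or.inl rfl
        · exact hcaO

/-- Let `1 ≤ r ≤ n`, let `V₁` be an improper vote whose row `j` has
entries `1` in columns `b` and `c` and entry `-1` in column `a` (with `a,b,c` distinct),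
and let `V₂` be a proper vote with entry `1` at `(j', a)` for some `j' ≠ j` and entry `1`
at `(j, d)` for some `d ≠ a`. Then there are an improper vote `V₁'` and a proper vote
`V₂'` with `V₁' + V₂' = V₁ + V₂`, `V₁'` having entry `1` at `(j', a)`, and row `j` of
`V₁'` having entry `-1` in column `a` and entries `1` in exactly two columns forming one
of the sets `{b,c}`, `{b,d}`, `{c,d}`. -/
theorem improper_move_a_up
    (r n : ℕ) (hr : 1 ≤ r) (hrn : r ≤ n)
    (V₁ V₂ : Matrix (Fin r) (Fin n) ℤ)
    (h₁ : IsImproperVote r n V₁) (h₂ : IsProperVote r n V₂)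
    (j j' : Fin r) (a b c d : Fin n)
    (hab : a ≠ b) (hac : a ≠ c) (hbc : b ≠ c)
    (h1b : V₁ j b = 1) (h1c : V₁ j c = 1) (h1a : V₁ j a = -1)
    (hjj' : j' ≠ j) (h2a : V₂ j' a = 1)
    (hda : d ≠ a) (h2d : V₂ j d = 1) :
    ∃ V₁' V₂' : Matrix (Fin r) (Fin n) ℤ,
      IsImproperVote r n V₁' ∧ IsProperVote r n V₂' ∧
      V₁' + V₂' = V₁ + V₂ ∧
      V₁' j' a = 1 ∧ V₁' j a = -1 ∧
      ((V₁' j b = 1 ∧ V₁' j c = 1) ∨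
       (V₁' j b = 1 ∧ V₁' j d = 1) ∨
       (V₁' j c = 1 ∧ V₁' j d = 1)) := by
  classical
  by_cases htriv : V₁ j' a = 1
  · exact ⟨V₁, V₂, h₁, h₂, rfl, htriv, h1a, Or.inl ⟨h1b, h1c⟩⟩
  obtain ⟨hrow1, hcol1, j₀, k₀, hneg, hoth⟩ := id h₁
  obtain ⟨h2ent, h2row, h2col⟩ := id h₂
  -- the -1 entry of V₁ is at (j, a)
  have hjk₀ : (j, a) = (j₀, k₀) := by
    by_contra hcon
    rcases hoth j a hcon with h | h <;> rw [h1a] at h <;> norm_num at h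
  have h01 : ∀ i k, i ≠ j ∨ k ≠ a → V₁ i k = 0 ∨ V₁ i k = 1 := by
    intro i k h
    refine hoth i k ?_
    rw [← hjk₀]
    intro he
    rw [Prod.mk.injEq] at he
    rcases h with h' | h'
    · exact h' he.1
    · exact h' he.2
  have h01row : ∀ i, i ≠ j → ∀ k, V₁ i k = 0 ∨ V₁ i k = 1 :=
    fun i hi k => h01 i k (Or.inl hi)
  -- extract τ from V₂
  have hτex : ∀ i : Fin r, ∃ k₁, V₂ i k₁ = 1 ∧ ∀ k, k ≠ k₁ → V₂ i k = 0 :=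
    fun i => unit_of (V₂ i) (fun k => h2ent i k) (h2row i)
  choose τ hτ1 hτ0 using hτex
  have hV2eq : ∀ i k, V₂ i k = if k = τ i then 1 else 0 := by
    intro i k
    by_cases h : k = τ i
    · rw [if_pos h, h]; exact hτ1 i
    · rw [if_neg h]; exact hτ0 i k h
  have hτinj : Function.Injective τ := by
    intro x y hxy
    by_contra hne
    have hy1 : V₂ y (τ x) = 1 := by rw [hxy]; exact hτ1 y
    have h2 : (2:ℤ) ≤ ∑ i, V₂ i (τ x) := by
      have h := pair_le_sum (fun i => V₂ i (τ x)) x y hne (fun i _ _ => by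
        show (0:ℤ) ≤ V₂ i (τ x)
        rcases h2ent i (τ x) with h | h <;> rw [h] <;> norm_num)
      have h' : V₂ x (τ x) + V₂ y (τ x) ≤ ∑ i, V₂ i (τ x) := h
      rw [hτ1 x, hy1] at h'
      linarith
    rcases h2col (τ x) with h | h <;> rw [h] at h2 <;> norm_num at h2
  have hτj : τ j = d := by
    by_contra hne
    have h := hτ0 j d (fun h => hne h.symm)
    rw [h2d] at h; norm_num at h
  have hτj' : τ j' = a := by
    by_contra hne
    have h := hτ0 j' a (fun h => hne h.symm)
    rw [h2a] at h; norm_num at h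
  -- extract σ from V₁ (rows other than j)
  have hσex : ∀ i : Fin r, ∃ k₁, i ≠ j → V₁ i k₁ = 1 ∧ ∀ k, k ≠ k₁ → V₁ i k = 0 := by
    intro i
    by_cases hi : i = j
    · exact ⟨b, fun h => absurd hi h⟩
    · obtain ⟨k₁, hk1, hk0⟩ := unit_of (V₁ i) (h01row i hi) (hrow1 i)
      exact ⟨k₁, fun _ => ⟨hk1, hk0⟩⟩
  choose σ hσ using hσex
  have hσ1 : ∀ i, i ≠ j → V₁ i (σ i) = 1 := fun i hi => (hσ i hi).1
  have hσ0 : ∀ i, i ≠ j → ∀ k, k ≠ σ i → V₁ i k = 0 := fun i hi => (hσ i hi).2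
  have hV1eq : ∀ i, i ≠ j → ∀ k, V₁ i k = if k = σ i then 1 else 0 := by
    intro i hi k
    by_cases h : k = σ i
    · rw [if_pos h, h]; exact hσ1 i hi
    · rw [if_neg h]; exact hσ0 i hi k h
  have hσval : ∀ i, i ≠ j → ∀ k, V₁ i k = 1 → σ i = k := by
    intro i hi k hk
    by_contra hne
    rw [hσ0 i hi k (fun h => hne h.symm)] at hk
    norm_num at hk
  have hpa : σ j' ≠ a := by
    intro h
    apply htriv
    rw [← h]
    exact hσ1 j' hjj'
  -- row j of V₁ vanishes off {a, b, c}
  have habc_sum : ∑ k ∈ ({a, b, c} : Finset (Fin n)), V₁ j k = 1 := by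
    rw [show ({a, b, c} : Finset (Fin n)) = insert a {b, c} from rfl,
      Finset.sum_insert (by simp [hab, hac]), Finset.sum_pair hbc, h1a, h1b, h1c]
    ring
  have hV1j0 : ∀ k, k ≠ a → k ≠ b → k ≠ c → V₁ j k = 0 := by
    have hsdiff : ∑ k ∈ Finset.univ \ ({a, b, c} : Finset (Fin n)), V₁ j k = 0 := by
      have h := Finset.sum_sdiff (f := V₁ j)
        (Finset.subset_univ ({a, b, c} : Finset (Fin n)))
      rw [habc_sum, hrow1 j] at h
      linarith
    intro k hka hkb hkc
    have hnn : ∀ k' ∈ Finset.univ \ ({a, b, c} : Finset (Fin n)), 0 ≤ V₁ j k' := by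
      intro k' hk'
      simp only [Finset.mem_sdiff, Finset.mem_univ, Finset.mem_insert,
        Finset.mem_singleton, true_and] at hk'
      push_neg at hk'
      rcases h01 j k' (Or.inr hk'.1) with h | h <;> rw [h] <;> norm_num
    refine (Finset.sum_eq_zero_iff_of_nonneg hnn).mp hsdiff k ?_
    simp only [Finset.mem_sdiff, Finset.mem_univ, Finset.mem_insert,
      Finset.mem_singleton, true_and]
    push_neg
    exact ⟨hka, hkb, hkc⟩
  have hV1j : ∀ k, V₁ j k = (if k = b then 1 else 0) + (if k = c then 1 else 0)
      - (if k = a then 1 else 0) := by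
    intro k
    by_cases h1 : k = b
    · subst h1
      rw [if_pos rfl, if_neg hbc, if_neg (fun h => hab h.symm), h1b]; ring
    · by_cases h2 : k = c
      · subst h2
        rw [if_neg (fun h => hbc h.symm), if_pos rfl, if_neg (fun h => hac h.symm),
          h1c]; ring
      · by_cases h3 : k = a
        · subst h3
          rw [if_neg h1, if_neg h2, if_pos rfl, h1a]; ring
        · rw [if_neg h1, if_neg h2, if_neg h3, hV1j0 k h3 h1 h2]; ring
  -- column facts for V₁
  have hnnV1 : ∀ k, k ≠ a → ∀ i : Fin r, (0:ℤ) ≤ V₁ i k := by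
    intro k hk i
    rcases h01 i k (Or.inr hk) with h | h <;> rw [h] <;> norm_num
  have hcol2 : ∀ k, k ≠ a → ∀ x y : Fin r, x ≠ y → V₁ x k = 1 → V₁ y k = 1 →
      False := by
    intro k hk x y hxy hx hy
    have h := pair_le_sum (fun i => V₁ i k) x y hxy (fun i _ _ => hnnV1 k hk i)
    have h' : V₁ x k + V₁ y k ≤ ∑ i, V₁ i k := h
    rw [hx, hy] at h'
    rcases hcol1 k with hc | hc <;> rw [hc] at h' <;> norm_num at h'
  have hσb' : ∀ x, x ≠ j → σ x ≠ b := by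
    intro x hx hσxb
    have hx1 : V₁ x b = 1 := by rw [← hσxb]; exact hσ1 x hx
    exact hcol2 b (fun h => hab h.symm) x j hx hx1 h1b
  have hσc' : ∀ x, x ≠ j → σ x ≠ c := by
    intro x hx hσxc
    have hx1 : V₁ x c = 1 := by rw [← hσxc]; exact hσ1 x hx
    exact hcol2 c (fun h => hac h.symm) x j hx hx1 h1c
  have hσinj' : ∀ x y, x ≠ j → y ≠ j → σ x = σ y → σ x ≠ a → x = y := by
    intro x y hx hy hxy hxa
    by_contra hne
    have hy1 : V₁ y (σ x) = 1 := by rw [hxy]; exact hσ1 y hy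
    exact hcol2 (σ x) hxa x y hne (hσ1 x hx) hy1
  have hσa2' : ∀ x y z : Fin r, x ≠ j → y ≠ j → z ≠ j → σ x = a → σ y = a →
      σ z = a → x = y ∨ x = z ∨ y = z := by
    intro x y z hx hy hz hxa hya hza
    by_contra hcon
    push_neg at hcon
    obtain ⟨hxy, hxz, hyz⟩ := hcon
    have hx1 : V₁ x a = 1 := by rw [← hxa]; exact hσ1 x hx
    have hy1 : V₁ y a = 1 := by rw [← hya]; exact hσ1 y hy
    have hz1 : V₁ z a = 1 := by rw [← hza]; exact hσ1 z hz
    have hsum4 : ∑ i ∈ ({x, y, z, j} : Finset (Fin r)), V₁ i a = 2 := by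
      rw [show ({x, y, z, j} : Finset (Fin r)) = insert x (insert y {z, j}) from rfl,
        Finset.sum_insert (by simp [hxy, hxz, hx]),
        Finset.sum_insert (by simp [hyz, hy]), Finset.sum_pair hz,
        hx1, hy1, hz1, h1a]
      ring
    have h := subset_le_sum (fun i => V₁ i a) {x, y, z, j} (fun i hi => by
      show (0:ℤ) ≤ V₁ i a
      simp only [Finset.mem_insert, Finset.mem_singleton] at hi
      push_neg at hi
      rcases h01 i a (Or.inl hi.2.2.2) with h | h <;> rw [h] <;> norm_num)
    have h' : (2:ℤ) ≤ ∑ i, V₁ i a := by rw [← hsum4]; exact h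
    rcases hcol1 a with hc | hc <;> rw [hc] at h' <;> norm_num at h'
  set F : Fin n → Prop := fun k => (∑ i, V₁ i k = 1) ∧ ∃ y, τ y = k with hFdef
  have hσa1' : ¬ F a → ∀ x y, x ≠ j → y ≠ j → σ x = a → σ y = a → x = y := by
    intro hnF x y hx hy hxa hya
    by_contra hne
    have hcola : ∑ i, V₁ i a = 0 := by
      rcases hcol1 a with hc | hc
      · exact hc
      · exact absurd ⟨hc, ⟨j', hτj'⟩⟩ hnF
    have hx1 : V₁ x a = 1 := by rw [← hxa]; exact hσ1 x hx
    have hy1 : V₁ y a = 1 := by rw [← hya]; exact hσ1 y hy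
    have hsum3 : ∑ i ∈ ({x, y, j} : Finset (Fin r)), V₁ i a = 1 := by
      rw [show ({x, y, j} : Finset (Fin r)) = insert x {y, j} from rfl,
        Finset.sum_insert (by simp [hne, hx]), Finset.sum_pair hy,
        hx1, hy1, h1a]
      ring
    have h := subset_le_sum (fun i => V₁ i a) {x, y, j} (fun i hi => by
      show (0:ℤ) ≤ V₁ i a
      simp only [Finset.mem_insert, Finset.mem_singleton] at hi
      push_neg at hi
      rcases h01 i a (Or.inl hi.2.2) with h | h <;> rw [h] <;> norm_num)
    have h' : (1:ℤ) ≤ ∑ i, V₁ i a := by rw [← hsum3]; exact h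
    rw [hcola] at h'
    norm_num at h'
  have hFσ' : ∀ k, F k → k ≠ a → k ≠ b → k ≠ c → ∃ x, x ≠ j ∧ σ x = k := by
    intro k hk hka hkb hkc
    by_contra hcon
    push_neg at hcon
    have hz : ∀ i, V₁ i k = 0 := by
      intro i
      by_cases hi : i = j
      · rw [hi]; exact hV1j0 k hka hkb hkc
      · exact hσ0 i hi k (fun h => hcon i hi h.symm)
    have hzz : ∑ i, V₁ i k = 0 := Finset.sum_eq_zero (fun i _ => hz i)
    rw [hk.1] at hzz
    norm_num at hzz
  have hFa' : F a → ∃ x y, x ≠ j ∧ y ≠ j ∧ x ≠ y ∧ σ x = a ∧ σ y = a := by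
    intro hk
    have hex1 : ∃ x, x ≠ j ∧ V₁ x a = 1 := by
      by_contra hcon
      push_neg at hcon
      have hz : ∀ i, i ≠ j → V₁ i a = 0 :=
        fun i hi => (h01row i hi a).resolve_right (hcon i hi)
      have hs : ∑ i, V₁ i a = V₁ j a :=
        Finset.sum_eq_single_of_mem j (Finset.mem_univ j) (fun i _ hi => hz i hi)
      rw [hk.1, h1a] at hs
      norm_num at hs
    obtain ⟨x, hxj, hx1⟩ := hex1
    have hex2 : ∃ y, y ≠ j ∧ y ≠ x ∧ V₁ y a = 1 := by
      by_contra hcon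
      push_neg at hcon
      have hz : ∀ i, i ∉ ({x, j} : Finset (Fin r)) → V₁ i a = 0 := by
        intro i hi
        simp only [Finset.mem_insert, Finset.mem_singleton] at hi
        push_neg at hi
        exact (h01row i hi.2 a).resolve_right (hcon i hi.2 hi.1)
      have hs : ∑ i, V₁ i a = ∑ i ∈ ({x, j} : Finset (Fin r)), V₁ i a :=
        (Finset.sum_subset (Finset.subset_univ _) (fun i _ hi => hz i hi)).symm
      rw [Finset.sum_pair hxj, hx1, h1a, hk.1] at hs
      norm_num at hs
    obtain ⟨y, hyj, hyx, hy1⟩ := hex2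
    exact ⟨x, y, hxj, hyj, fun h => hyx h.symm, hσval x hxj a hx1, hσval y hyj a hy1⟩
  -- apply the core combinatorial lemma
  obtain ⟨t, htinj, htj', htopt, htjv, htpin, htcov⟩ :=
    core σ τ j j' a b c d (σ j') F hτinj hτj hτj' hjj' rfl hpa hab hac hbc hda
      hσb' hσc' hσinj' hσa2' hσa1' (fun k hk => hk.2) hFσ' hFa'
  have htopt' : ∀ i, i ≠ j → t i = σ i ∨ t i = τ i := by
    intro i hij
    by_cases hij' : i = j'
    · left; rw [hij']; exact htj'
    · exact htopt i hij hij'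
  set V₂' : Matrix (Fin r) (Fin n) ℤ := fun i k => if k = t i then 1 else 0
    with hV2'def
  set V₁' : Matrix (Fin r) (Fin n) ℤ := fun i k => V₁ i k + V₂ i k - V₂' i k
    with hV1'def
  have hV1'app : ∀ i k, V₁' i k = V₁ i k + V₂ i k - (if k = t i then 1 else 0) :=
    fun i k => rfl
  have hV2'app : ∀ i k, V₂' i k = if k = t i then 1 else 0 := fun i k => rfl
  have hrowj : ∀ k, V₁' j k = (if k = b then 1 else 0) + (if k = c then 1 else 0)
      - (if k = a then 1 else 0) + (if k = d then 1 else 0)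
      - (if k = t j then 1 else 0) := by
    intro k
    rw [hV1'app j k, hV1j k, hV2eq j k, hτj]
  have hnf : ∃ u v : Fin n, u ≠ v ∧ u ≠ a ∧ v ≠ a ∧
      (∀ k, V₁' j k = (if k = u then 1 else 0) + (if k = v then 1 else 0)
        - (if k = a then 1 else 0)) ∧
      ((u = b ∧ v = c) ∨ (u = b ∧ v = d) ∨ (u = c ∧ v = d)) := by
    by_cases htd : t j = d
    · refine ⟨b, c, hbc, fun h => hab h.symm, fun h => hac h.symm, ?_,
        Or.inl ⟨rfl, rfl⟩⟩
      intro k; rw [hrowj k, htd]; ring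
    · rcases htjv with h | h | h
      · have hdc : d ≠ c := fun h' => htd (htpin (Or.inr h'))
        refine ⟨c, d, fun h' => hdc h'.symm, fun h' => hac h'.symm, hda, ?_,
          Or.inr (Or.inr ⟨rfl, rfl⟩)⟩
        intro k; rw [hrowj k, h]; ring
      · have hdb : d ≠ b := fun h' => htd (htpin (Or.inl h'))
        refine ⟨b, d, fun h' => hdb h'.symm, fun h' => hab h'.symm, hda, ?_,
          Or.inr (Or.inl ⟨rfl, rfl⟩)⟩
        intro k; rw [hrowj k, h]; ring
      · exact absurd h htd
  obtain ⟨u, v, huv, hua, hva, hval, hpat⟩ := hnf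
  have hja : V₁' j a = -1 := by
    rw [hval a, if_neg (fun h => hua h.symm), if_neg (fun h => hva h.symm),
      if_pos rfl]
    norm_num
  have hu1 : V₁' j u = 1 := by
    rw [hval u, if_pos rfl, if_neg huv, if_neg hua]
    norm_num
  have hv1 : V₁' j v = 1 := by
    rw [hval v, if_neg (fun h => huv h.symm), if_pos rfl, if_neg hva]
    norm_num
  have hent_j : ∀ k, k ≠ a → V₁' j k = 0 ∨ V₁' j k = 1 := by
    intro k hk
    rw [hval k, if_neg hk]
    by_cases h1 : k = u <;> by_cases h2 : k = v
    · exact absurd (h1.symm.trans h2) huv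
    · right; rw [if_pos h1, if_neg h2]; ring
    · right; rw [if_neg h1, if_pos h2]; ring
    · left; rw [if_neg h1, if_neg h2]; ring
  have hent1 : ∀ i, i ≠ j → t i = σ i → ∀ k, V₁' i k = if k = τ i then 1 else 0 := by
    intro i hij hti k
    rw [hV1'app i k, hV1eq i hij k, hV2eq i k, hti]
    ring
  have hent2 : ∀ i, i ≠ j → t i = τ i → ∀ k, V₁' i k = if k = σ i then 1 else 0 := by
    intro i hij hti k
    rw [hV1'app i k, hV1eq i hij k, hV2eq i k, hti]
    ring
  have hV2'row : ∀ i, ∑ k, V₂' i k = 1 := by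
    intro i
    rw [Finset.sum_congr rfl (fun k _ => hV2'app i k)]
    simp
  have hV1'row : ∀ i, ∑ k, V₁' i k = 1 := by
    intro i
    rw [Finset.sum_congr rfl (fun k _ => hV1'app i k)]
    rw [Finset.sum_sub_distrib, Finset.sum_add_distrib, hrow1 i, h2row i]
    have h : ∑ k, (if k = t i then (1:ℤ) else 0) = 1 := by simp
    rw [h]
    ring
  have hcolV2 : ∀ k, ∑ i, V₂ i k = if ∃ i, τ i = k then 1 else 0 := by
    intro k
    rw [Finset.sum_congr rfl (fun i _ => hV2eq i k)]
    exact colsum_unit τ hτinj k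
  have hcolV2' : ∀ k, ∑ i, V₂' i k = if ∃ i, t i = k then 1 else 0 := by
    intro k
    rw [Finset.sum_congr rfl (fun i _ => hV2'app i k)]
    exact colsum_unit t htinj k
  have hcolbc : ∀ k, V₁ j k = 1 → k ≠ a → ∑ i, V₁ i k = 1 := by
    intro k hjk hka
    have h := subset_le_sum (fun i => V₁ i k) {j} (fun i _ => hnnV1 k hka i)
    have h' : V₁ j k ≤ ∑ i, V₁ i k := by simpa using h
    rw [hjk] at h'
    rcases hcol1 k with hc | hc
    · rw [hc] at h'; norm_num at h'
    · exact hc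
  have hcolσ : ∀ i, i ≠ j → σ i ≠ a → ∑ i', V₁ i' (σ i) = 1 := by
    intro i hij hia
    have h := subset_le_sum (fun i' => V₁ i' (σ i)) {i}
      (fun i' _ => hnnV1 (σ i) hia i')
    have h' : V₁ i (σ i) ≤ ∑ i', V₁ i' (σ i) := by simpa using h
    rw [hσ1 i hij] at h'
    rcases hcol1 (σ i) with hc | hc
    · rw [hc] at h'; norm_num at h'
    · exact hc
  have htval : ∀ k, (∃ i, t i = k) → (∃ y, τ y = k) ∨ ∑ i', V₁ i' k = 1 := by
    rintro k ⟨i, hi⟩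
    by_cases hij : i = j
    · rw [hij] at hi
      rcases htjv with h | h | h
      · have hkb : b = k := by rw [← h, hi]
        exact Or.inr (hkb ▸ hcolbc b h1b (fun h' => hab h'.symm))
      · have hkc : c = k := by rw [← h, hi]
        exact Or.inr (hkc ▸ hcolbc c h1c (fun h' => hac h'.symm))
      · exact Or.inl ⟨j, by rw [hτj, ← hi, h]⟩
    · rcases htopt' i hij with h | h
      · by_cases hia : σ i = a
        · refine Or.inl ⟨j', ?_⟩
          rw [hτj', ← hi, h, hia]
        · refine Or.inr ?_
          rw [← hi, h]
          exact hcolσ i hij hia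
      · exact Or.inl ⟨i, by rw [← h]; exact hi⟩
  have hV1'col : ∀ k, ∑ i, V₁' i k = 0 ∨ ∑ i, V₁' i k = 1 := by
    intro k
    have hsplit : ∑ i, V₁' i k =
        (∑ i, V₁ i k) + (∑ i, V₂ i k) - (∑ i, V₂' i k) := by
      rw [← Finset.sum_add_distrib, ← Finset.sum_sub_distrib]
    rw [hsplit, hcolV2 k, hcolV2' k]
    rcases hcol1 k with h1 | h1 <;> rw [h1]
    · by_cases hτk : ∃ i, τ i = k
      · rw [if_pos hτk]
        by_cases htk : ∃ i, t i = k
        · rw [if_pos htk]; left; ring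
        · rw [if_neg htk]; right; ring
      · rw [if_neg hτk]
        by_cases htk : ∃ i, t i = k
        · exfalso
          rcases htval k htk with h | h
          · exact hτk h
          · rw [h1] at h; norm_num at h
        · rw [if_neg htk]; left; ring
    · by_cases hτk : ∃ i, τ i = k
      · rw [if_pos hτk]
        by_cases htk : ∃ i, t i = k
        · rw [if_pos htk]; right; ring
        · exact absurd (htcov k ⟨h1, hτk⟩) htk
      · rw [if_neg hτk]
        by_cases htk : ∃ i, t i = k
        · rw [if_pos htk]; left; ring
        · rw [if_neg htk]; right; ring
  refine ⟨V₁', V₂', ⟨hV1'row, hV1'col, j, a, hja, ?_⟩, ⟨?_, hV2'row, ?_⟩,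
    ?_, ?_, hja, ?_⟩
  · intro i k hne
    by_cases hij : i = j
    · subst hij
      have hka : k ≠ a := by
        intro h
        exact hne (by rw [h])
      exact hent_j k hka
    · rcases htopt' i hij with h | h
      · rw [hent1 i hij h k]
        by_cases hh : k = τ i
        · right; rw [if_pos hh]
        · left; rw [if_neg hh]
      · rw [hent2 i hij h k]
        by_cases hh : k = σ i
        · right; rw [if_pos hh]
        · left; rw [if_neg hh]
  · intro i k
    rw [hV2'app i k]
    by_cases hh : k = t i
    · right; rw [if_pos hh]
    · left; rw [if_neg hh]
  · intro k
    rw [hcolV2' k]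
    by_cases hh : ∃ i, t i = k
    · right; rw [if_pos hh]
    · left; rw [if_neg hh]
  · ext i k
    simp only [Matrix.add_apply]
    rw [hV1'app i k, hV2'app i k]
    ring
  · rw [hent1 j' hjj' htj' a, if_pos hτj'.symm]
  · rcases hpat with ⟨rfl, rfl⟩ | ⟨rfl, rfl⟩ | ⟨rfl, rfl⟩
    · exact Or.inl ⟨hu1, hv1⟩
    · exact Or.inr (Or.inl ⟨hu1, hv1⟩)
    · exact Or.inr (Or.inr ⟨hu1, hv1⟩)
end

section
/- Let 1 ≤ r ≤ n and let P = (V⁽¹⁾,…,V⁽ᴺ⁾) and P' = (V'⁽¹⁾,…,V'⁽ᴺ⁾) be proper datasets of N votes with the same sufficient statistic, and suppose V⁽ⁱ⁾ ≠ V'⁽ⁱ'⁾ for some indices i, i'. Then there exists a sequence P = D₀, D₁, …, D_m with m ≤ 3 such that: each D_t is a proper or improper dataset of N votes with the same sufficient statistic as P; each D_{t+1} is obtained from D_t by a swap operation among two votes; the i-th vote of D_m is a proper vote whose number of concurrences with V'⁽ⁱ'⁾ is strictly greater than the number of concurrences of V⁽ⁱ⁾ with V'⁽ⁱ'⁾;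 if D_m is an improper dataset, then its improper vote together with its i-th vote forms a resolvable pair; and whenever D_t and D_{t+1} are both improper datasets, there exists a resolvable pair occupying the same pair of indices in both D_t and D_{t+1}, at least one of whose indices belongs to the two votes replaced in the swap from D_t to D_{t+1}. -/
/-- A proper dataset: a finite sequence of proper votes. -/
def IsProperDataset (r n N : ℕ) (D : Fin N → Matrix (Fin r) (Fin n) ℤ) : Prop :=
  ∀ i, IsProperVote r n (D i)

/-- An improper dataset: exactly one member is an improper vote, all other members are
proper votes, and the entrywise sum of all members is nonnegative. -/
def IsImproperDataset (r n N : ℕ) (D : Fin N → Matrix (Fin r) (Fin n) ℤ) : Prop :=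
  (∃ i₀, IsImproperVote r n (D i₀) ∧ ∀ i, i ≠ i₀ → IsProperVote r n (D i)) ∧
  ∀ j k, 0 ≤ ∑ i, D i j k

/-- A resolvable pair in a dataset `D`: indices `iim ≠ ipr` such that `D iim` is an
improper vote, `D ipr` is a proper vote, and the `-1` entry of `D iim` is at a cell
where `D ipr` has entry `1`. -/
def IsResolvablePair (r n N : ℕ) (D : Fin N → Matrix (Fin r) (Fin n) ℤ)
    (iim ipr : Fin N) : Prop :=
  iim ≠ ipr ∧ IsImproperVote r n (D iim) ∧ IsProperVote r n (D ipr) ∧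
  ∃ j k, D iim j k = -1 ∧ D ipr j k = 1

open Classical in
/-- Number of concurrences of two (proper) votes: the number of positions `j` at which
the two votes have identical rows (i.e. rank the same candidate in position `j`). -/
noncomputable def concurrences (r n : ℕ) (V V' : Matrix (Fin r) (Fin n) ℤ) : ℕ :=
  (Finset.univ.filter fun j : Fin r => ∀ k, V j k = V' j k).card

namespace S7

open Finset

variable {r n N : ℕ}

/-- proper vote from a function -/
def pv (r n : ℕ) (f : Fin r → Fin n) : Matrix (Fin r) (Fin n) ℤ :=
  fun a k => if f a = k then 1 else 0

lemma pv_one {f : Fin r → Fin n} {a : Fin r} {k : Fin n} (h : f a = k) : pv r n f a k = 1 :=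
  if_pos h

lemma pv_zero {f : Fin r → Fin n} {a : Fin r} {k : Fin n} (h : f a ≠ k) : pv r n f a k = 0 :=
  if_neg h

lemma pv_eq_one_iff {f : Fin r → Fin n} {a : Fin r} {k : Fin n} :
    pv r n f a k = 1 ↔ f a = k := by
  unfold pv; split <;> simp_all

lemma pv_row (f : Fin r → Fin n) (a : Fin r) : ∑ k, pv r n f a k = 1 := by
  simp [pv, Finset.sum_ite_eq]

lemma pv_col (f : Fin r → Fin n) (k : Fin n) :
    ∑ x, pv r n f x k = ((univ.filter fun x => f x = k).card : ℤ) := by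
  simp [pv]

lemma card_fiber_le_one {f : Fin r → Fin n} (hf : Function.Injective f) (k : Fin n) :
    (univ.filter fun x => f x = k).card ≤ 1 := by
  apply Finset.card_le_one.mpr
  intro a ha b hb
  simp only [mem_filter] at ha hb
  exact hf (ha.2.trans hb.2.symm)

lemma isProper_pv {f : Fin r → Fin n} (hf : Function.Injective f) :
    IsProperVote r n (pv r n f) := by
  refine ⟨fun a k => ?_, pv_row f, fun k => ?_⟩
  · unfold pv; split <;> simp
  · rw [pv_col]
    rcases Nat.le_one_iff_eq_zero_or_eq_one.mp (card_fiber_le_one hf k) with h | h <;> simp [h]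

lemma proper_entry_nonneg {V : Matrix (Fin r) (Fin n) ℤ} (hV : IsProperVote r n V)
    (a : Fin r) (k : Fin n) : 0 ≤ V a k := by
  rcases hV.1 a k with h | h <;> simp [h]

lemma exists_pv {V : Matrix (Fin r) (Fin n) ℤ} (hV : IsProperVote r n V) :
    ∃ f : Fin r → Fin n, Function.Injective f ∧ V = pv r n f := by
  obtain ⟨h01, hrow, hcol⟩ := hV
  have hex : ∀ a, ∃ k, V a k = 1 := by
    intro a
    by_contra h
    push_neg at h
    have hz : ∀ k, V a k = 0 := fun k => (h01 a k).resolve_right (h k)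
    have h1 := hrow a
    rw [Finset.sum_eq_zero (fun k _ => hz k)] at h1
    norm_num at h1
  choose f hf using hex
  have key : ∀ a k, V a k = 1 → k = f a := by
    intro a k h1
    by_contra hk
    have h2 : V a k + V a (f a) ≤ ∑ k', V a k' := by
      calc V a k + V a (f a) = ∑ k' ∈ ({k, f a} : Finset (Fin n)), V a k' := by
            rw [Finset.sum_insert (by simpa using hk), Finset.sum_singleton]
        _ ≤ ∑ k', V a k' := Finset.sum_le_sum_of_subset_of_nonneg (Finset.subset_univ _)
              (fun x _ _ => by rcases h01 a x with h | h <;> simp [h])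
    rw [hrow a, h1, hf a] at h2
    norm_num at h2
  have hinj : Function.Injective f := by
    intro a b hab
    by_contra hne
    have h2 : V a (f a) + V b (f a) ≤ ∑ x, V x (f a) := by
      calc V a (f a) + V b (f a) = ∑ x ∈ ({a, b} : Finset (Fin r)), V x (f a) := by
            rw [Finset.sum_insert (by simpa using hne), Finset.sum_singleton]
        _ ≤ _ := Finset.sum_le_sum_of_subset_of_nonneg (Finset.subset_univ _)
              (fun x _ _ => by rcases h01 x (f a) with h | h <;> simp [h])
    rw [hf a, hab, hf b] at h2
    rcases hcol (f b) with h | h <;> rw [h] at h2 <;> norm_num at h2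
  refine ⟨f, hinj, ?_⟩
  funext a k
  by_cases hk : f a = k
  · rw [pv_one hk, ← hk, hf a]
  · rw [pv_zero hk]
    rcases h01 a k with h | h
    · exact h
    · exact absurd (key a k h).symm hk

lemma concur_pv (f g : Fin r → Fin n) :
    concurrences r n (pv r n f) (pv r n g) = (univ.filter fun a => f a = g a).card := by
  classical
  unfold concurrences
  congr 1
  apply Finset.filter_congr
  intro a _
  constructor
  · intro h
    have h1 := (h (f a)).symm
    rw [pv_one rfl] at h1
    exact (pv_eq_one_iff.mp h1).symm
  · intro h k
    unfold pv
    rw [h]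

lemma gain_lt {σ τ f : Fin r → Fin n} (j : Fin r) (hjτ : σ j ≠ τ j) (hfj : f j = τ j)
    (hpres : ∀ a, σ a = τ a → f a = σ a) :
    (univ.filter fun a => σ a = τ a).card < (univ.filter fun a => f a = τ a).card := by
  apply Finset.card_lt_card
  rw [Finset.ssubset_iff_of_subset]
  · exact ⟨j, by simp [hfj], by simp [hjτ]⟩
  · intro a ha
    simp only [mem_filter, mem_univ, true_and] at ha ⊢
    rw [hpres a ha]; exact ha

end S7
namespace S7

open Finset

variable {r n N : ℕ}

/-- improper vote: proper shape `g` plus a displaced cell in row `a`: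
an extra `+1` in column `b` and a `-1` in column `c`. -/
def iv (r n : ℕ) (g : Fin r → Fin n) (a : Fin r) (b c : Fin n) :
    Matrix (Fin r) (Fin n) ℤ :=
  fun x k => if x = a then pv r n g x k + (if b = k then 1 else 0) - (if c = k then 1 else 0)
             else pv r n g x k

lemma iv_split (g : Fin r → Fin n) (a : Fin r) (b c : Fin n) (x : Fin r) (k : Fin n) :
    iv r n g a b c x k
      = pv r n g x k + (if x = a then (if b = k then 1 else 0) else 0)
          - (if x = a then (if c = k then 1 else 0) else 0) := by
  unfold iv
  by_cases hx : x = a <;> simp [hx]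

lemma iv_col (g : Fin r → Fin n) (a : Fin r) (b c : Fin n) (k : Fin n) :
    ∑ x, iv r n g a b c x k
      = ((univ.filter fun x => g x = k).card : ℤ)
          + (if b = k then 1 else 0) - (if c = k then 1 else 0) := by
  simp only [iv_split]
  rw [Finset.sum_sub_distrib, Finset.sum_add_distrib, pv_col]
  congr 1 <;> rw [Finset.sum_ite_eq' univ a] <;> simp

lemma iv_neg (g : Fin r → Fin n) (a : Fin r) (b c : Fin n)
    (hbc : b ≠ c) (hgac : g a ≠ c) : iv r n g a b c a c = -1 := by
  unfold iv
  rw [if_pos rfl, pv_zero hgac, if_neg hbc, if_pos rfl]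
  ring

lemma isImproper_iv (g : Fin r → Fin n) (a : Fin r) (b c : Fin n)
    (hbc : b ≠ c) (hgab : g a ≠ b) (hgac : g a ≠ c)
    (hb : ∀ x, g x ≠ b)
    (hfib : ∀ k, k ≠ c → ∀ x y, g x = k → g y = k → x = y)
    (hc1 : ∃ x, g x = c)
    (hc2 : ∀ x y z, g x = c → g y = c → g z = c → x = y ∨ x = z ∨ y = z) :
    IsImproperVote r n (iv r n g a b c) := by
  refine ⟨?_, ?_, a, c, iv_neg g a b c hbc hgac, ?_⟩
  · -- row sums
    intro x
    unfold iv
    by_cases hx : x = a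
    · subst hx
      rw [Finset.sum_congr rfl (fun k _ => if_pos rfl)]
      rw [Finset.sum_sub_distrib, Finset.sum_add_distrib, pv_row]
      rw [Finset.sum_ite_eq univ b, Finset.sum_ite_eq univ c]
      simp
    · rw [Finset.sum_congr rfl (fun k _ => if_neg hx)]
      exact pv_row g x
  · -- column sums
    intro k
    rw [iv_col]
    by_cases hkb : b = k
    · subst hkb
      have hcard : (univ.filter fun x => g x = b).card = 0 := by
        rw [Finset.card_eq_zero, Finset.filter_eq_empty_iff]
        exact fun x _ => hb x
      rw [hcard, if_pos rfl, if_neg (fun h => hbc h.symm)]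
      right; norm_num
    · rw [if_neg hkb]
      by_cases hkc : c = k
      · subst hkc
        have h1 : 1 ≤ (univ.filter fun x => g x = c).card := by
          obtain ⟨x, hx⟩ := hc1
          exact Finset.card_pos.mpr ⟨x, by simp [hx]⟩
        have h2 : (univ.filter fun x => g x = c).card ≤ 2 := by
          by_contra h
          push_neg at h
          obtain ⟨x, hx, y, hy, z, hz, hxy, hxz, hyz⟩ := Finset.two_lt_card.mp h
          simp only [mem_filter, mem_univ, true_and] at hx hy hz
          rcases hc2 x y z hx hy hz with h | h | h
          · exact hxy h
          · exact hxz h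
          · exact hyz h
        rw [if_pos rfl]
        interval_cases h : (univ.filter fun x => g x = c).card
        · left; norm_num
        · right; norm_num
      · rw [if_neg hkc]
        have := hfib k (fun h => hkc h.symm)
        have hle : (univ.filter fun x => g x = k).card ≤ 1 := by
          apply Finset.card_le_one.mpr
          intro u hu v hv
          simp only [mem_filter, mem_univ, true_and] at hu hv
          exact this u v hu hv
        rcases Nat.le_one_iff_eq_zero_or_eq_one.mp hle with h | h <;> rw [h] <;> simp
  · -- all other entries 0/1
    intro x k hxk
    unfold iv
    by_cases hx : x = a
    · subst hx
      rw [if_pos rfl]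
      have hkc : c ≠ k := by
        intro h; exact hxk (by rw [h])
      rw [if_neg hkc]
      by_cases hkb : b = k
      · rw [if_pos hkb, pv_zero (fun h => hgab (h.trans hkb.symm))]
        right; norm_num
      · rw [if_neg hkb]
        unfold pv
        split <;> simp
    · rw [if_neg hx]
      unfold pv
      split <;> simp

lemma sum_apply2 (P : Fin N → Matrix (Fin r) (Fin n) ℤ) (a : Fin r) (k : Fin n) :
    (∑ v, P v) a k = ∑ v, P v a k := by
  rw [Matrix.sum_apply]

lemma proper_not_improper {D : Fin N → Matrix (Fin r) (Fin n) ℤ}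
    (hD : IsProperDataset r n N D) (hI : IsImproperDataset r n N D) : False := by
  obtain ⟨⟨i₀, hi₀, _⟩, _⟩ := hI
  obtain ⟨_, _, j', k', hneg, _⟩ := hi₀
  rcases (hD i₀).1 j' k' with h | h <;> omega

lemma update_two_sum {M : Type*} [AddCommGroup M] (P : Fin N → M) (i l : Fin N) (hil : i ≠ l)
    (Vi Vl : M) (h : Vi + Vl = P i + P l) :
    ∑ v, Function.update (Function.update P i Vi) l Vl v = ∑ v, P v := by
  classical
  have hmem : i ∈ univ \ {l} := by simp [hil]
  have e1 : ∑ v, Function.update (Function.update P i Vi) l Vl v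
      = Vl + ∑ x ∈ univ \ {l}, Function.update P i Vi x :=
    Finset.sum_update_of_mem (Finset.mem_univ l) _ _
  have e2 : ∑ x ∈ univ \ {l}, Function.update P i Vi x
      = Vi + ∑ x ∈ (univ \ {l}) \ {i}, P x :=
    Finset.sum_update_of_mem hmem _ _
  have e3 : ∑ v, P v = ∑ x ∈ univ \ {l}, P x + P l :=
    Finset.sum_eq_sum_sdiff_singleton_add (Finset.mem_univ l) P
  have e4 : ∑ x ∈ univ \ {l}, P x = ∑ x ∈ (univ \ {l}) \ {i}, P x + P i :=
    Finset.sum_eq_sum_sdiff_singleton_add hmem P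
  rw [e1, e2, e3, e4]
  rw [show Vl + (Vi + ∑ x ∈ (univ \ {l}) \ {i}, P x)
        = ∑ x ∈ (univ \ {l}) \ {i}, P x + (Vi + Vl) by abel, h]
  abel

end S7
namespace S7

open Finset

variable {r n N : ℕ}

/-- The conclusion of the main theorem, abbreviated. -/
def Goal (r n N : ℕ) (P P' : Fin N → Matrix (Fin r) (Fin n) ℤ) (i i' : Fin N) : Prop :=
  ∃ (m : ℕ) (D : ℕ → Fin N → Matrix (Fin r) (Fin n) ℤ) (R : ℕ → Fin N × Fin N),
    m ≤ 3 ∧ D 0 = P ∧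
    (∀ t ≤ m, (IsProperDataset r n N (D t) ∨ IsImproperDataset r n N (D t)) ∧
      ∑ i₀, D t i₀ = ∑ i₀, P i₀) ∧
    (∀ t < m, (R t).1 ≠ (R t).2 ∧
      (∀ i₀, i₀ ≠ (R t).1 → i₀ ≠ (R t).2 → D (t+1) i₀ = D t i₀) ∧
      D (t+1) (R t).1 + D (t+1) (R t).2 = D t (R t).1 + D t (R t).2) ∧
    IsProperVote r n (D m i) ∧
    concurrences r n (P i) (P' i') < concurrences r n (D m i) (P' i') ∧
    (IsImproperDataset r n N (D m) → ∃ iim, IsResolvablePair r n N (D m) iim i) ∧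
    (∀ t, t + 1 ≤ m →
      IsImproperDataset r n N (D t) → IsImproperDataset r n N (D (t+1)) →
      ∃ iim ipr, IsResolvablePair r n N (D t) iim ipr ∧
        IsResolvablePair r n N (D (t+1)) iim ipr ∧
        (iim = (R t).1 ∨ iim = (R t).2 ∨ ipr = (R t).1 ∨ ipr = (R t).2))

lemma build_one
    (P P' : Fin N → Matrix (Fin r) (Fin n) ℤ)
    (hP : IsProperDataset r n N P)
    (i i' l : Fin N) (hil : i ≠ l)
    (Vi Vl : Matrix (Fin r) (Fin n) ℤ)
    (hVi : IsProperVote r n Vi)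
    (hVl : IsProperVote r n Vl ∨
      (IsImproperVote r n Vl ∧ ∃ a c, Vl a c = -1 ∧ Vi a c = 1))
    (hsum : Vi + Vl = P i + P l)
    (hgain : concurrences r n (P i) (P' i') < concurrences r n Vi (P' i')) :
    Goal r n N P P' i i' := by
  classical
  set D1 : Fin N → Matrix (Fin r) (Fin n) ℤ :=
    Function.update (Function.update P i Vi) l Vl with hD1def
  have hD1i : D1 i = Vi := by
    rw [hD1def, Function.update_of_ne hil, Function.update_self]
  have hD1l : D1 l = Vl := by rw [hD1def, Function.update_self]
  have hD1o : ∀ v, v ≠ i → v ≠ l → D1 v = P v := fun v h1 h2 => by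
    rw [hD1def, Function.update_of_ne h2, Function.update_of_ne h1]
  have hsumD : ∑ v, D1 v = ∑ v, P v := update_two_sum P i l hil Vi Vl hsum
  have hprop : IsProperVote r n Vl → IsProperDataset r n N D1 := by
    intro hp v
    rcases eq_or_ne v i with rfl | h1
    · rwa [hD1i]
    rcases eq_or_ne v l with rfl | h2
    · rwa [hD1l]
    · rw [hD1o v h1 h2]; exact hP v
  have himp : IsImproperVote r n Vl → IsImproperDataset r n N D1 := by
    intro him
    constructor
    · refine ⟨l, by rwa [hD1l], fun v hv => ?_⟩
      rcases eq_or_ne v i with rfl | h1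
      · rwa [hD1i]
      · rw [hD1o v h1 hv]; exact hP v
    · intro a k
      have e : ∑ v, D1 v a k = ∑ v, P v a k := by
        rw [← sum_apply2, ← sum_apply2, hsumD]
      rw [e]
      exact Finset.sum_nonneg fun v _ => proper_entry_nonneg (hP v) a k
  have hD1ds : IsProperDataset r n N D1 ∨ IsImproperDataset r n N D1 := by
    rcases hVl with hp | ⟨him, _⟩
    · exact Or.inl (hprop hp)
    · exact Or.inr (himp him)
  refine ⟨1, fun t => if t = 0 then P else D1, fun _ => (i, l),
    by norm_num, by simp, ?_, ?_, ?_, ?_, ?_, ?_⟩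
  · intro t ht
    interval_cases t
    · exact ⟨Or.inl hP, rfl⟩
    · simpa using ⟨hD1ds, hsumD⟩
  · intro t ht
    have ht0 : t = 0 := Nat.lt_one_iff.mp ht
    subst ht0
    refine ⟨hil, fun i₀ h1 h2 => ?_, ?_⟩
    · simpa using hD1o i₀ h1 h2
    · simp only [Nat.zero_add, if_neg one_ne_zero, if_pos rfl]
      rw [hD1i, hD1l]
      exact hsum
  · simpa [hD1i] using hVi
  · simpa [hD1i] using hgain
  · intro h
    simp only [if_neg one_ne_zero] at h
    rcases hVl with hp | ⟨him, a, c, hneg, hone⟩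
    · exact absurd h (fun hI => proper_not_improper (hprop hp) hI)
    · refine ⟨l, hil.symm, ?_, ?_, a, c, ?_, ?_⟩ <;>
        simp only [if_neg one_ne_zero]
      · rwa [hD1l]
      · rwa [hD1i]
      · rwa [hD1l]
      · rwa [hD1i]
  · intro t ht hI0 _
    have ht0 : t = 0 := by omega
    subst ht0
    simp only [if_pos rfl] at hI0
    exact absurd hI0 (fun hI => proper_not_improper hP hI)

lemma build_two
    (P P' : Fin N → Matrix (Fin r) (Fin n) ℤ)
    (hP : IsProperDataset r n N P)
    (i i' l q : Fin N) (hil : i ≠ l) (hiq : i ≠ q) (hlq : l ≠ q)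
    (L1 Q1 Vi L2 : Matrix (Fin r) (Fin n) ℤ)
    (hL1 : IsProperVote r n L1) (hQ1 : IsProperVote r n Q1)
    (hVi : IsProperVote r n Vi) (hL2 : IsProperVote r n L2)
    (hs1 : L1 + Q1 = P l + P q)
    (hs2 : Vi + L2 = P i + L1)
    (hgain : concurrences r n (P i) (P' i') < concurrences r n Vi (P' i')) :
    Goal r n N P P' i i' := by
  classical
  set D1 : Fin N → Matrix (Fin r) (Fin n) ℤ :=
    Function.update (Function.update P l L1) q Q1 with hD1def
  have hD1l : D1 l = L1 := by
    rw [hD1def, Function.update_of_ne hlq, Function.update_self]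
  have hD1q : D1 q = Q1 := by rw [hD1def, Function.update_self]
  have hD1i : D1 i = P i := by
    rw [hD1def, Function.update_of_ne hiq, Function.update_of_ne hil]
  have hD1o : ∀ v, v ≠ l → v ≠ q → D1 v = P v := fun v h1 h2 => by
    rw [hD1def, Function.update_of_ne h2, Function.update_of_ne h1]
  have hsumD1 : ∑ v, D1 v = ∑ v, P v := update_two_sum P l q hlq L1 Q1 hs1
  set D2 : Fin N → Matrix (Fin r) (Fin n) ℤ :=
    Function.update (Function.update D1 i Vi) l L2 with hD2def
  have hD2i : D2 i = Vi := by
    rw [hD2def, Function.update_of_ne hil, Function.update_self]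
  have hD2l : D2 l = L2 := by rw [hD2def, Function.update_self]
  have hD2o : ∀ v, v ≠ i → v ≠ l → D2 v = D1 v := fun v h1 h2 => by
    rw [hD2def, Function.update_of_ne h2, Function.update_of_ne h1]
  have hs2' : Vi + L2 = D1 i + D1 l := by rw [hD1i, hD1l]; exact hs2
  have hsumD2 : ∑ v, D2 v = ∑ v, P v := by
    rw [hD2def, update_two_sum D1 i l hil Vi L2 hs2', hsumD1]
  have hD1P : IsProperDataset r n N D1 := by
    intro v
    rcases eq_or_ne v l with rfl | h1
    · rwa [hD1l]
    rcases eq_or_ne v q with rfl | h2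
    · rwa [hD1q]
    · rw [hD1o v h1 h2]; exact hP v
  have hD2P : IsProperDataset r n N D2 := by
    intro v
    rcases eq_or_ne v i with rfl | h1
    · rwa [hD2i]
    rcases eq_or_ne v l with rfl | h2
    · rwa [hD2l]
    · rw [hD2o v h1 h2]; exact hD1P v
  refine ⟨2, fun t => if t = 0 then P else if t = 1 then D1 else D2,
    fun t => if t = 0 then (l, q) else (i, l),
    by norm_num, by simp, ?_, ?_, ?_, ?_, ?_, ?_⟩
  · intro t ht
    interval_cases t
    · exact ⟨Or.inl hP, rfl⟩
    · simpa using ⟨Or.inl hD1P, hsumD1⟩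
    · simpa using ⟨Or.inl hD2P, hsumD2⟩
  · intro t ht
    interval_cases t
    · refine ⟨hlq, fun i₀ h1 h2 => ?_, ?_⟩
      · simp only at h1 h2
        simpa using hD1o i₀ h1 h2
      · show D1 (l, q).1 + D1 (l, q).2 = P (l, q).1 + P (l, q).2
        rw [hD1l, hD1q]
        exact hs1
    · refine ⟨hil, fun i₀ h1 h2 => ?_, ?_⟩
      · simp only at h1 h2
        have := hD2o i₀ h1 h2
        norm_num
        exact this
      · norm_num
        rw [hD2i, hD2l]
        exact hs2'
  · simpa [hD2i] using hVi
  · simpa [hD2i] using hgain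
  · intro h
    norm_num at h
    exact absurd h (fun hI => proper_not_improper hD2P hI)
  · intro t ht hIt _
    have ht' : t ≤ 1 := by omega
    interval_cases t
    · simp only [if_pos rfl] at hIt
      exact absurd hIt (fun hI => proper_not_improper hP hI)
    · norm_num at hIt
      exact absurd hIt (fun hI => proper_not_improper hD1P hI)

end S7

namespace S7

open Finset

variable {r n N : ℕ}

lemma pv_fun_inj {f g : Fin r → Fin n} (h : pv r n f = pv r n g) : f = g := by
  funext a
  have h1 : pv r n g a (f a) = 1 := by rw [← h]; exact pv_one rfl
  exact (pv_eq_one_iff.mp h1).symm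

lemma inj_update {σ : Fin r → Fin n} (hσ : Function.Injective σ) {j : Fin r} {k : Fin n}
    (hk : ∀ x, σ x ≠ k) : Function.Injective (Function.update σ j k) := by
  intro x y h
  by_cases hx : x = j <;> by_cases hy : y = j
  · rw [hx, hy]
  · subst hx
    rw [Function.update_self, Function.update_of_ne hy] at h
    exact absurd h.symm (hk y)
  · subst hy
    rw [Function.update_self, Function.update_of_ne hx] at h
    exact absurd h (hk x)
  · rw [Function.update_of_ne hx, Function.update_of_ne hy] at h
    exact hσ h

lemma pv_add_pv_comm (f g f' g' : Fin r → Fin n)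
    (h : ∀ x, (f x = g' x ∧ g x = f' x) ∨ (f x = f' x ∧ g x = g' x)) :
    pv r n f + pv r n g = pv r n f' + pv r n g' := by
  funext x k
  simp only [Matrix.add_apply, pv]
  rcases h x with ⟨h1, h2⟩ | ⟨h1, h2⟩ <;> rw [h1, h2] <;> ring

lemma pv_add_iv (σ g : Fin r → Fin n) (j : Fin r) (k' : Fin n) :
    pv r n (Function.update σ j k') + iv r n g j (σ j) k' = pv r n σ + pv r n g := by
  funext x k
  simp only [Matrix.add_apply]
  by_cases hx : x = j
  · subst hx
    simp only [iv, pv, Function.update_self, if_true, eq_self_iff_true]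
    ring
  · simp only [iv, pv, if_neg hx, Function.update_of_ne hx]

lemma pv_add_iv₂ (σ σl : Fin r → Fin n) (j j₂ : Fin r) (hne : j₂ ≠ j)
    (hswap : σ j₂ = σl j) :
    pv r n (σ ∘ (Equiv.swap j j₂)) + iv r n (Function.update σl j (σ j)) j₂ (σl j) (σ j)
      = pv r n σ + pv r n σl := by
  funext x k
  simp only [Matrix.add_apply]
  by_cases hxj : x = j
  · subst hxj
    simp only [iv, if_neg (fun h : x = j₂ => hne h.symm), pv, Function.comp_apply,
      Equiv.swap_apply_left, Function.update_self]
    rw [hswap]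
    ring
  · by_cases hxj₂ : x = j₂
    · subst hxj₂
      simp only [iv, pv, Function.comp_apply, Equiv.swap_apply_right,
        Function.update_of_ne hne, if_true, eq_self_iff_true]
      rw [hswap]
      ring
    · simp only [iv, if_neg hxj₂, pv, Function.comp_apply,
        Equiv.swap_apply_of_ne_of_ne hxj hxj₂, Function.update_of_ne hxj]

lemma col_zero_iff {f : Fin r → Fin n} {k : Fin n} :
    ∑ x, pv r n f x k = 0 ↔ ∀ x, f x ≠ k := by
  rw [pv_col]
  norm_cast
  rw [Finset.card_eq_zero, Finset.filter_eq_empty_iff]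
  simp

lemma exists_missing_col (P P' : Fin N → Matrix (Fin r) (Fin n) ℤ)
    (hP : IsProperDataset r n N P) (hP' : IsProperDataset r n N P')
    (hstatE : ∀ a k, ∑ v, P v a k = ∑ v, P' v a k)
    (i' : Fin N) (k : Fin n) (hτ : ∑ x, P' i' x k = 0) :
    ∃ q, ∑ x, P q x k = 0 := by
  by_contra h
  push_neg at h
  have hall : ∀ q, ∑ x, P q x k = 1 := fun q => ((hP q).2.2 k).resolve_left (h q)
  have hL : ∑ q, ∑ x, P q x k = (N : ℤ) := by
    rw [Finset.sum_congr rfl fun q _ => hall q]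
    simp
  have hN : 0 < N := i'.pos
  have hR : ∑ q, ∑ x, P' q x k ≤ (N : ℤ) - 1 := by
    rw [← Finset.add_sum_erase _ _ (Finset.mem_univ i'), hτ, zero_add]
    calc ∑ q ∈ univ.erase i', ∑ x, P' q x k ≤ ∑ _q ∈ univ.erase i', (1 : ℤ) :=
          Finset.sum_le_sum (fun q _ => by rcases (hP' q).2.2 k with h' | h' <;> omega)
      _ = ((univ.erase i').card : ℤ) := by simp
      _ = (N : ℤ) - 1 := by
          rw [Finset.card_erase_of_mem (Finset.mem_univ _), Finset.card_univ,
            Fintype.card_fin]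
          push_cast [Nat.cast_sub hN]
          ring
  have hswap : ∑ q, ∑ x, P q x k = ∑ q, ∑ x, P' q x k := by
    calc ∑ q, ∑ x, P q x k = ∑ x, ∑ q, P q x k := Finset.sum_comm
      _ = ∑ x, ∑ q, P' q x k := Finset.sum_congr rfl fun x _ => hstatE x k
      _ = ∑ q, ∑ x, P' q x k := Finset.sum_comm
  rw [hL] at hswap
  omega

end S7

/-- Given two proper datasets `P, P'` of `N` votes with the same
sufficient statistic and indices `i, i'` with `P i ≠ P' i'`, there is a sequence
`P = D 0, D 1, …, D m` with `m ≤ 3` of proper or improper datasets with the same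
sufficient statistic as `P`, each obtained from the previous by a swap operation among
the two votes recorded in `R`, such that `D m i` is a proper vote with strictly more
concurrences with `P' i'` than `P i` has; if `D m` is improper its improper vote forms
a resolvable pair with its `i`-th vote; and any swap between two consecutive improper
datasets is compatible with them (some common resolvable pair meets the swapped votes). -/
theorem increase_concurrences_from_proper
    (r n N : ℕ) (hr : 1 ≤ r) (hrn : r ≤ n)
    (P P' : Fin N → Matrix (Fin r) (Fin n) ℤ)
    (hP : IsProperDataset r n N P) (hP' : IsProperDataset r n N P')
    (hstat : ∑ i₀, P i₀ = ∑ i₀, P' i₀)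
    (i i' : Fin N) (hne : P i ≠ P' i') :
    ∃ (m : ℕ) (D : ℕ → Fin N → Matrix (Fin r) (Fin n) ℤ) (R : ℕ → Fin N × Fin N),
      m ≤ 3 ∧ D 0 = P ∧
      (∀ t ≤ m, (IsProperDataset r n N (D t) ∨ IsImproperDataset r n N (D t)) ∧
        ∑ i₀, D t i₀ = ∑ i₀, P i₀) ∧
      (∀ t < m, (R t).1 ≠ (R t).2 ∧
        (∀ i₀, i₀ ≠ (R t).1 → i₀ ≠ (R t).2 → D (t+1) i₀ = D t i₀) ∧
        D (t+1) (R t).1 + D (t+1) (R t).2 = D t (R t).1 + D t (R t).2) ∧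
      IsProperVote r n (D m i) ∧
      concurrences r n (P i) (P' i') < concurrences r n (D m i) (P' i') ∧
      (IsImproperDataset r n N (D m) → ∃ iim, IsResolvablePair r n N (D m) iim i) ∧
      (∀ t, t + 1 ≤ m →
        IsImproperDataset r n N (D t) → IsImproperDataset r n N (D (t+1)) →
        ∃ iim ipr, IsResolvablePair r n N (D t) iim ipr ∧
          IsResolvablePair r n N (D (t+1)) iim ipr ∧
          (iim = (R t).1 ∨ iim = (R t).2 ∨ ipr = (R t).1 ∨ ipr = (R t).2)) := by
  classical
  show S7.Goal r n N P P' i i'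
  obtain ⟨σ, hσinj, hPi⟩ := S7.exists_pv (hP i)
  obtain ⟨τ, hτinj, hP'i'⟩ := S7.exists_pv (hP' i')
  have hστ : σ ≠ τ := fun h => hne (by rw [hPi, hP'i', h])
  have hstatE : ∀ a k, ∑ v, P v a k = ∑ v, P' v a k := by
    intro a k
    have h1 := congrFun (congrFun hstat a) k
    rwa [S7.sum_apply2 P a k, S7.sum_apply2 P' a k] at h1
  have hfind : ∀ j : Fin r, σ j ≠ τ j →
      ∃ l, l ≠ i ∧ ∃ σl, Function.Injective σl ∧ P l = S7.pv r n σl ∧ σl j = τ j := by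
    intro j hσj
    have h2 : P' i' j (τ j) = 1 := by rw [hP'i']; exact S7.pv_one rfl
    have hpos : 0 < ∑ v, P v j (τ j) := by
      rw [hstatE j (τ j)]
      have h1 : P' i' j (τ j) ≤ ∑ v, P' v j (τ j) :=
        Finset.single_le_sum (fun v _ => S7.proper_entry_nonneg (hP' v) j (τ j))
          (Finset.mem_univ i')
      omega
    have hex : ∃ l, P l j (τ j) ≠ 0 := by
      by_contra hno
      push_neg at hno
      rw [Finset.sum_eq_zero (fun v _ => hno v)] at hpos
      omega
    obtain ⟨l, hl⟩ := hex
    have h1 : P l j (τ j) = 1 := ((hP l).1 j (τ j)).resolve_left hl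
    obtain ⟨σl, hσlinj, hPl⟩ := S7.exists_pv (hP l)
    refine ⟨l, ?_, σl, hσlinj, hPl, ?_⟩
    · rintro rfl
      rw [hPi, S7.pv_zero hσj] at h1
      omega
    · apply S7.pv_eq_one_iff.mp
      rw [← hPl]; exact h1
  by_cases hC1 : ∃ j, σ j ≠ τ j ∧ ∃ j₂, σ j₂ = τ j
  · -- CASE 1 : the target value τ j is already in the image of σ
    obtain ⟨j, hjne, j₂, hj₂⟩ := hC1
    have hj₂j : j₂ ≠ j := by rintro rfl; exact hjne hj₂
    obtain ⟨l, hli, σl, hσlinj, hPl, hσlj⟩ := hfind j hjne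
    -- vote i becomes σ with the values at j and j₂ swapped
    have hfinj : Function.Injective (σ ∘ (Equiv.swap j j₂)) :=
      hσinj.comp (Equiv.swap j j₂).injective
    have hfj : (σ ∘ (Equiv.swap j j₂)) j = σ j₂ := by
      simp [Equiv.swap_apply_left]
    have hfj₂ : (σ ∘ (Equiv.swap j j₂)) j₂ = σ j := by
      simp [Equiv.swap_apply_right]
    have hgain : concurrences r n (P i) (P' i')
        < concurrences r n (S7.pv r n (σ ∘ (Equiv.swap j j₂))) (P' i') := by
      rw [hPi, hP'i', S7.concur_pv, S7.concur_pv]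
      refine S7.gain_lt j hjne (hfj.trans hj₂) ?_
      intro a ha
      have haj : a ≠ j := fun h => hjne (h ▸ ha)
      have haj₂ : a ≠ j₂ := by
        rintro rfl
        exact hj₂j (hτinj (ha.symm.trans hj₂))
      simp [Equiv.swap_apply_of_ne_of_ne haj haj₂]
    by_cases hu : σl j₂ = σ j
    · -- partner l stays proper : swap values at j and j₂ in σl as well
      refine S7.build_one P P' hP i i' l (Ne.symm hli)
        (S7.pv r n (σ ∘ (Equiv.swap j j₂))) (S7.pv r n (σl ∘ (Equiv.swap j j₂)))
        (S7.isProper_pv hfinj)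
        (Or.inl (S7.isProper_pv (hσlinj.comp (Equiv.swap j j₂).injective))) ?_ hgain
      rw [hPi, hPl]
      apply S7.pv_add_pv_comm
      intro x
      by_cases hxj : x = j
      · subst hxj
        refine Or.inl ⟨?_, ?_⟩
        · simpa [Equiv.swap_apply_left] using hj₂.trans hσlj.symm
        · simpa [Equiv.swap_apply_left] using hu
      · by_cases hxj₂ : x = j₂
        · subst hxj₂
          refine Or.inl ⟨?_, ?_⟩
          · simpa [Equiv.swap_apply_right] using hu.symm
          · simpa [Equiv.swap_apply_right] using hσlj.trans hj₂.symm
        · refine Or.inr ⟨?_, ?_⟩ <;>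
            simp [Equiv.swap_apply_of_ne_of_ne hxj hxj₂]
    · -- partner l becomes improper
      have hbc : σl j ≠ σ j := by
        rw [hσlj]; exact fun h => hjne h.symm
      have hgab : Function.update σl j (σ j) j₂ ≠ σl j := by
        rw [Function.update_of_ne hj₂j]
        exact fun h => hj₂j (hσlinj h)
      have hgac : Function.update σl j (σ j) j₂ ≠ σ j := by
        rw [Function.update_of_ne hj₂j]; exact hu
      have hb : ∀ x, Function.update σl j (σ j) x ≠ σl j := by
        intro x
        by_cases hx : x = j
        · subst hx; rw [Function.update_self]; exact fun h => hbc h.symm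
        · rw [Function.update_of_ne hx]; exact fun h => hx (hσlinj h)
      have hfib : ∀ k, k ≠ σ j → ∀ x y, Function.update σl j (σ j) x = k →
          Function.update σl j (σ j) y = k → x = y := by
        intro k hk x y hx hy
        by_cases hxj : x = j
        · subst hxj; rw [Function.update_self] at hx; exact absurd hx (Ne.symm hk)
        · by_cases hyj : y = j
          · subst hyj; rw [Function.update_self] at hy; exact absurd hy (Ne.symm hk)
          · rw [Function.update_of_ne hxj] at hx
            rw [Function.update_of_ne hyj] at hy
            exact hσlinj (hx.trans hy.symm)
      have hc1 : ∃ x, Function.update σl j (σ j) x = σ j :=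
        ⟨j, Function.update_self _ _ _⟩
      have hc2 : ∀ x y z, Function.update σl j (σ j) x = σ j →
          Function.update σl j (σ j) y = σ j → Function.update σl j (σ j) z = σ j →
          x = y ∨ x = z ∨ y = z := by
        intro x y z hx hy hz
        by_cases hxj : x = j
        · by_cases hyj : y = j
          · exact Or.inl (hxj.trans hyj.symm)
          · by_cases hzj : z = j
            · exact Or.inr (Or.inl (hxj.trans hzj.symm))
            · rw [Function.update_of_ne hyj] at hy
              rw [Function.update_of_ne hzj] at hz
              exact Or.inr (Or.inr (hσlinj (hy.trans hz.symm)))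
        · by_cases hyj : y = j
          · by_cases hzj : z = j
            · exact Or.inr (Or.inr (hyj.trans hzj.symm))
            · rw [Function.update_of_ne hxj] at hx
              rw [Function.update_of_ne hzj] at hz
              exact Or.inr (Or.inl (hσlinj (hx.trans hz.symm)))
          · rw [Function.update_of_ne hxj] at hx
            rw [Function.update_of_ne hyj] at hy
            exact Or.inl (hσlinj (hx.trans hy.symm))
      refine S7.build_one P P' hP i i' l (Ne.symm hli)
        (S7.pv r n (σ ∘ (Equiv.swap j j₂)))
        (S7.iv r n (Function.update σl j (σ j)) j₂ (σl j) (σ j))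
        (S7.isProper_pv hfinj)
        (Or.inr ⟨S7.isImproper_iv (Function.update σl j (σ j)) j₂ (σl j) (σ j)
            hbc hgab hgac hb hfib hc1 hc2,
          j₂, σ j, S7.iv_neg _ j₂ (σl j) (σ j) hbc hgac, S7.pv_one hfj₂⟩) ?_ hgain
      rw [hPi, hPl]
      exact S7.pv_add_iv₂ σ σl j j₂ hj₂j (hj₂.trans hσlj.symm)
  · -- CASE 2 : for every disagreement row the target value is fresh
    push_neg at hC1
    obtain ⟨j, hjne⟩ := Function.ne_iff.mp hστ
    have hk' : ∀ x, σ x ≠ τ j := hC1 j hjne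
    have hClaimA : ∀ a, τ a ≠ σ j := by
      intro a ha
      have hane : σ a ≠ τ a := by
        intro h
        have haj : a = j := hσinj (h.trans ha)
        rw [haj] at h
        exact hjne h
      exact hC1 a hane j ha.symm
    obtain ⟨l, hli, σl, hσlinj, hPl, hσlj⟩ := hfind j hjne
    have hWinj : Function.Injective (Function.update σ j (τ j)) :=
      S7.inj_update hσinj hk'
    have hgainW : concurrences r n (P i) (P' i')
        < concurrences r n (S7.pv r n (Function.update σ j (τ j))) (P' i') := by
      rw [hPi, hP'i', S7.concur_pv, S7.concur_pv]
      refine S7.gain_lt j hjne (Function.update_self _ _ _) ?_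
      intro a ha
      have haj : a ≠ j := fun h => hjne (h ▸ ha)
      exact Function.update_of_ne haj _ _
    have doS2 : ∀ v : Fin N, v ≠ i → ∀ σv : Fin r → Fin n, Function.Injective σv →
        P v = S7.pv r n σv → σv j = τ j → (∀ x, σv x ≠ σ j) →
        S7.Goal r n N P P' i i' := by
      intro v hvi σv hvinj hPv hvj hvk0
      refine S7.build_one P P' hP i i' v (Ne.symm hvi)
        (S7.pv r n (Function.update σ j (τ j))) (S7.pv r n (Function.update σv j (σ j)))
        (S7.isProper_pv hWinj)
        (Or.inl (S7.isProper_pv (S7.inj_update hvinj hvk0))) ?_ hgainW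
      rw [hPi, hPv]
      apply S7.pv_add_pv_comm
      intro x
      by_cases hx : x = j
      · subst hx
        exact Or.inl ⟨(Function.update_self _ _ _).trans hvj.symm,
          Function.update_self _ _ _⟩
      · exact Or.inr ⟨Function.update_of_ne hx _ _, Function.update_of_ne hx _ _⟩
    by_cases hk0l : ∃ x, σl x = σ j
    · by_cases hQ : ∃ q, (∑ x, P q x (σ j) = 0) ∧ ∑ x, P q x (τ j) ≠ 0
      · -- CASE 3
        obtain ⟨q, hq0, hq1⟩ := hQ
        obtain ⟨σq, hσqinj, hPq⟩ := S7.exists_pv (hP q)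
        rw [hPq] at hq0 hq1
        have hqk0 : ∀ x, σq x ≠ σ j := S7.col_zero_iff.mp hq0
        have hqi : q ≠ i := by
          rintro rfl
          exact hqk0 j (by rw [S7.pv_fun_inj (hPq.symm.trans hPi)])
        by_cases hqj : σq j = τ j
        · exact doS2 q hqi σq hσqinj hPq hqj hqk0
        · obtain ⟨x0, hx0⟩ : ∃ x, σq x = τ j := by
            by_contra hno
            push_neg at hno
            exact hq1 (S7.col_zero_iff.mpr hno)
          refine S7.build_one P P' hP i i' q (Ne.symm hqi)
            (S7.pv r n (Function.update σ j (τ j))) (S7.iv r n σq j (σ j) (τ j))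
            (S7.isProper_pv hWinj)
            (Or.inr ⟨S7.isImproper_iv σq j (σ j) (τ j) hjne (hqk0 j) hqj hqk0
                (fun k _ x y hx hy => hσqinj (hx.trans hy.symm)) ⟨x0, hx0⟩
                (fun x y z hx hy _ => Or.inl (hσqinj (hx.trans hy.symm))),
              j, τ j, S7.iv_neg σq j (σ j) (τ j) hjne hqj,
              S7.pv_one (Function.update_self _ _ _)⟩) ?_ hgainW
          rw [hPi, hPq]
          exact S7.pv_add_iv σ σq j (τ j)
      · -- CASE 4 : cascade, two proper swaps
        push_neg at hQ
        have hτ0 : ∑ x, P' i' x (σ j) = 0 := by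
          rw [hP'i']
          exact S7.col_zero_iff.mpr hClaimA
        obtain ⟨q, hq0⟩ := S7.exists_missing_col P P' hP hP' hstatE i' (σ j) hτ0
        have hq1 := hQ q hq0
        obtain ⟨σq, hσqinj, hPq⟩ := S7.exists_pv (hP q)
        rw [hPq] at hq0 hq1
        have hqk0 : ∀ x, σq x ≠ σ j := S7.col_zero_iff.mp hq0
        have hqk' : ∀ x, σq x ≠ τ j := S7.col_zero_iff.mp hq1
        have hqi : q ≠ i := by
          rintro rfl
          exact hqk0 j (by rw [S7.pv_fun_inj (hPq.symm.trans hPi)])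
        have hql : q ≠ l := by
          rintro rfl
          refine hqk' j ?_
          rw [S7.pv_fun_inj (hPq.symm.trans hPl)]
          exact hσlj
        obtain ⟨a₁, ha₁⟩ := hk0l
        set A : Fin r → Prop :=
          fun a => Relation.ReflTransGen (fun x y => σl y = σq x) a₁ a with hA
        have hA₁ : A a₁ := Relation.ReflTransGen.refl
        have hF1 : ∀ a, A a → ∀ b, σl b = σq a → A b := fun a ha b hb =>
          Relation.ReflTransGen.tail ha hb
        have hF2 : ∀ a, A a → ∀ b, σq b = σl a → A b := by
          intro a ha
          induction ha with
          | refl =>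
            intro b hb
            rw [ha₁] at hb
            exact absurd hb (hqk0 b)
          | tail hab hbc ih =>
            intro b hb
            rename_i x y
            have hbx : b = x := hσqinj (hb.trans hbc)
            rw [hbx]
            exact hab
        have hAnej : ∀ a, A a → a ≠ j := by
          intro a ha
          induction ha with
          | refl =>
            intro h
            rw [h] at ha₁
            rw [hσlj] at ha₁
            exact hjne ha₁.symm
          | tail hab hbc ih =>
            intro h
            rename_i x y
            rw [h] at hbc
            rw [hσlj] at hbc
            exact hqk' x hbc.symm
        have hjA : ¬ A j := fun h => hAnej j h rfl
        haveI : DecidablePred A := fun _ => Classical.propDecidable _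
        set l₁ : Fin r → Fin n := fun a => if A a then σq a else σl a with hl₁
        set q₁ : Fin r → Fin n := fun a => if A a then σl a else σq a with hq₁
        have hl₁A : ∀ a, A a → l₁ a = σq a := fun a ha => if_pos ha
        have hl₁n : ∀ a, ¬ A a → l₁ a = σl a := fun a ha => if_neg ha
        have hq₁A : ∀ a, A a → q₁ a = σl a := fun a ha => if_pos ha
        have hq₁n : ∀ a, ¬ A a → q₁ a = σq a := fun a ha => if_neg ha
        have hl₁inj : Function.Injective l₁ := by
          intro x y h
          by_cases hx : A x <;> by_cases hy : A y
          · rw [hl₁A x hx, hl₁A y hy] at h; exact hσqinj h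
          · rw [hl₁A x hx, hl₁n y hy] at h
            exact absurd (hF1 x hx y h.symm) hy
          · rw [hl₁n x hx, hl₁A y hy] at h
            exact absurd (hF1 y hy x h) hx
          · rw [hl₁n x hx, hl₁n y hy] at h; exact hσlinj h
        have hq₁inj : Function.Injective q₁ := by
          intro x y h
          by_cases hx : A x <;> by_cases hy : A y
          · rw [hq₁A x hx, hq₁A y hy] at h; exact hσlinj h
          · rw [hq₁A x hx, hq₁n y hy] at h
            exact absurd (hF2 x hx y h.symm) hy
          · rw [hq₁n x hx, hq₁A y hy] at h
            exact absurd (hF2 y hy x h) hx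
          · rw [hq₁n x hx, hq₁n y hy] at h; exact hσqinj h
        have hl₁j : l₁ j = τ j := by rw [hl₁n j hjA]; exact hσlj
        have hl₁k0 : ∀ x, l₁ x ≠ σ j := by
          intro x
          by_cases hx : A x
          · rw [hl₁A x hx]; exact hqk0 x
          · rw [hl₁n x hx]
            intro h
            have hxa : x = a₁ := hσlinj (h.trans ha₁.symm)
            subst hxa
            exact hx hA₁
        refine S7.build_two P P' hP i i' l q (Ne.symm hli) (Ne.symm hqi) (Ne.symm hql)
          (S7.pv r n l₁) (S7.pv r n q₁) (S7.pv r n (Function.update σ j (τ j)))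
          (S7.pv r n (Function.update l₁ j (σ j)))
          (S7.isProper_pv hl₁inj) (S7.isProper_pv hq₁inj) (S7.isProper_pv hWinj)
          (S7.isProper_pv (S7.inj_update hl₁inj hl₁k0)) ?_ ?_ hgainW
        · rw [hPl, hPq]
          apply S7.pv_add_pv_comm
          intro x
          by_cases hx : A x
          · exact Or.inl ⟨hl₁A x hx, hq₁A x hx⟩
          · exact Or.inr ⟨hl₁n x hx, hq₁n x hx⟩
        · rw [hPi]
          apply S7.pv_add_pv_comm
          intro x
          by_cases hx : x = j
          · subst hx
            exact Or.inl ⟨(Function.update_self _ _ _).trans hl₁j.symm,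
              Function.update_self _ _ _⟩
          · exact Or.inr ⟨Function.update_of_ne hx _ _, Function.update_of_ne hx _ _⟩
    · push_neg at hk0l
      exact doS2 l hli σl hσlinj hPl hσlj hk0l
end
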